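/- arXiv:2105.02361 — 4 statements merged into one kernel-verified Lean document; each statement's English description precedes it below -/
import Mathlib

section
/- Let G be a finite simple graph, let x and y be adjacent vertices of G with e the edge {x,y}, and let G_1 and G_2 be subgraphs of G whose union is G, whose common vertex set is exactly {x,y}, and whose common edge set is exactly {e}. Then c_e(G) = c_e(G_1) + c_e(G_2) + c_o(G_1,e)·c_o(G_2,e) + c_e(G_1,e)·c_e(G_2,e). -/
open SimpleGraph Filter

/-- A subgraph is a cycle: nonempty vertex set, connected, and every vertex of the
subgraph has degree exactly 2 in the subgraph. -/
def SimpleGraph.Subgraph.IsCycleSub {V : Type*} {G : SimpleGraph V} (H : G.Subgraph) : Prop :=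
  H.verts.Nonempty ∧ H.coe.Connected ∧ ∀ v ∈ H.verts, (H.neighborSet v).ncard = 2

namespace CEvenGlue


variable {V : Type*} {G : SimpleGraph V}

instance finiteSubgraph [Finite V] : Finite G.Subgraph :=
  Finite.of_injective (fun H => (H.verts, H.Adj))
    (fun H K h => by
      obtain ⟨h1, h2⟩ := Prod.mk.injEq .. ▸ h
      exact SimpleGraph.Subgraph.ext h1 h2)

/-- Reachability within a subgraph, via ambient walks. -/
def Reach (K : G.Subgraph) (u v : V) : Prop := ∃ p : G.Walk u v, p.toSubgraph ≤ K

lemma reach_refl {K : G.Subgraph} {u : V} (hu : u ∈ K.verts) : Reach K u u :=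
  ⟨Walk.nil, by rw [Walk.toSubgraph]; exact (singletonSubgraph_le_iff u K).2 hu⟩

lemma Reach.mem_right {K : G.Subgraph} {u v : V} (h : Reach K u v) : v ∈ K.verts := by
  obtain ⟨p, hp⟩ := h
  exact hp.1 p.end_mem_verts_toSubgraph

lemma Reach.symm {K : G.Subgraph} {u v : V} (h : Reach K u v) : Reach K v u := by
  obtain ⟨p, hp⟩ := h
  exact ⟨p.reverse, by rwa [Walk.toSubgraph_reverse]⟩

lemma Reach.trans {K : G.Subgraph} {u v w : V} (h : Reach K u v) (h' : Reach K v w) :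
    Reach K u w := by
  obtain ⟨p, hp⟩ := h; obtain ⟨q, hq⟩ := h'
  exact ⟨p.append q, by rw [Walk.toSubgraph_append]; exact sup_le hp hq⟩

lemma reach_of_adj {K : G.Subgraph} {u v : V} (h : K.Adj u v) : Reach K u v :=
  ⟨Walk.cons (K.adj_sub h) Walk.nil, by
    rw [Walk.toSubgraph_cons_nil_eq_subgraphOfAdj]
    exact SimpleGraph.subgraphOfAdj_le_of_adj K h⟩

lemma Reach.step {K : G.Subgraph} {u v w : V} (h : Reach K u v) (ha : K.Adj v w) :
    Reach K u w := h.trans (reach_of_adj ha)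

lemma exists_adj_end {K : G.Subgraph} {u v : V} (p : G.Walk u v) (hne : u ≠ v)
    (hp : p.toSubgraph ≤ K) : ∃ w, K.Adj w v := by
  induction p with
  | nil => exact absurd rfl hne
  | @cons a b c hab q ih =>
    rw [Walk.toSubgraph] at hp
    by_cases hbc : b = c
    · subst hbc
      exact ⟨a, (le_sup_left.trans hp).2 (by simp)⟩
    · exact ih hbc (le_sup_right.trans hp)

lemma closed_walk {K : G.Subgraph} {S : Set V} (hcl : ∀ ⦃a b⦄, a ∈ S → K.Adj a b → b ∈ S)
    {u v : V} (p : G.Walk u v) (hp : p.toSubgraph ≤ K) (hu : u ∈ S) : v ∈ S := by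
  induction p with
  | nil => exact hu
  | @cons a b c hab q ih =>
    rw [Walk.toSubgraph] at hp
    exact ih (le_sup_right.trans hp) (hcl hu ((le_sup_left.trans hp).2 (by simp)))

lemma verts_subset_of_closed {K : G.Subgraph} (hconn : K.coe.Connected) {S : Set V}
    (hS : S ⊆ K.verts) (hne : S.Nonempty) (hcl : ∀ ⦃a b⦄, a ∈ S → K.Adj a b → b ∈ S) :
    K.verts ⊆ S := by
  obtain ⟨u, hu⟩ := hne
  intro v hv
  have hconn' : K.Connected := Subgraph.connected_iff'.mpr hconn
  obtain ⟨p, hp⟩ :=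
    (Subgraph.preconnected_iff_forall_exists_walk_subgraph K).mp
      hconn'.preconnected (hS hu) hv
  exact closed_walk hcl p hp hu

lemma even_sum_ncard [Fintype V] (K : G.Subgraph) {S : Set V}
    (hcl : ∀ ⦃a b⦄, a ∈ S → K.Adj a b → b ∈ S) :
    Even (∑ v ∈ S.toFinite.toFinset, (K.neighborSet v).ncard) := by
  classical
  let B : SimpleGraph V :=
    { Adj := fun a b => K.Adj a b ∧ a ∈ S ∧ b ∈ S
      symm := ⟨fun a b ⟨h1, h2, h3⟩ => ⟨h1.symm, h3, h2⟩⟩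
      loopless := ⟨fun a ⟨h1, _⟩ => (K.adj_sub h1).ne rfl⟩ }
  have hnbr : ∀ v ∈ S, B.neighborSet v = K.neighborSet v := by
    intro v hv
    ext w
    exact ⟨fun h => h.1, fun h => ⟨h, hv, hcl hv h⟩⟩
  have hdeg : ∀ v ∈ S, B.degree v = (K.neighborSet v).ncard := by
    intro v hv
    rw [← hnbr v hv, Set.ncard_eq_toFinset_card', Set.toFinset_card,
      SimpleGraph.card_neighborSet_eq_degree]
  have hdeg0 : ∀ v, v ∉ S → B.degree v = 0 := by
    intro v hv
    rw [← SimpleGraph.card_neighborSet_eq_degree]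
    convert Fintype.card_eq_zero_iff.mpr ?_
    constructor
    rintro ⟨w, hw, hvS, _⟩
    exact hv hvS
  have hsum : ∑ v ∈ S.toFinite.toFinset, (K.neighborSet v).ncard = ∑ v, B.degree v := by
    rw [← Finset.sum_subset (Finset.subset_univ S.toFinite.toFinset)
      (fun x _ hx => hdeg0 x (by simpa using hx))]
    exact Finset.sum_congr rfl fun v hv => (hdeg v (by simpa using hv)).symm
  rw [hsum, B.sum_degrees_eq_twice_card_edges]
  exact ⟨_, two_mul _⟩



variable {V : Type*} {G : SimpleGraph V}

/-- Transfer a subgraph of `H.spanningCoe` to a subgraph of `G`. -/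
def up (H : G.Subgraph) (D : H.spanningCoe.Subgraph) : G.Subgraph where
  verts := D.verts
  Adj := D.Adj
  adj_sub h := H.adj_sub (D.adj_sub h)
  edge_vert := D.edge_vert
  symm := D.symm

lemma up_injective (H : G.Subgraph) : Function.Injective (up H) := by
  intro D D' h
  have h1 : (up H D).verts = (up H D').verts := by rw [h]
  have h2 : (up H D).Adj = (up H D').Adj := by rw [h]
  exact SimpleGraph.Subgraph.ext h1 h2

lemma up_isCycleSub_iff (H : G.Subgraph) (D : H.spanningCoe.Subgraph) :
    (up H D).IsCycleSub ↔ D.IsCycleSub := Iff.rfl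

/-- Transfer back. -/
def down (H : G.Subgraph) (K : G.Subgraph) (hK : ∀ ⦃a b⦄, K.Adj a b → H.Adj a b) :
    H.spanningCoe.Subgraph where
  verts := K.verts
  Adj := K.Adj
  adj_sub h := hK h
  edge_vert := K.edge_vert
  symm := K.symm

lemma up_down (H : G.Subgraph) (K : G.Subgraph) (hK : ∀ ⦃a b⦄, K.Adj a b → H.Adj a b) :
    up H (down H K hK) = K := rfl

lemma up_image_even (H : G.Subgraph) :
    up H '' {D | D.IsCycleSub ∧ Even D.verts.ncard} =
      {K | K.IsCycleSub ∧ Even K.verts.ncard ∧ ∀ ⦃a b⦄, K.Adj a b → H.Adj a b} := by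
  ext K
  constructor
  · rintro ⟨D, ⟨hD1, hD2⟩, rfl⟩
    exact ⟨hD1, hD2, fun a b h => D.adj_sub h⟩
  · rintro ⟨h1, h2, h3⟩
    exact ⟨down H K h3, ⟨h1, h2⟩, rfl⟩

lemma up_image_parityE (H : G.Subgraph) (x y : V) (par : ℕ → Prop) :
    up H '' {D | D.IsCycleSub ∧ par D.verts.ncard ∧ D.Adj x y} =
      {K | K.IsCycleSub ∧ par K.verts.ncard ∧ K.Adj x y ∧
        ∀ ⦃a b⦄, K.Adj a b → H.Adj a b} := by
  ext K
  constructor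
  · rintro ⟨D, ⟨hD1, hD2, hD3⟩, rfl⟩
    exact ⟨hD1, hD2, hD3, fun a b h => D.adj_sub h⟩
  · rintro ⟨h1, h2, h3, h4⟩
    exact ⟨down H K h4, ⟨h1, h2, h3⟩, rfl⟩


/-! ### helpers -/


lemma sym2_ne_of_ne {x y a b : V} (ha : a ≠ x) (ha' : a ≠ y) : s(a, b) ≠ s(x, y) := by
  intro h
  rcases Sym2.eq_iff.mp h with ⟨rfl, rfl⟩ | ⟨rfl, rfl⟩
  · exact ha rfl
  · exact ha' rfl

lemma adj_of_sym2_eq {H : G.Subgraph} {x y a b : V} (hxy : H.Adj x y)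
    (h : s(a, b) = s(x, y)) : H.Adj a b := by
  rw [← SimpleGraph.Subgraph.mem_edgeSet] at hxy ⊢
  rwa [h]

lemma mem_pair_of_sym2_eq {x y a b : V} (h : s(a, b) = s(x, y)) : a = x ∨ a = y := by
  rcases Sym2.eq_iff.mp h with ⟨rfl, rfl⟩ | ⟨rfl, rfl⟩
  · exact Or.inl rfl
  · exact Or.inr rfl

lemma ncard_prod {α β : Type*} (s : Set α) (t : Set β) :
    (s ×ˢ t).ncard = s.ncard * t.ncard := by
  rw [← Nat.card_coe_set_eq, ← Nat.card_coe_set_eq, ← Nat.card_coe_set_eq,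
    Nat.card_congr (Equiv.Set.prod s t), Nat.card_prod]

/-- Parity contradiction: a closed set in which all degrees are `2` except exactly one vertex
of degree `1` cannot exist. -/
lemma odd_contra [Fintype V] {Q : G.Subgraph} {S : Set V}
    (hcl : ∀ ⦃a b⦄, a ∈ S → Q.Adj a b → b ∈ S) {t : V} (ht : t ∈ S)
    (h1 : (Q.neighborSet t).ncard = 1)
    (h2 : ∀ v ∈ S, v ≠ t → (Q.neighborSet v).ncard = 2) : False := by
  classical
  have heven := even_sum_ncard Q hcl
  have htT : t ∈ S.toFinite.toFinset := by simpa using ht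
  rw [← Finset.sum_erase_add _ _ htT, h1] at heven
  have hconst : ∑ v ∈ S.toFinite.toFinset.erase t, (Q.neighborSet v).ncard =
      2 * (S.toFinite.toFinset.erase t).card := by
    rw [Finset.sum_congr rfl (fun v hv => h2 v (by simpa using Finset.mem_of_mem_erase hv)
      (Finset.ne_of_mem_erase hv))]
    simp [Finset.sum_const, mul_comm]
  rw [hconst] at heven
  rcases heven with ⟨m, hm⟩
  omega

/-! ### Auxiliary subgraph constructions -/

/-- The part of `C` lying in `H`, away from the edge `s(x,y)`, with all of `C`'s vertices. -/
def sidePart (H : G.Subgraph) (x y : V) (C : G.Subgraph) : G.Subgraph where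
  verts := C.verts
  Adj a b := C.Adj a b ∧ H.Adj a b ∧ s(a, b) ≠ s(x, y)
  adj_sub h := C.adj_sub h.1
  edge_vert h := C.edge_vert h.1
  symm.symm a b h := ⟨h.1.symm, h.2.1.symm, fun he => h.2.2 (Sym2.eq_swap.trans he)⟩

/-- `C` with the edge `s(x,y)` removed. -/
def delEdge (x y : V) (C : G.Subgraph) : G.Subgraph where
  verts := C.verts
  Adj a b := C.Adj a b ∧ s(a, b) ≠ s(x, y)
  adj_sub h := C.adj_sub h.1
  edge_vert h := C.edge_vert h.1
  symm.symm a b h := ⟨h.1.symm, fun he => h.2 (Sym2.eq_swap.trans he)⟩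

/-- The part of `C` lying in `H`, together with the edge `s(x,y)`. -/
def split (H : G.Subgraph) {x y : V} (hxy : H.Adj x y) (C : G.Subgraph) : G.Subgraph where
  verts := (C.verts ∩ H.verts) ∪ {x, y}
  Adj a b := (C.Adj a b ∧ H.Adj a b ∧ s(a, b) ≠ s(x, y)) ∨ s(a, b) = s(x, y)
  adj_sub h := by
    rcases h with ⟨h, -, -⟩ | h
    · exact C.adj_sub h
    · exact H.adj_sub (adj_of_sym2_eq hxy h)
  edge_vert h := by
    rcases h with ⟨h1, h2, -⟩ | h
    · exact Or.inl ⟨C.edge_vert h1, H.edge_vert h2⟩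
    · exact Or.inr (by rcases mem_pair_of_sym2_eq h with rfl | rfl <;> simp)
  symm.symm a b h := by
    rcases h with ⟨h1, h2, h3⟩ | h
    · exact Or.inl ⟨h1.symm, h2.symm, by rwa [Sym2.eq_swap]⟩
    · exact Or.inr (by rwa [Sym2.eq_swap])

/-- Glue two cycles through `s(x,y)` along that edge, removing it. -/
def glue (x y : V) (D₁ D₂ : G.Subgraph) : G.Subgraph where
  verts := D₁.verts ∪ D₂.verts
  Adj a b := (D₁.Adj a b ∨ D₂.Adj a b) ∧ s(a, b) ≠ s(x, y)
  adj_sub h := by rcases h.1 with h' | h' <;> [exact D₁.adj_sub h'; exact D₂.adj_sub h']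
  edge_vert h := by
    rcases h.1 with h' | h'
    · exact Or.inl (D₁.edge_vert h')
    · exact Or.inr (D₂.edge_vert h')
  symm.symm a b h := by
    refine ⟨?_, by rw [Sym2.eq_swap]; exact h.2⟩
    rcases h.1 with h' | h'
    · exact Or.inl h'.symm
    · exact Or.inr h'.symm

/-- Transfer a walk bounded by `Q` to a subgraph `R` containing all of `Q`'s edges and
their endpoints. -/
lemma toSubgraph_le_of_le_adj {Q R : G.Subgraph}
    (hadj : ∀ ⦃a b⦄, Q.Adj a b → R.Adj a b) :
    ∀ {u v : V} (p : G.Walk u v), p.toSubgraph ≤ Q → u ∈ R.verts → p.toSubgraph ≤ R := by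
  intro u v p
  induction p with
  | nil =>
    intro _ hu
    rw [Walk.toSubgraph]
    exact (singletonSubgraph_le_iff _ _).2 hu
  | @cons a b c hab q ih =>
    intro hp hu
    rw [Walk.toSubgraph] at hp ⊢
    have hQab : Q.Adj a b := (le_sup_left.trans hp).2 (by simp)
    have hRab : R.Adj a b := hadj hQab
    refine sup_le ?_ (ih (le_sup_right.trans hp) (R.edge_vert hRab.symm))
    exact SimpleGraph.subgraphOfAdj_le_of_adj R hRab

lemma Reach.of_le {Q R : G.Subgraph} (hadj : ∀ ⦃a b⦄, Q.Adj a b → R.Adj a b)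
    {u v : V} (h : Reach Q u v) (hu : u ∈ R.verts) : Reach R u v := by
  obtain ⟨p, hp⟩ := h
  exact ⟨p, toSubgraph_le_of_le_adj hadj p hp hu⟩

/-! ### A cycle with an edge deleted is still connected -/

lemma reach_delEdge [Fintype V] {K : G.Subgraph} {x y : V} (hK : K.IsCycleSub)
    (hxy : K.Adj x y) : ∀ v ∈ K.verts, Reach (delEdge x y K) x v := by
  set R := delEdge x y K with hR
  have hRv : R.verts = K.verts := rfl
  have hRa : ∀ a b, R.Adj a b ↔ K.Adj a b ∧ s(a, b) ≠ s(x, y) := fun _ _ => Iff.rfl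
  have hxny : x ≠ y := (K.adj_sub hxy).ne
  have hxK : x ∈ K.verts := K.edge_vert hxy
  have hyK : y ∈ K.verts := K.edge_vert hxy.symm
  -- neighbor sets away from x,y
  have hmid : ∀ v, v ≠ x → v ≠ y → R.neighborSet v = K.neighborSet v := by
    intro v hvx hvy
    ext w
    exact ⟨fun h => h.1, fun h => ⟨h, sym2_ne_of_ne hvx hvy⟩⟩
  -- the deleted neighbor at x
  obtain ⟨a, hay, hxnbr⟩ : ∃ a, a ≠ y ∧ K.neighborSet x = {y, a} := by
    obtain ⟨c, d, hcd, hset⟩ := Set.ncard_eq_two.mp (hK.2.2 x hxK)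
    have hy : y ∈ K.neighborSet x := hxy
    rw [hset] at hy
    simp only [Set.mem_insert_iff, Set.mem_singleton_iff] at hy
    rcases hy with h | h
    · exact ⟨d, fun hdy => hcd (h.symm.trans hdy.symm), by rw [hset, ← h]⟩
    · exact ⟨c, fun hcy => hcd (hcy.trans h), by rw [hset, ← h, Set.pair_comm]⟩
  obtain ⟨b, hbx, hynbr⟩ : ∃ b, b ≠ x ∧ K.neighborSet y = {x, b} := by
    obtain ⟨c, d, hcd, hset⟩ := Set.ncard_eq_two.mp (hK.2.2 y hyK)
    have hy : x ∈ K.neighborSet y := hxy.symm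
    rw [hset] at hy
    simp only [Set.mem_insert_iff, Set.mem_singleton_iff] at hy
    rcases hy with h | h
    · exact ⟨d, fun hdx => hcd (h.symm.trans hdx.symm), by rw [hset, ← h]⟩
    · exact ⟨c, fun hcx => hcd (hcx.trans h), by rw [hset, ← h, Set.pair_comm]⟩
  have hxR : R.neighborSet x = {a} := by
    ext w
    simp only [Subgraph.mem_neighborSet, hRa, Set.mem_singleton_iff]
    constructor
    · rintro ⟨h1, h2⟩
      have : w ∈ K.neighborSet x := h1
      rw [hxnbr] at this
      simp only [Set.mem_insert_iff, Set.mem_singleton_iff] at this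
      rcases this with h | h
      · exact absurd (by rw [h] : s(x,w) = s(x,y)) h2
      · exact h
    · intro hw
      have hmem : w ∈ K.neighborSet x := by
        rw [hxnbr, hw]; exact Set.mem_insert_iff.mpr (Or.inr rfl)
      exact ⟨hmem, fun h => hay (hw.symm.trans (Sym2.congr_right.mp h))⟩
  have hyR : R.neighborSet y = {b} := by
    ext w
    simp only [Subgraph.mem_neighborSet, hRa, Set.mem_singleton_iff]
    constructor
    · rintro ⟨h1, h2⟩
      have : w ∈ K.neighborSet y := h1
      rw [hynbr] at this
      simp only [Set.mem_insert_iff, Set.mem_singleton_iff] at this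
      rcases this with h | h
      · exact absurd (by rw [h]; exact Sym2.eq_swap : s(y,w) = s(x,y)) h2
      · exact h
    · intro hw
      have hmem : w ∈ K.neighborSet y := by
        rw [hynbr, hw]; exact Set.mem_insert_iff.mpr (Or.inr rfl)
      refine ⟨hmem, fun h => ?_⟩
      rw [Sym2.eq_swap (a := x) (b := y)] at h
      exact hbx (hw.symm.trans (Sym2.congr_right.mp h))
  let S : Set V := {v | Reach R x v}
  have hmemS : ∀ {w : V}, w ∈ S ↔ Reach R x w := Iff.rfl
  have hxS : x ∈ S := hmemS.mpr (reach_refl hxK)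
  have hcl : ∀ ⦃u w⦄, u ∈ S → R.Adj u w → w ∈ S := fun u w hu h => hmemS.mpr (Reach.step (hmemS.mp hu) h)
  have hSsub : S ⊆ K.verts := fun v hv => hRv ▸ Reach.mem_right (hmemS.mp hv)
  have hmid2 : ∀ v ∈ K.verts, v ≠ x → v ≠ y → (R.neighborSet v).ncard = 2 := by
    intro v hv hvx hvy; rw [hmid v hvx hvy]; exact hK.2.2 v hv
  -- y is reachable
  have hyS : y ∈ S := by
    by_contra hyS
    exact odd_contra hcl hxS (by rw [hxR]; simp)
      (fun v hv hvx => hmid2 v (hSsub hv) hvx (fun h => hyS (h ▸ hv)))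
  -- everything is reachable
  intro v hv
  by_contra hvS
  have hvS' : v ∉ S := fun h => hvS h
  let S' : Set V := {w | Reach R v w}
  have hmemS' : ∀ {w : V}, w ∈ S' ↔ Reach R v w := Iff.rfl
  have hvS'' : v ∈ S' := hmemS'.mpr (reach_refl hv)
  have hdisj : ∀ w, w ∈ S' → w ∉ S := by
    intro w hw hwS
    exact hvS' (hmemS.mpr (Reach.trans (hmemS.mp hwS) (Reach.symm (hmemS'.mp hw))))
  have hxS' : x ∉ S' := fun h => hdisj x h hxS
  have hyS' : y ∉ S' := fun h => hdisj y h hyS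
  have hcl' : ∀ ⦃u w⦄, u ∈ S' → K.Adj u w → w ∈ S' := by
    intro u w hu h
    have hux : u ≠ x := fun h' => hxS' (h' ▸ hu)
    have huy : u ≠ y := fun h' => hyS' (h' ▸ hu)
    have : R.Adj u w := by
      have : w ∈ R.neighborSet u := by rw [hmid u hux huy]; exact h
      exact this
    exact hmemS'.mpr (Reach.step (hmemS'.mp hu) this)
  have := verts_subset_of_closed hK.2.1 (fun w hw => hRv ▸ Reach.mem_right (hmemS'.mp hw)) ⟨v, hvS''⟩ hcl' hxK
  exact hxS' this


/-! ### The side lemma: structure of a mixed cycle on the `H₂` side -/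

lemma side_lemma [Fintype V] {x y : V} {H₁ H₂ : G.Subgraph} (hxy : G.Adj x y)
    (hunion : H₁ ⊔ H₂ = ⊤)
    (hverts : H₁.verts ∩ H₂.verts = {x, y})
    (hedges : H₁.edgeSet ∩ H₂.edgeSet = {s(x, y)})
    {C : G.Subgraph} (hC : C.IsCycleSub)
    (hm1 : ¬ ∀ ⦃a b⦄, C.Adj a b → H₁.Adj a b)
    (hm2 : ¬ ∀ ⦃a b⦄, C.Adj a b → H₂.Adj a b) :
    x ∈ C.verts ∧ y ∈ C.verts ∧
      ((sidePart H₂ x y C).neighborSet x).ncard = 1 ∧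
      ((sidePart H₂ x y C).neighborSet y).ncard = 1 ∧
      ∀ v ∈ C.verts ∩ H₂.verts, Reach (sidePart H₂ x y C) x v := by
  set Q := sidePart H₂ x y C with hQdef
  have hQa : ∀ a b, Q.Adj a b ↔ C.Adj a b ∧ H₂.Adj a b ∧ s(a, b) ≠ s(x, y) :=
    fun _ _ => Iff.rfl
  have hQv : Q.verts = C.verts := rfl
  have hexy : s(x, y) ∈ H₁.edgeSet ∩ H₂.edgeSet := by rw [hedges]; rfl
  have h1xy : H₁.Adj x y := (Subgraph.mem_edgeSet).mp hexy.1
  have h2xy : H₂.Adj x y := (Subgraph.mem_edgeSet).mp hexy.2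
  have hside : ∀ ⦃a b⦄, C.Adj a b → H₁.Adj a b ∨ H₂.Adj a b := by
    intro a b h
    have h' : (H₁ ⊔ H₂).Adj a b := by rw [hunion]; exact C.adj_sub h
    exact h'
  have hvb : ∀ v, v ∈ H₁.verts → v ∈ H₂.verts → v = x ∨ v = y := by
    intro v h1 h2
    have : v ∈ ({x, y} : Set V) := hverts ▸ ⟨h1, h2⟩
    simpa using this
  obtain ⟨u₁, u₂, hu, hu1⟩ : ∃ a b, C.Adj a b ∧ ¬ H₁.Adj a b := by
    push_neg at hm1; exact hm1
  have hu2 : H₂.Adj u₁ u₂ := (hside hu).resolve_left hu1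
  have hQu : Q.Adj u₁ u₂ := ⟨hu, hu2, fun h => hu1 (adj_of_sym2_eq h1xy h)⟩
  have hu1C : u₁ ∈ C.verts := C.edge_vert hu
  let S : Set V := {v | Reach Q u₁ v}
  have hmemS : ∀ {w : V}, w ∈ S ↔ Reach Q u₁ w := Iff.rfl
  have hu1S : u₁ ∈ S := hmemS.mpr (reach_refl (show u₁ ∈ Q.verts from hu1C))
  have hcl : ∀ ⦃u w⦄, u ∈ S → Q.Adj u w → w ∈ S :=
    fun u w hu' h => hmemS.mpr ((hmemS.mp hu').step h)
  have hSsub : S ⊆ C.verts := fun v hv => hQv ▸ Reach.mem_right (hmemS.mp hv)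
  have hSadj : ∀ v ∈ S, ∃ w, Q.Adj v w := by
    intro v hv
    rcases hmemS.mp hv with ⟨p, hp⟩
    by_cases h : u₁ = v
    · exact ⟨u₂, h ▸ hQu⟩
    · obtain ⟨w, hw⟩ := exists_adj_end p h hp
      exact ⟨w, hw.symm⟩
  have hSH2 : S ⊆ H₂.verts := by
    intro v hv
    obtain ⟨w, hw⟩ := hSadj v hv
    exact H₂.edge_vert hw.2.1
  have hmidnbr : ∀ v, v ∈ H₂.verts → v ≠ x → v ≠ y → Q.neighborSet v = C.neighborSet v := by
    intro v h2v hvx hvy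
    ext w
    constructor
    · exact fun h => h.1
    · intro h
      have hv1 : v ∉ H₁.verts := by
        intro h1
        rcases hvb v h1 h2v with h' | h'
        · exact hvx h'
        · exact hvy h'
      have hna : ¬ H₁.Adj v w := fun ha => hv1 (H₁.edge_vert ha)
      exact ⟨h, (hside h).resolve_left hna, sym2_ne_of_ne hvx hvy⟩
  have hcaseA :
      ¬ ((x ∈ S → (Q.neighborSet x).ncard = 2) ∧ (y ∈ S → (Q.neighborSet y).ncard = 2)) := by
    rintro ⟨hax, hay⟩
    have hCcl : ∀ ⦃a b⦄, a ∈ S → C.Adj a b → b ∈ S := by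
      intro a b ha h
      by_cases hax' : a = x
      · subst hax'
        have heq : Q.neighborSet a = C.neighborSet a :=
          Set.eq_of_subset_of_ncard_le (fun w hw => hw.1)
            (by rw [hax ha, hC.2.2 a (hSsub ha)]) (Set.toFinite _)
        exact hcl ha (show Q.Adj a b by rw [← Subgraph.mem_neighborSet, heq]; exact h)
      · by_cases hay' : a = y
        · subst hay'
          have heq : Q.neighborSet a = C.neighborSet a :=
            Set.eq_of_subset_of_ncard_le (fun w hw => hw.1)
              (by rw [hay ha, hC.2.2 a (hSsub ha)]) (Set.toFinite _)
          exact hcl ha (show Q.Adj a b by rw [← Subgraph.mem_neighborSet, heq]; exact h)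
        · exact hcl ha (show Q.Adj a b by
            rw [← Subgraph.mem_neighborSet, hmidnbr a (hSH2 ha) hax' hay']; exact h)
    have hSC := verts_subset_of_closed hC.2.1 hSsub ⟨u₁, hu1S⟩ hCcl
    apply hm2
    intro a b h
    have haS : a ∈ H₂.verts := hSH2 (hSC (C.edge_vert h))
    have hbS : b ∈ H₂.verts := hSH2 (hSC (C.edge_vert h.symm))
    by_cases h1 : H₁.Adj a b
    · have hne : a ≠ b := (C.adj_sub h).ne
      rcases hvb a (H₁.edge_vert h1) haS with rfl | rfl <;>
        rcases hvb b (H₁.edge_vert h1.symm) hbS with rfl | rfl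
      · exact absurd rfl hne
      · exact h2xy
      · exact h2xy.symm
      · exact absurd rfl hne
    · exact (hside h).resolve_left h1
  have hdeg1 : ∀ t ∈ S, (Q.neighborSet t).ncard ≠ 2 → (Q.neighborSet t).ncard = 1 := by
    intro t ht hne2
    have h1 : (Q.neighborSet t).Nonempty := by
      obtain ⟨w, hw⟩ := hSadj t ht
      exact ⟨w, hw⟩
    have hle : (Q.neighborSet t).ncard ≤ 2 := by
      have h' : (Q.neighborSet t).ncard ≤ (C.neighborSet t).ncard :=
        Set.ncard_le_ncard (fun w hw => hw.1) (Set.toFinite _)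
      rwa [hC.2.2 t (hSsub ht)] at h'
    have hpos : 0 < (Q.neighborSet t).ncard := (Set.ncard_pos (Set.toFinite _)).mpr h1
    omega
  have hx2' : ¬ (x ∈ S → (Q.neighborSet x).ncard = 2) := by
    intro hx2
    by_cases hy2 : y ∈ S → (Q.neighborSet y).ncard = 2
    · exact hcaseA ⟨hx2, hy2⟩
    · push_neg at hy2
      obtain ⟨hyS, hyne⟩ := hy2
      refine odd_contra hcl hyS (hdeg1 y hyS hyne) ?_
      intro v hv hvy
      by_cases hvx : v = x
      · subst hvx; exact hx2 hv
      · rw [hmidnbr v (hSH2 hv) hvx hvy]; exact hC.2.2 v (hSsub hv)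
  push_neg at hx2'
  obtain ⟨hxS, hxne⟩ := hx2'
  have hx1 := hdeg1 x hxS hxne
  have hy1' : y ∈ S ∧ (Q.neighborSet y).ncard = 1 := by
    by_contra hy'
    refine odd_contra hcl hxS hx1 ?_
    intro v hv hvx
    by_cases hvy : v = y
    · subst hvy
      rcases eq_or_ne ((Q.neighborSet v).ncard) 2 with h | h
      · exact h
      · exact absurd ⟨hv, hdeg1 v hv h⟩ hy'
    · rw [hmidnbr v (hSH2 hv) hvx hvy]; exact hC.2.2 v (hSsub hv)
  obtain ⟨hyS, hy1⟩ := hy1'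
  have hSfull : ∀ v ∈ C.verts ∩ H₂.verts, v ∈ S := by
    rintro v ⟨hvC, hvH⟩
    by_contra hvS
    let S' : Set V := {w | Reach Q v w}
    have hmemS' : ∀ {w : V}, w ∈ S' ↔ Reach Q v w := Iff.rfl
    have hvS'' : v ∈ S' := hmemS'.mpr (reach_refl (show v ∈ Q.verts from hvC))
    have hdisj : ∀ w, w ∈ S' → w ∉ S := fun w hw hwS =>
      hvS (hmemS.mpr ((hmemS.mp hwS).trans (hmemS'.mp hw).symm))
    have hS'sub : S' ⊆ C.verts := fun w hw => hQv ▸ Reach.mem_right (hmemS'.mp hw)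
    have hS'H2 : S' ⊆ H₂.verts := by
      intro w hw
      rcases hmemS'.mp hw with ⟨p, hp⟩
      by_cases h : v = w
      · exact h ▸ hvH
      · obtain ⟨w', hw'⟩ := exists_adj_end p h hp
        exact H₂.edge_vert hw'.2.1.symm
    have hcl' : ∀ ⦃a b⦄, a ∈ S' → C.Adj a b → b ∈ S' := by
      intro a b ha h
      have hax : a ≠ x := fun h' => (hdisj a ha) (h' ▸ hxS)
      have hay : a ≠ y := fun h' => (hdisj a ha) (h' ▸ hyS)
      have hb : b ∈ Q.neighborSet a := by
        rw [hmidnbr a (hS'H2 ha) hax hay]; exact h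
      exact hmemS'.mpr ((hmemS'.mp ha).step hb)
    have hfin := verts_subset_of_closed hC.2.1 hS'sub ⟨v, hvS''⟩ hcl'
    exact hdisj x (hfin (hSsub hxS)) hxS
  refine ⟨hSsub hxS, hSsub hyS, hx1, hy1, ?_⟩
  intro v hv
  exact ((hmemS.mp hxS).symm.trans (hmemS.mp (hSfull v hv)))


/-! ### Two-neighbour extraction -/

lemma nbr_pair {K : G.Subgraph} {x y : V} (hK : K.IsCycleSub) (hxy : K.Adj x y) :
    ∃ a, a ≠ y ∧ K.neighborSet x = {y, a} := by
  obtain ⟨c, d, hcd, hset⟩ := Set.ncard_eq_two.mp (hK.2.2 x (K.edge_vert hxy))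
  have hy : y ∈ K.neighborSet x := hxy
  rw [hset] at hy
  simp only [Set.mem_insert_iff, Set.mem_singleton_iff] at hy
  rcases hy with h | h
  · exact ⟨d, fun hdy => hcd (h.symm.trans hdy.symm), by rw [hset, ← h]⟩
  · exact ⟨c, fun hcy => hcd (hcy.trans h), by rw [hset, ← h, Set.pair_comm]⟩

/-! ### A mixed cycle avoids the edge s(x,y) -/

lemma mixed_not_adj [Fintype V] {x y : V} {H₁ H₂ : G.Subgraph} (hxy : G.Adj x y)
    (hunion : H₁ ⊔ H₂ = ⊤)
    (hverts : H₁.verts ∩ H₂.verts = {x, y})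
    (hedges : H₁.edgeSet ∩ H₂.edgeSet = {s(x, y)})
    {C : G.Subgraph} (hC : C.IsCycleSub)
    (hm1 : ¬ ∀ ⦃a b⦄, C.Adj a b → H₁.Adj a b)
    (hm2 : ¬ ∀ ⦃a b⦄, C.Adj a b → H₂.Adj a b) : ¬ C.Adj x y := by
  intro hCxy
  obtain ⟨hxC, hyC, h2x, h2y, -⟩ := side_lemma hxy hunion hverts hedges hC hm1 hm2
  obtain ⟨-, -, h1x, h1y, -⟩ := side_lemma hxy (by rwa [sup_comm])
    (by rwa [Set.inter_comm]) (by rwa [Set.inter_comm]) hC hm2 hm1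
  have hboth : ∀ ⦃a b⦄, H₁.Adj a b → H₂.Adj a b → s(a, b) = s(x, y) := by
    intro a b ha hb
    have : s(a, b) ∈ H₁.edgeSet ∩ H₂.edgeSet := ⟨ha, hb⟩
    rwa [hedges] at this
  obtain ⟨c, hcy, hcnbr⟩ := nbr_pair hC hCxy
  obtain ⟨w₂, hw2⟩ := Set.ncard_eq_one.mp h2x
  obtain ⟨w₁, hw1⟩ := Set.ncard_eq_one.mp h1x
  have hw2m : w₂ ∈ (sidePart H₂ x y C).neighborSet x := by rw [hw2]; rfl
  have hw1m : w₁ ∈ (sidePart H₁ x y C).neighborSet x := by rw [hw1]; rfl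
  have hw2y : w₂ ≠ y := fun h => hw2m.2.2 (by rw [h])
  have hw1y : w₁ ≠ y := fun h => hw1m.2.2 (by rw [h])
  have hw2c : w₂ = c := by
    have : w₂ ∈ C.neighborSet x := hw2m.1
    rw [hcnbr] at this
    simp only [Set.mem_insert_iff, Set.mem_singleton_iff] at this
    exact this.resolve_left hw2y
  have hw1c : w₁ = c := by
    have : w₁ ∈ C.neighborSet x := hw1m.1
    rw [hcnbr] at this
    simp only [Set.mem_insert_iff, Set.mem_singleton_iff] at this
    exact this.resolve_left hw1y
  have h1c : H₁.Adj x c := hw1c ▸ hw1m.2.1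
  have h2c : H₂.Adj x c := hw2c ▸ hw2m.2.1
  exact hcy (Sym2.congr_right.mp (hboth h1c h2c))

/-! ### The split of a mixed cycle is a cycle -/

lemma split_props [Fintype V] {x y : V} {H₁ H₂ : G.Subgraph} (hxy : G.Adj x y)
    (hunion : H₁ ⊔ H₂ = ⊤)
    (hverts : H₁.verts ∩ H₂.verts = {x, y})
    (hedges : H₁.edgeSet ∩ H₂.edgeSet = {s(x, y)})
    {C : G.Subgraph} (hC : C.IsCycleSub)
    (hm1 : ¬ ∀ ⦃a b⦄, C.Adj a b → H₁.Adj a b)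
    (hm2 : ¬ ∀ ⦃a b⦄, C.Adj a b → H₂.Adj a b)
    (h2xy : H₂.Adj x y) :
    (split H₂ h2xy C).IsCycleSub ∧ (split H₂ h2xy C).Adj x y ∧
      (split H₂ h2xy C).verts = C.verts ∩ H₂.verts ∧
      ∀ ⦃a b⦄, (split H₂ h2xy C).Adj a b → H₂.Adj a b := by
  obtain ⟨hxC, hyC, h2x, h2y, hreach⟩ := side_lemma hxy hunion hverts hedges hC hm1 hm2
  have hxney : x ≠ y := hxy.ne
  have hxH2 : x ∈ H₂.verts := H₂.edge_vert h2xy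
  have hyH2 : y ∈ H₂.verts := H₂.edge_vert h2xy.symm
  have hvb : ∀ v, v ∈ H₁.verts → v ∈ H₂.verts → v = x ∨ v = y := by
    intro v h1 h2
    have : v ∈ ({x, y} : Set V) := hverts ▸ ⟨h1, h2⟩
    simpa using this
  have hside : ∀ ⦃a b⦄, C.Adj a b → H₁.Adj a b ∨ H₂.Adj a b := by
    intro a b h
    have h' : (H₁ ⊔ H₂).Adj a b := by rw [hunion]; exact C.adj_sub h
    exact h'
  set Q := sidePart H₂ x y C with hQdef
  set D := split H₂ h2xy C with hDdef
  have hDv : D.verts = C.verts ∩ H₂.verts := by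
    show (C.verts ∩ H₂.verts) ∪ {x, y} = C.verts ∩ H₂.verts
    apply Set.union_eq_self_of_subset_right
    intro v hv
    rcases (by simpa using hv : v = x ∨ v = y) with rfl | rfl
    · exact ⟨hxC, hxH2⟩
    · exact ⟨hyC, hyH2⟩
  have hDadjsub : ∀ ⦃a b⦄, D.Adj a b → H₂.Adj a b := by
    rintro a b (h | h)
    · exact h.2.1
    · exact adj_of_sym2_eq h2xy h
  -- neighbour sets
  have hmidnbr : ∀ v, v ∈ H₂.verts → v ≠ x → v ≠ y → Q.neighborSet v = C.neighborSet v := by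
    intro v h2v hvx hvy
    ext w
    constructor
    · exact fun h => h.1
    · intro h
      have hv1 : v ∉ H₁.verts := by
        intro h1
        rcases hvb v h1 h2v with h' | h'
        · exact hvx h'
        · exact hvy h'
      have hna : ¬ H₁.Adj v w := fun ha => hv1 (H₁.edge_vert ha)
      exact ⟨h, (hside h).resolve_left hna, sym2_ne_of_ne hvx hvy⟩
  have hDmid : ∀ v, v ≠ x → v ≠ y → D.neighborSet v = Q.neighborSet v := by
    intro v hvx hvy
    ext w
    constructor
    · rintro (h | h)
      · exact h
      · rcases mem_pair_of_sym2_eq h with h' | h'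
        · exact absurd h' hvx
        · exact absurd h' hvy
    · exact fun h => Or.inl h
  obtain ⟨c, hcmem⟩ := Set.ncard_eq_one.mp h2x
  have hc : Q.Adj x c := by
    have : c ∈ Q.neighborSet x := by rw [hcmem]; rfl
    exact this
  have hcy : c ≠ y := fun h => hc.2.2 (by rw [h])
  obtain ⟨d, hdmem⟩ := Set.ncard_eq_one.mp h2y
  have hd : Q.Adj y d := by
    have : d ∈ Q.neighborSet y := by rw [hdmem]; rfl
    exact this
  have hdx : d ≠ x := fun h => hd.2.2 (by rw [h, Sym2.eq_swap])
  have hDx : D.neighborSet x = {y, c} := by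
    ext w
    constructor
    · rintro (h | h)
      · have : w ∈ Q.neighborSet x := h
        rw [hcmem] at this
        exact Set.mem_insert_iff.mpr (Or.inr this)
      · exact Set.mem_insert_iff.mpr (Or.inl (Sym2.congr_right.mp h))
    · intro hw
      rcases (by simpa using hw : w = y ∨ w = c) with rfl | rfl
      · exact Or.inr rfl
      · exact Or.inl hc
  have hDy : D.neighborSet y = {x, d} := by
    ext w
    constructor
    · rintro (h | h)
      · have : w ∈ Q.neighborSet y := h
        rw [hdmem] at this
        exact Set.mem_insert_iff.mpr (Or.inr this)
      · refine Set.mem_insert_iff.mpr (Or.inl ?_)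
        rw [Sym2.eq_swap (a := x) (b := y)] at h
        exact Sym2.congr_right.mp h
    · intro hw
      rcases (by simpa using hw : w = x ∨ w = d) with rfl | rfl
      · exact Or.inr (Sym2.eq_swap)
      · exact Or.inl hd
  have hDadjxy : D.Adj x y := Or.inr rfl
  refine ⟨⟨?_, ?_, ?_⟩, hDadjxy, hDv, hDadjsub⟩
  · exact ⟨x, D.edge_vert hDadjxy⟩
  · -- connectivity
    have hQD : ∀ ⦃a b⦄, Q.Adj a b → D.Adj a b := fun a b h => Or.inl h
    have hxD : x ∈ D.verts := D.edge_vert hDadjxy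
    have hreachD : ∀ v ∈ D.verts, Reach D x v := by
      intro v hv
      rw [hDv] at hv
      exact (hreach v hv).of_le hQD hxD
    apply Subgraph.connected_iff'.mp
    rw [Subgraph.connected_iff_forall_exists_walk_subgraph]
    refine ⟨⟨x, hxD⟩, ?_⟩
    intro u v hu hv
    exact ((hreachD u hu).symm.trans (hreachD v hv))
  · intro v hv
    by_cases hvx : v = x
    · subst hvx; rw [hDx]; exact Set.ncard_pair (Ne.symm hcy)
    · by_cases hvy : v = y
      · subst hvy; rw [hDy]; exact Set.ncard_pair (Ne.symm hdx)
      · rw [hDmid v hvx hvy]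
        rw [hDv] at hv
        rw [hmidnbr v hv.2 hvx hvy]
        exact hC.2.2 v hv.1


/-! ### Recombination: splitting and regluing a mixed cycle gives it back -/

lemma recombine [Fintype V] {x y : V} {H₁ H₂ : G.Subgraph} (hxy : G.Adj x y)
    (hunion : H₁ ⊔ H₂ = ⊤)
    (hverts : H₁.verts ∩ H₂.verts = {x, y})
    (hedges : H₁.edgeSet ∩ H₂.edgeSet = {s(x, y)})
    {C : G.Subgraph} (hC : C.IsCycleSub)
    (hm1 : ¬ ∀ ⦃a b⦄, C.Adj a b → H₁.Adj a b)
    (hm2 : ¬ ∀ ⦃a b⦄, C.Adj a b → H₂.Adj a b)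
    (h1xy : H₁.Adj x y) (h2xy : H₂.Adj x y) :
    glue x y (split H₁ h1xy C) (split H₂ h2xy C) = C := by
  have hnoe : ¬ C.Adj x y := mixed_not_adj hxy hunion hverts hedges hC hm1 hm2
  have hside : ∀ ⦃a b⦄, C.Adj a b → H₁.Adj a b ∨ H₂.Adj a b := by
    intro a b h
    have h' : (H₁ ⊔ H₂).Adj a b := by rw [hunion]; exact C.adj_sub h
    exact h'
  obtain ⟨-, -, h1v, -⟩ := split_props hxy (by rwa [sup_comm]) (by rwa [Set.inter_comm])
    (by rwa [Set.inter_comm]) hC hm2 hm1 h1xy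
  obtain ⟨-, -, h2v, -⟩ := split_props hxy hunion hverts hedges hC hm1 hm2 h2xy
  have huniv : H₁.verts ∪ H₂.verts = Set.univ := by
    rw [← Subgraph.verts_sup, hunion, Subgraph.verts_top]
  apply Subgraph.ext
  · show (split H₁ h1xy C).verts ∪ (split H₂ h2xy C).verts = C.verts
    rw [h1v, h2v, ← Set.inter_union_distrib_left, huniv, Set.inter_univ]
  · funext a b
    apply propext
    constructor
    · rintro ⟨h | h, hne⟩
      · rcases h with h | h
        · exact h.1
        · exact absurd h hne
      · rcases h with h | h
        · exact h.1
        · exact absurd h hne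
    · intro h
      have hne : s(a, b) ≠ s(x, y) := fun he => hnoe (adj_of_sym2_eq h he.symm)
      rcases hside h with h' | h'
      · exact ⟨Or.inl (Or.inl ⟨h, h', hne⟩), hne⟩
      · exact ⟨Or.inr (Or.inl ⟨h, h', hne⟩), hne⟩

/-! ### Gluing two cycles through the edge -/

lemma glue_props [Fintype V] {x y : V} {H₁ H₂ : G.Subgraph} (hxy : G.Adj x y)
    (hunion : H₁ ⊔ H₂ = ⊤)
    (hverts : H₁.verts ∩ H₂.verts = {x, y})
    (hedges : H₁.edgeSet ∩ H₂.edgeSet = {s(x, y)})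
    {D₁ D₂ : G.Subgraph} (h1 : D₁.IsCycleSub) (h2 : D₂.IsCycleSub)
    (h1xy : D₁.Adj x y) (h2xy : D₂.Adj x y)
    (h1e : ∀ ⦃a b⦄, D₁.Adj a b → H₁.Adj a b) (h2e : ∀ ⦃a b⦄, D₂.Adj a b → H₂.Adj a b)
    (hH1 : H₁.Adj x y) (hH2 : H₂.Adj x y) :
    (glue x y D₁ D₂).IsCycleSub ∧
      (glue x y D₁ D₂).verts ∩ H₁.verts = D₁.verts ∧
      (glue x y D₁ D₂).verts ∩ H₂.verts = D₂.verts ∧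
      (¬ ∀ ⦃a b⦄, (glue x y D₁ D₂).Adj a b → H₁.Adj a b) ∧
      (¬ ∀ ⦃a b⦄, (glue x y D₁ D₂).Adj a b → H₂.Adj a b) ∧
      D₁.verts ∩ D₂.verts = {x, y} ∧
      split H₁ hH1 (glue x y D₁ D₂) = D₁ ∧
      split H₂ hH2 (glue x y D₁ D₂) = D₂ := by
  have hxney : x ≠ y := hxy.ne
  have hboth : ∀ ⦃a b⦄, H₁.Adj a b → H₂.Adj a b → s(a, b) = s(x, y) := by
    intro a b ha hb
    have : s(a, b) ∈ H₁.edgeSet ∩ H₂.edgeSet := ⟨ha, hb⟩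
    rwa [hedges] at this
  have hvb : ∀ v, v ∈ H₁.verts → v ∈ H₂.verts → v = x ∨ v = y := by
    intro v hv1 hv2
    have : v ∈ ({x, y} : Set V) := hverts ▸ ⟨hv1, hv2⟩
    simpa using this
  have hv1 : D₁.verts ⊆ H₁.verts := by
    intro v hv
    have hne : (D₁.neighborSet v).Nonempty := by
      apply (Set.ncard_pos (Set.toFinite _)).mp
      rw [h1.2.2 v hv]; norm_num
    obtain ⟨w, hw⟩ := hne
    exact H₁.edge_vert (h1e hw)
  have hv2 : D₂.verts ⊆ H₂.verts := by
    intro v hv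
    have hne : (D₂.neighborSet v).Nonempty := by
      apply (Set.ncard_pos (Set.toFinite _)).mp
      rw [h2.2.2 v hv]; norm_num
    obtain ⟨w, hw⟩ := hne
    exact H₂.edge_vert (h2e hw)
  have hx1 : x ∈ D₁.verts := D₁.edge_vert h1xy
  have hy1 : y ∈ D₁.verts := D₁.edge_vert h1xy.symm
  have hx2 : x ∈ D₂.verts := D₂.edge_vert h2xy
  have hy2 : y ∈ D₂.verts := D₂.edge_vert h2xy.symm
  have hvv : D₁.verts ∩ D₂.verts = {x, y} := by
    apply Set.Subset.antisymm
    · rintro v ⟨hva, hvb'⟩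
      rcases hvb v (hv1 hva) (hv2 hvb') with rfl | rfl <;> simp
    · intro v hv
      rcases (by simpa using hv : v = x ∨ v = y) with rfl | rfl
      · exact ⟨hx1, hx2⟩
      · exact ⟨hy1, hy2⟩
  set K := glue x y D₁ D₂ with hKdef
  have hKv : K.verts = D₁.verts ∪ D₂.verts := rfl
  have hKv1 : K.verts ∩ H₁.verts = D₁.verts := by
    apply Set.Subset.antisymm
    · rintro v ⟨hv, hvH⟩
      rcases hv with hv | hv
      · exact hv
      · rcases hvb v hvH (hv2 hv) with rfl | rfl
        · exact hx1
        · exact hy1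
    · exact fun v hv => ⟨Or.inl hv, hv1 hv⟩
  have hKv2 : K.verts ∩ H₂.verts = D₂.verts := by
    apply Set.Subset.antisymm
    · rintro v ⟨hv, hvH⟩
      rcases hv with hv | hv
      · rcases hvb v (hv1 hv) hvH with rfl | rfl
        · exact hx2
        · exact hy2
      · exact hv
    · exact fun v hv => ⟨Or.inr hv, hv2 hv⟩
  -- neighbour structure
  have hmid1 : ∀ v, v ∈ D₁.verts → v ≠ x → v ≠ y → K.neighborSet v = D₁.neighborSet v := by
    intro v hvD hvx hvy
    have hvD2 : v ∉ D₂.verts := by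
      intro h
      have hvm : v ∈ ({x, y} : Set V) := hvv ▸ (⟨hvD, h⟩ : v ∈ D₁.verts ∩ D₂.verts)
      rcases (by simpa using hvm : v = x ∨ v = y) with h' | h'
      · exact hvx h'
      · exact hvy h'
    ext w
    constructor
    · rintro ⟨h | h, hne⟩
      · exact h
      · exact absurd (D₂.edge_vert h) hvD2
    · exact fun h => ⟨Or.inl h, sym2_ne_of_ne hvx hvy⟩
  have hmid2 : ∀ v, v ∈ D₂.verts → v ≠ x → v ≠ y → K.neighborSet v = D₂.neighborSet v := by
    intro v hvD hvx hvy
    have hvD1 : v ∉ D₁.verts := by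
      intro h
      have hvm : v ∈ ({x, y} : Set V) := hvv ▸ (⟨h, hvD⟩ : v ∈ D₁.verts ∩ D₂.verts)
      rcases (by simpa using hvm : v = x ∨ v = y) with h' | h'
      · exact hvx h'
      · exact hvy h'
    ext w
    constructor
    · rintro ⟨h | h, hne⟩
      · exact absurd (D₁.edge_vert h) hvD1
      · exact h
    · exact fun h => ⟨Or.inr h, sym2_ne_of_ne hvx hvy⟩
  obtain ⟨a₁, ha1y, ha1⟩ := nbr_pair h1 h1xy
  obtain ⟨a₂, ha2y, ha2⟩ := nbr_pair h2 h2xy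
  obtain ⟨b₁, hb1x, hb1⟩ := nbr_pair h1 h1xy.symm
  obtain ⟨b₂, hb2x, hb2⟩ := nbr_pair h2 h2xy.symm
  have hD1xa1 : D₁.Adj x a₁ := by
    have : a₁ ∈ D₁.neighborSet x := by rw [ha1]; exact Set.mem_insert_iff.mpr (Or.inr rfl)
    exact this
  have hD2xa2 : D₂.Adj x a₂ := by
    have : a₂ ∈ D₂.neighborSet x := by rw [ha2]; exact Set.mem_insert_iff.mpr (Or.inr rfl)
    exact this
  have hD1yb1 : D₁.Adj y b₁ := by
    have : b₁ ∈ D₁.neighborSet y := by rw [hb1]; exact Set.mem_insert_iff.mpr (Or.inr rfl)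
    exact this
  have hD2yb2 : D₂.Adj y b₂ := by
    have : b₂ ∈ D₂.neighborSet y := by rw [hb2]; exact Set.mem_insert_iff.mpr (Or.inr rfl)
    exact this
  have ha12 : a₁ ≠ a₂ := by
    intro h
    rcases hvb a₁ (hv1 (D₁.edge_vert hD1xa1.symm)) (h ▸ hv2 (D₂.edge_vert hD2xa2.symm)) with
      h' | h'
    · exact (D₁.adj_sub hD1xa1).ne' h'
    · exact ha1y h'
  have hb12 : b₁ ≠ b₂ := by
    intro h
    rcases hvb b₁ (hv1 (D₁.edge_vert hD1yb1.symm)) (h ▸ hv2 (D₂.edge_vert hD2yb2.symm)) with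
      h' | h'
    · exact hb1x h'
    · exact (D₁.adj_sub hD1yb1).ne' h'
  have hKx : K.neighborSet x = {a₁, a₂} := by
    ext w
    constructor
    · rintro ⟨h | h, hne⟩
      · have : w ∈ D₁.neighborSet x := h
        rw [ha1] at this
        rcases (by simpa using this : w = y ∨ w = a₁) with rfl | rfl
        · exact absurd rfl hne
        · simp
      · have : w ∈ D₂.neighborSet x := h
        rw [ha2] at this
        rcases (by simpa using this : w = y ∨ w = a₂) with rfl | rfl
        · exact absurd rfl hne
        · simp
    · intro hw
      rcases (by simpa using hw : w = a₁ ∨ w = a₂) with rfl | rfl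
      · exact ⟨Or.inl hD1xa1, fun h => ha1y (Sym2.congr_right.mp h)⟩
      · exact ⟨Or.inr hD2xa2, fun h => ha2y (Sym2.congr_right.mp h)⟩
  have hKy : K.neighborSet y = {b₁, b₂} := by
    ext w
    constructor
    · rintro ⟨h | h, hne⟩
      · have : w ∈ D₁.neighborSet y := h
        rw [hb1] at this
        rcases (by simpa using this : w = x ∨ w = b₁) with rfl | rfl
        · exact absurd Sym2.eq_swap hne
        · simp
      · have : w ∈ D₂.neighborSet y := h
        rw [hb2] at this
        rcases (by simpa using this : w = x ∨ w = b₂) with rfl | rfl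
        · exact absurd Sym2.eq_swap hne
        · simp
    · intro hw
      have hyadj : ∀ w', w' ≠ x → s(y, w') ≠ s(x, y) := by
        intro w' hw' h
        rw [Sym2.eq_swap (a := x) (b := y)] at h
        exact hw' (Sym2.congr_right.mp h)
      rcases (by simpa using hw : w = b₁ ∨ w = b₂) with rfl | rfl
      · exact ⟨Or.inl hD1yb1, hyadj _ hb1x⟩
      · exact ⟨Or.inr hD2yb2, hyadj _ hb2x⟩
  -- it is a cycle
  have hcyc : K.IsCycleSub := by
    refine ⟨⟨x, Or.inl hx1⟩, ?_, ?_⟩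
    · -- connectivity
      have hR1 := reach_delEdge h1 h1xy
      have hR2 := reach_delEdge h2 h2xy
      have had1 : ∀ ⦃a b⦄, (delEdge x y D₁).Adj a b → K.Adj a b :=
        fun a b h => ⟨Or.inl h.1, h.2⟩
      have had2 : ∀ ⦃a b⦄, (delEdge x y D₂).Adj a b → K.Adj a b :=
        fun a b h => ⟨Or.inr h.1, h.2⟩
      have hxK : x ∈ K.verts := Or.inl hx1
      have hreachK : ∀ v ∈ K.verts, Reach K x v := by
        rintro v (hv | hv)
        · exact (hR1 v hv).of_le had1 hxK
        · exact (hR2 v hv).of_le had2 hxK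
      apply Subgraph.connected_iff'.mp
      rw [Subgraph.connected_iff_forall_exists_walk_subgraph]
      exact ⟨⟨x, hxK⟩, fun hu hv => ((hreachK _ hu).symm.trans (hreachK _ hv))⟩
    · intro v hv
      by_cases hvx : v = x
      · subst hvx; rw [hKx]; exact Set.ncard_pair ha12
      · by_cases hvy : v = y
        · subst hvy; rw [hKy]; exact Set.ncard_pair hb12
        · rcases hv with hv | hv
          · rw [hmid1 v hv hvx hvy]; exact h1.2.2 v hv
          · rw [hmid2 v hv hvx hvy]; exact h2.2.2 v hv
  -- mixedness
  have hKxa2 : K.Adj x a₂ := by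
    have : a₂ ∈ K.neighborSet x := by rw [hKx]; simp
    exact this
  have hKxa1 : K.Adj x a₁ := by
    have : a₁ ∈ K.neighborSet x := by rw [hKx]; simp
    exact this
  have hmix1 : ¬ ∀ ⦃a b⦄, K.Adj a b → H₁.Adj a b := by
    intro hall
    exact ha2y (Sym2.congr_right.mp (hboth (hall hKxa2) (h2e hD2xa2)))
  have hmix2 : ¬ ∀ ⦃a b⦄, K.Adj a b → H₂.Adj a b := by
    intro hall
    exact ha1y (Sym2.congr_right.mp (hboth (h1e hD1xa1) (hall hKxa1)))
  refine ⟨hcyc, hKv1, hKv2, hmix1, hmix2, hvv, ?_, ?_⟩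
  · apply Subgraph.ext
    · show K.verts ∩ H₁.verts ∪ {x, y} = D₁.verts
      rw [hKv1]
      apply Set.union_eq_self_of_subset_right
      intro v hv
      rcases (by simpa using hv : v = x ∨ v = y) with rfl | rfl
      · exact hx1
      · exact hy1
    · funext a b
      apply propext
      constructor
      · rintro (⟨⟨h | h, hne⟩, hH, hne'⟩ | h)
        · exact h
        · exact absurd (hboth hH (h2e h)) hne
        · exact adj_of_sym2_eq h1xy h
      · intro h
        by_cases he : s(a, b) = s(x, y)
        · exact Or.inr he
        · exact Or.inl ⟨⟨Or.inl h, he⟩, h1e h, he⟩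
  · apply Subgraph.ext
    · show K.verts ∩ H₂.verts ∪ {x, y} = D₂.verts
      rw [hKv2]
      apply Set.union_eq_self_of_subset_right
      intro v hv
      rcases (by simpa using hv : v = x ∨ v = y) with rfl | rfl
      · exact hx2
      · exact hy2
    · funext a b
      apply propext
      constructor
      · rintro (⟨⟨h | h, hne⟩, hH, hne'⟩ | h)
        · exact absurd (hboth (h1e h) hH) hne
        · exact h
        · exact adj_of_sym2_eq h2xy h
      · intro h
        by_cases he : s(a, b) = s(x, y)
        · exact Or.inr he
        · exact Or.inl ⟨⟨Or.inr h, he⟩, h2e h, he⟩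

/-! ### A cycle cannot lie in both sides -/

lemma not_both_sides {x y : V} {H₁ H₂ : G.Subgraph}
    (hedges : H₁.edgeSet ∩ H₂.edgeSet = {s(x, y)})
    {K : G.Subgraph} (hK : K.IsCycleSub)
    (hs1 : ∀ ⦃a b⦄, K.Adj a b → H₁.Adj a b)
    (hs2 : ∀ ⦃a b⦄, K.Adj a b → H₂.Adj a b) : False := by
  obtain ⟨v, hv⟩ := hK.1
  obtain ⟨p, q, hpq, hset⟩ := Set.ncard_eq_two.mp (hK.2.2 v hv)
  have hp : K.Adj v p := by
    have : p ∈ K.neighborSet v := by rw [hset]; simp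
    exact this
  have hq : K.Adj v q := by
    have : q ∈ K.neighborSet v := by rw [hset]; simp
    exact this
  have h1 : s(v, p) = s(x, y) := by
    have : s(v, p) ∈ H₁.edgeSet ∩ H₂.edgeSet := ⟨hs1 hp, hs2 hp⟩
    rwa [hedges] at this
  have h2 : s(v, q) = s(x, y) := by
    have : s(v, q) ∈ H₁.edgeSet ∩ H₂.edgeSet := ⟨hs1 hq, hs2 hq⟩
    rwa [hedges] at this
  exact hpq (Sym2.congr_right.mp (h1.trans h2.symm))

/-! ### Parity of the two halves -/

lemma verts_parity [Fintype V] {x y : V} {H₁ H₂ : G.Subgraph} (hxy : G.Adj x y)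
    (hunion : H₁ ⊔ H₂ = ⊤) (hverts : H₁.verts ∩ H₂.verts = {x, y})
    {C : G.Subgraph} (hxC : x ∈ C.verts) (hyC : y ∈ C.verts) :
    (C.verts ∩ H₁.verts).ncard + (C.verts ∩ H₂.verts).ncard = C.verts.ncard + 2 := by
  have huniv : H₁.verts ∪ H₂.verts = Set.univ := by
    rw [← Subgraph.verts_sup, hunion, Subgraph.verts_top]
  have hinter : (C.verts ∩ H₁.verts) ∩ (C.verts ∩ H₂.verts) = {x, y} := by
    rw [Set.inter_inter_inter_comm, Set.inter_self, hverts]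
    apply Set.inter_eq_self_of_subset_right
    intro v hv
    rcases (by simpa using hv : v = x ∨ v = y) with rfl | rfl
    · exact hxC
    · exact hyC
  have hun : (C.verts ∩ H₁.verts) ∪ (C.verts ∩ H₂.verts) = C.verts := by
    rw [← Set.inter_union_distrib_left, huniv, Set.inter_univ]
  have := Set.ncard_inter_add_ncard_union (C.verts ∩ H₁.verts) (C.verts ∩ H₂.verts)
    (Set.toFinite _) (Set.toFinite _)
  rw [hinter, hun, Set.ncard_pair hxy.ne] at this
  omega

end CEvenGlue

open CEvenGlue

/-- The number of odd cycles of `G`. -/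
noncomputable def cOdd {V : Type*} (G : SimpleGraph V) : ℕ :=
  {H : G.Subgraph | H.IsCycleSub ∧ Odd H.verts.ncard}.ncard

/-- The number of even cycles of `G`. -/
noncomputable def cEven {V : Type*} (G : SimpleGraph V) : ℕ :=
  {H : G.Subgraph | H.IsCycleSub ∧ Even H.verts.ncard}.ncard

/-- The number of odd cycles of `G` passing through the edge `xy`. -/
noncomputable def cOddE {V : Type*} (G : SimpleGraph V) (x y : V) : ℕ :=
  {H : G.Subgraph | H.IsCycleSub ∧ Odd H.verts.ncard ∧ H.Adj x y}.ncard

/-- The number of even cycles of `G` passing through the edge `xy`. -/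
noncomputable def cEvenE {V : Type*} (G : SimpleGraph V) (x y : V) : ℕ :=
  {H : G.Subgraph | H.IsCycleSub ∧ Even H.verts.ncard ∧ H.Adj x y}.ncard

theorem cEven_glue {V : Type*} [Fintype V] (G : SimpleGraph V) (x y : V) (hxy : G.Adj x y)
    (H₁ H₂ : G.Subgraph) (hunion : H₁ ⊔ H₂ = ⊤)
    (hverts : H₁.verts ∩ H₂.verts = {x, y})
    (hedges : H₁.edgeSet ∩ H₂.edgeSet = {s(x, y)}) :
    cEven G = cEven H₁.spanningCoe + cEven H₂.spanningCoe +
      cOddE H₁.spanningCoe x y * cOddE H₂.spanningCoe x y +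
      cEvenE H₁.spanningCoe x y * cEvenE H₂.spanningCoe x y := by
  classical
  have hexy : s(x, y) ∈ H₁.edgeSet ∩ H₂.edgeSet := by rw [hedges]; rfl
  have h1xy : H₁.Adj x y := Subgraph.mem_edgeSet.mp hexy.1
  have h2xy : H₂.Adj x y := Subgraph.mem_edgeSet.mp hexy.2
  have hunion' : H₂ ⊔ H₁ = ⊤ := by rwa [sup_comm]
  have hverts' : H₂.verts ∩ H₁.verts = {x, y} := by rwa [Set.inter_comm]
  have hedges' : H₂.edgeSet ∩ H₁.edgeSet = {s(x, y)} := by rwa [Set.inter_comm]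
  let A₁ : Set G.Subgraph :=
    {K | K.IsCycleSub ∧ Even K.verts.ncard ∧ ∀ ⦃a b⦄, K.Adj a b → H₁.Adj a b}
  let A₂ : Set G.Subgraph :=
    {K | K.IsCycleSub ∧ Even K.verts.ncard ∧ ∀ ⦃a b⦄, K.Adj a b → H₂.Adj a b}
  let M : Set G.Subgraph :=
    {K | (K.IsCycleSub ∧ Even K.verts.ncard) ∧
      (¬ ∀ ⦃a b⦄, K.Adj a b → H₁.Adj a b) ∧ (¬ ∀ ⦃a b⦄, K.Adj a b → H₂.Adj a b)}
  let Mo : Set G.Subgraph := {K | K ∈ M ∧ Odd (K.verts ∩ H₁.verts).ncard}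
  let Me : Set G.Subgraph := {K | K ∈ M ∧ Even (K.verts ∩ H₁.verts).ncard}
  let O₁ : Set G.Subgraph :=
    {K | K.IsCycleSub ∧ Odd K.verts.ncard ∧ K.Adj x y ∧ ∀ ⦃a b⦄, K.Adj a b → H₁.Adj a b}
  let O₂ : Set G.Subgraph :=
    {K | K.IsCycleSub ∧ Odd K.verts.ncard ∧ K.Adj x y ∧ ∀ ⦃a b⦄, K.Adj a b → H₂.Adj a b}
  let E₁ : Set G.Subgraph :=
    {K | K.IsCycleSub ∧ Even K.verts.ncard ∧ K.Adj x y ∧ ∀ ⦃a b⦄, K.Adj a b → H₁.Adj a b}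
  let E₂ : Set G.Subgraph :=
    {K | K.IsCycleSub ∧ Even K.verts.ncard ∧ K.Adj x y ∧ ∀ ⦃a b⦄, K.Adj a b → H₂.Adj a b}
  have hpart : {K : G.Subgraph | K.IsCycleSub ∧ Even K.verts.ncard} =
      A₁ ∪ (A₂ ∪ (Mo ∪ Me)) := by
    ext K
    constructor
    · rintro ⟨hc, he⟩
      by_cases e1 : ∀ ⦃a b⦄, K.Adj a b → H₁.Adj a b
      · exact Or.inl ⟨hc, he, e1⟩
      · by_cases e2 : ∀ ⦃a b⦄, K.Adj a b → H₂.Adj a b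
        · exact Or.inr (Or.inl ⟨hc, he, e2⟩)
        · rcases Nat.even_or_odd ((K.verts ∩ H₁.verts).ncard) with h | h
          · exact Or.inr (Or.inr (Or.inr ⟨⟨⟨hc, he⟩, e1, e2⟩, h⟩))
          · exact Or.inr (Or.inr (Or.inl ⟨⟨⟨hc, he⟩, e1, e2⟩, h⟩))
    · rintro (⟨hc, he, -⟩ | ⟨hc, he, -⟩ | ⟨⟨⟨hc, he⟩, -, -⟩, -⟩ | ⟨⟨⟨hc, he⟩, -, -⟩, -⟩)
      all_goals exact ⟨hc, he⟩
  have hd12 : Disjoint A₁ A₂ := by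
    rw [Set.disjoint_left]
    rintro K ⟨hc, -, hs1⟩ ⟨-, -, hs2⟩
    exact not_both_sides hedges hc hs1 hs2
  have hd1M : ∀ K ∈ A₁, K ∉ M := by
    rintro K ⟨-, -, hs1⟩ ⟨-, hn1, -⟩
    exact hn1 hs1
  have hd2M : ∀ K ∈ A₂, K ∉ M := by
    rintro K ⟨-, -, hs2⟩ ⟨-, -, hn2⟩
    exact hn2 hs2
  have hdoe : Disjoint Mo Me := by
    rw [Set.disjoint_left]
    rintro K ⟨-, ho⟩ ⟨-, he⟩
    exact (Nat.not_even_iff_odd.mpr ho) he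
  have hcount : cEven G = A₁.ncard + A₂.ncard + Mo.ncard + Me.ncard := by
    show {K : G.Subgraph | K.IsCycleSub ∧ Even K.verts.ncard}.ncard = _
    rw [hpart]
    rw [Set.ncard_union_eq ?d1 (Set.toFinite _) (Set.toFinite _),
      Set.ncard_union_eq ?d2 (Set.toFinite _) (Set.toFinite _),
      Set.ncard_union_eq hdoe (Set.toFinite _) (Set.toFinite _)]
    · ring
    case d2 =>
      rw [Set.disjoint_left]
      rintro K hK2 (hKo | hKe)
      · exact hd2M K hK2 hKo.1
      · exact hd2M K hK2 hKe.1
    case d1 =>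
      rw [Set.disjoint_left]
      rintro K hK1 (hK2 | hKo | hKe)
      · exact (Set.disjoint_left.mp hd12) hK1 hK2
      · exact hd1M K hK1 hKo.1
      · exact hd1M K hK1 hKe.1
  have hA1 : cEven H₁.spanningCoe = A₁.ncard := by
    show ({D : H₁.spanningCoe.Subgraph | D.IsCycleSub ∧ Even D.verts.ncard}).ncard = _
    rw [← Set.ncard_image_of_injective _ (up_injective H₁), up_image_even]
  have hA2 : cEven H₂.spanningCoe = A₂.ncard := by
    show ({D : H₂.spanningCoe.Subgraph | D.IsCycleSub ∧ Even D.verts.ncard}).ncard = _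
    rw [← Set.ncard_image_of_injective _ (up_injective H₂), up_image_even]
  have hO1 : cOddE H₁.spanningCoe x y = O₁.ncard := by
    show ({D : H₁.spanningCoe.Subgraph |
      D.IsCycleSub ∧ Odd D.verts.ncard ∧ D.Adj x y}).ncard = _
    rw [← Set.ncard_image_of_injective _ (up_injective H₁), up_image_parityE H₁ x y Odd]
  have hO2 : cOddE H₂.spanningCoe x y = O₂.ncard := by
    show ({D : H₂.spanningCoe.Subgraph |
      D.IsCycleSub ∧ Odd D.verts.ncard ∧ D.Adj x y}).ncard = _
    rw [← Set.ncard_image_of_injective _ (up_injective H₂), up_image_parityE H₂ x y Odd]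
  have hE1 : cEvenE H₁.spanningCoe x y = E₁.ncard := by
    show ({D : H₁.spanningCoe.Subgraph |
      D.IsCycleSub ∧ Even D.verts.ncard ∧ D.Adj x y}).ncard = _
    rw [← Set.ncard_image_of_injective _ (up_injective H₁), up_image_parityE H₁ x y Even]
  have hE2 : cEvenE H₂.spanningCoe x y = E₂.ncard := by
    show ({D : H₂.spanningCoe.Subgraph |
      D.IsCycleSub ∧ Even D.verts.ncard ∧ D.Adj x y}).ncard = _
    rw [← Set.ncard_image_of_injective _ (up_injective H₂), up_image_parityE H₂ x y Even]
  let F : G.Subgraph → G.Subgraph × G.Subgraph :=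
    fun K => (split H₁ h1xy K, split H₂ h2xy K)
  have hinj : Set.InjOn F M := by
    rintro K ⟨⟨hc, he⟩, hn1, hn2⟩ K' ⟨⟨hc', he'⟩, hn1', hn2'⟩ hF
    have h1 := recombine hxy hunion hverts hedges hc hn1 hn2 h1xy h2xy
    have h2 := recombine hxy hunion hverts hedges hc' hn1' hn2' h1xy h2xy
    have hfst : split H₁ h1xy K = split H₁ h1xy K' := congrArg Prod.fst hF
    have hsnd : split H₂ h2xy K = split H₂ h2xy K' := congrArg Prod.snd hF
    rw [← h1, ← h2, hfst, hsnd]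
  have hmemF : ∀ K ∈ M, (split H₁ h1xy K).IsCycleSub ∧ (split H₁ h1xy K).Adj x y ∧
      (split H₁ h1xy K).verts = K.verts ∩ H₁.verts ∧
      (∀ ⦃a b⦄, (split H₁ h1xy K).Adj a b → H₁.Adj a b) ∧
      (split H₂ h2xy K).IsCycleSub ∧ (split H₂ h2xy K).Adj x y ∧
      (split H₂ h2xy K).verts = K.verts ∩ H₂.verts ∧
      (∀ ⦃a b⦄, (split H₂ h2xy K).Adj a b → H₂.Adj a b) ∧
      (K.verts ∩ H₁.verts).ncard + (K.verts ∩ H₂.verts).ncard = K.verts.ncard + 2 := by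
    rintro K ⟨⟨hc, he⟩, hn1, hn2⟩
    obtain ⟨s1c, s1a, s1v, s1e⟩ := split_props hxy hunion' hverts' hedges' hc hn2 hn1 h1xy
    obtain ⟨s2c, s2a, s2v, s2e⟩ := split_props hxy hunion hverts hedges hc hn1 hn2 h2xy
    obtain ⟨hxK, hyK, -, -, -⟩ := side_lemma hxy hunion hverts hedges hc hn1 hn2
    exact ⟨s1c, s1a, s1v, s1e, s2c, s2a, s2v, s2e,
      verts_parity hxy hunion hverts hxK hyK⟩
  have himo : F '' Mo = O₁ ×ˢ O₂ := by
    ext ⟨D₁, D₂⟩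
    constructor
    · rintro ⟨K, ⟨hKM, hKo⟩, hFK⟩
      obtain ⟨s1c, s1a, s1v, s1e, s2c, s2a, s2v, s2e, hpar⟩ := hmemF K hKM
      obtain ⟨⟨hc, he⟩, -, -⟩ := hKM
      have hD1 : D₁ = split H₁ h1xy K := congrArg Prod.fst hFK.symm
      have hD2 : D₂ = split H₂ h2xy K := congrArg Prod.snd hFK.symm
      subst hD1; subst hD2
      refine ⟨⟨s1c, ?_, s1a, s1e⟩, ⟨s2c, ?_, s2a, s2e⟩⟩
      · rw [s1v]; exact hKo
      · rw [s2v]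
        rcases hKo with ⟨m, hm⟩
        rcases he with ⟨l, hl⟩
        rcases Nat.even_or_odd ((K.verts ∩ H₂.verts).ncard) with h | h
        · rcases h with ⟨k, hk⟩; omega
        · exact h
    · rintro ⟨⟨hD1c, hD1o, hD1a, hD1e⟩, ⟨hD2c, hD2o, hD2a, hD2e⟩⟩
      obtain ⟨hKc, hKv1, hKv2, hKm1, hKm2, hKvv, hs1, hs2⟩ :=
        glue_props hxy hunion hverts hedges hD1c hD2c hD1a hD2a hD1e hD2e h1xy h2xy
      refine ⟨glue x y D₁ D₂, ⟨⟨⟨hKc, ?_⟩, hKm1, hKm2⟩, ?_⟩, ?_⟩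
      · have hcard := Set.ncard_union_add_ncard_inter D₁.verts D₂.verts
          (Set.toFinite _) (Set.toFinite _)
        rw [hKvv, Set.ncard_pair hxy.ne] at hcard
        show Even ((glue x y D₁ D₂).verts.ncard)
        have hgv : (glue x y D₁ D₂).verts = D₁.verts ∪ D₂.verts := rfl
        rw [hgv]
        rcases hD1o with ⟨m, hm⟩
        rcases hD2o with ⟨l, hl⟩
        rw [hm, hl] at hcard
        refine ⟨m + l, ?_⟩
        omega
      · rw [hKv1]; exact hD1o
      · show (split H₁ h1xy (glue x y D₁ D₂), split H₂ h2xy (glue x y D₁ D₂)) = (D₁, D₂)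
        rw [hs1, hs2]
  have hime : F '' Me = E₁ ×ˢ E₂ := by
    ext ⟨D₁, D₂⟩
    constructor
    · rintro ⟨K, ⟨hKM, hKo⟩, hFK⟩
      obtain ⟨s1c, s1a, s1v, s1e, s2c, s2a, s2v, s2e, hpar⟩ := hmemF K hKM
      obtain ⟨⟨hc, he⟩, -, -⟩ := hKM
      have hD1 : D₁ = split H₁ h1xy K := congrArg Prod.fst hFK.symm
      have hD2 : D₂ = split H₂ h2xy K := congrArg Prod.snd hFK.symm
      subst hD1; subst hD2
      refine ⟨⟨s1c, ?_, s1a, s1e⟩, ⟨s2c, ?_, s2a, s2e⟩⟩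
      · rw [s1v]; exact hKo
      · rw [s2v]
        rcases hKo with ⟨m, hm⟩
        rcases he with ⟨l, hl⟩
        rcases Nat.even_or_odd ((K.verts ∩ H₂.verts).ncard) with h | h
        · exact h
        · rcases h with ⟨k, hk⟩; omega
    · rintro ⟨⟨hD1c, hD1o, hD1a, hD1e⟩, ⟨hD2c, hD2o, hD2a, hD2e⟩⟩
      obtain ⟨hKc, hKv1, hKv2, hKm1, hKm2, hKvv, hs1, hs2⟩ :=
        glue_props hxy hunion hverts hedges hD1c hD2c hD1a hD2a hD1e hD2e h1xy h2xy
      refine ⟨glue x y D₁ D₂, ⟨⟨⟨hKc, ?_⟩, hKm1, hKm2⟩, ?_⟩, ?_⟩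
      · have hcard := Set.ncard_union_add_ncard_inter D₁.verts D₂.verts
          (Set.toFinite _) (Set.toFinite _)
        rw [hKvv, Set.ncard_pair hxy.ne] at hcard
        show Even ((glue x y D₁ D₂).verts.ncard)
        have hgv : (glue x y D₁ D₂).verts = D₁.verts ∪ D₂.verts := rfl
        rw [hgv]
        rcases hD1o with ⟨m, hm⟩
        rcases hD2o with ⟨l, hl⟩
        rw [hm, hl] at hcard
        refine ⟨m + l - 1, ?_⟩
        omega
      · rw [hKv1]; exact hD1o
      · show (split H₁ h1xy (glue x y D₁ D₂), split H₂ h2xy (glue x y D₁ D₂)) = (D₁, D₂)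
        rw [hs1, hs2]
  have hmo : Mo.ncard = O₁.ncard * O₂.ncard := by
    rw [← Set.ncard_image_of_injOn (hinj.mono (fun K hK => hK.1)), himo, ncard_prod]
  have hme : Me.ncard = E₁.ncard * E₂.ncard := by
    rw [← Set.ncard_image_of_injOn (hinj.mono (fun K hK => hK.1)), hime, ncard_prod]
  rw [hcount, hA1, hA2, hO1, hO2, hE1, hE2, hmo, hme]
end

section
/- For every odd integer k ≥ 3, letting e denote the edge a_0 b_0 of R_k (an edge of a 4-cycle neither of whose ends lies on the k-cycle), one has c_o(R_k, e) = 2^{k−1} and c_e(R_k, e) = 1. -/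
open SimpleGraph Filter

/-- The graph `R_k`: a `k`-cycle `v_0 … v_(k-1)` where each edge `v_i v_(i+1)` lies on an
attached 4-cycle `v_i a_i b_i v_(i+1)`.  Vertex `(i, 0)` is `v_i`, `(i, 1)` is `a_i`,
`(i, 2)` is `b_i`. -/
def RGraph (k : ℕ) : SimpleGraph (ZMod k × Fin 3) :=
  SimpleGraph.fromRel (fun p q =>
    (p.2 = 0 ∧ q.2 = 0 ∧ q.1 = p.1 + 1) ∨
    (p.2 = 0 ∧ q.2 = 1 ∧ q.1 = p.1) ∨
    (p.2 = 1 ∧ q.2 = 2 ∧ q.1 = p.1) ∨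
    (p.2 = 2 ∧ q.2 = 0 ∧ q.1 = p.1 + 1))

namespace RAux
variable {k : ℕ}

def vv (i : ZMod k) : ZMod k × Fin 3 := (i, 0)
def aa (i : ZMod k) : ZMod k × Fin 3 := (i, 1)
def bb (i : ZMod k) : ZMod k × Fin 3 := (i, 2)

lemma vv_inj : Function.Injective (vv (k := k)) := fun i j h => congrArg Prod.fst h
lemma aa_inj : Function.Injective (aa (k := k)) := fun i j h => congrArg Prod.fst h
lemma bb_inj : Function.Injective (bb (k := k)) := fun i j h => congrArg Prod.fst h

@[simp] lemma vv_ne_aa {i j : ZMod k} : vv i ≠ aa j := by simp [vv, aa, Prod.ext_iff]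
@[simp] lemma vv_ne_bb {i j : ZMod k} : vv i ≠ bb j := by simp [vv, bb, Prod.ext_iff]
@[simp] lemma aa_ne_bb {i j : ZMod k} : aa i ≠ bb j := by simp [aa, bb, Prod.ext_iff]
@[simp] lemma aa_ne_vv {i j : ZMod k} : aa i ≠ vv j := by simp [vv, aa, Prod.ext_iff]
@[simp] lemma bb_ne_vv {i j : ZMod k} : bb i ≠ vv j := by simp [vv, bb, Prod.ext_iff]
@[simp] lemma bb_ne_aa {i j : ZMod k} : bb i ≠ aa j := by simp [aa, bb, Prod.ext_iff]
@[simp] lemma vv_eq_vv {i j : ZMod k} : vv i = vv j ↔ i = j := by simp [vv, Prod.ext_iff]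
@[simp] lemma aa_eq_aa {i j : ZMod k} : aa i = aa j ↔ i = j := by simp [aa, Prod.ext_iff]
@[simp] lemma bb_eq_bb {i j : ZMod k} : bb i = bb j ↔ i = j := by simp [bb, Prod.ext_iff]

open scoped Classical

lemma pair_force {α : Type*} {s : Set α} {x y : α} (hxy : x ≠ y) (h2 : s.ncard = 2)
    (hs : s ⊆ {x, y}) : s = {x, y} :=
  Set.eq_of_subset_of_ncard_le hs (by rw [h2, Set.ncard_pair hxy]) (Set.toFinite _)

lemma ncard_inter_singleton {α : Type*} (s : Set α) (x : α) :
    (s ∩ {x}).ncard = if x ∈ s then 1 else 0 := by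
  split
  · rw [Set.inter_eq_right.mpr (by simpa), Set.ncard_singleton]
  · rw [Set.inter_singleton_eq_empty.mpr (by assumption), Set.ncard_empty]

lemma ncard_subset_four {α : Type*} {s : Set α} {p1 p2 p3 p4 : α}
    (h12 : p1 ≠ p2) (h13 : p1 ≠ p3) (h14 : p1 ≠ p4)
    (h23 : p2 ≠ p3) (h24 : p2 ≠ p4) (h34 : p3 ≠ p4)
    (hsub : s ⊆ {p1, p2, p3, p4}) :
    s.ncard = (if p1 ∈ s then 1 else 0) + (if p2 ∈ s then 1 else 0)
      + (if p3 ∈ s then 1 else 0) + (if p4 ∈ s then 1 else 0) := by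
  classical
  have hs : s = (s ∩ {p1}) ∪ ((s ∩ {p2}) ∪ ((s ∩ {p3}) ∪ (s ∩ {p4}))) := by
    ext x
    constructor
    · intro hx
      rcases hsub hx with h | h | h | h <;> simp_all
    · rintro (h | h | h | h) <;> exact h.1
  have fin : ∀ x : α, (s ∩ {x}).Finite :=
    fun x => Set.Finite.subset (Set.finite_singleton x) Set.inter_subset_right
  have d1 : Disjoint (s ∩ {p1}) ((s ∩ {p2}) ∪ ((s ∩ {p3}) ∪ (s ∩ {p4}))) := by
    simp only [Set.disjoint_union_right]
    refine ⟨?_, ?_, ?_⟩ <;>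
      exact Set.disjoint_of_subset Set.inter_subset_right Set.inter_subset_right
        (by simp [Set.disjoint_singleton_left, *])
  have d2 : Disjoint (s ∩ {p2}) ((s ∩ {p3}) ∪ (s ∩ {p4})) := by
    simp only [Set.disjoint_union_right]
    refine ⟨?_, ?_⟩ <;>
      exact Set.disjoint_of_subset Set.inter_subset_right Set.inter_subset_right
        (by simp [Set.disjoint_singleton_left, *])
  have d3 : Disjoint (s ∩ {p3}) (s ∩ {p4}) :=
    Set.disjoint_of_subset Set.inter_subset_right Set.inter_subset_right
      (by simp [Set.disjoint_singleton_left, *])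
  nth_rewrite 1 [hs]
  rw [Set.ncard_union_eq d1 (fin p1) (((fin p2).union ((fin p3).union (fin p4)))),
    Set.ncard_union_eq d2 (fin p2) ((fin p3).union (fin p4)),
    Set.ncard_union_eq d3 (fin p3) (fin p4),
    ncard_inter_singleton, ncard_inter_singleton, ncard_inter_singleton,
    ncard_inter_singleton]
  omega



variable (hk : 3 ≤ k)
include hk

lemma one_ne_zero' : (1 : ZMod k) ≠ 0 := by
  haveI : NeZero k := ⟨by omega⟩
  intro h
  have h1 : ((1 : ℕ) : ZMod k) = 0 := by exact_mod_cast h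
  rw [ZMod.natCast_eq_zero_iff] at h1
  have := Nat.le_of_dvd one_pos h1
  omega

lemma two_ne_zero' : (2 : ZMod k) ≠ 0 := by
  haveI : NeZero k := ⟨by omega⟩
  intro h
  have h1 : ((2 : ℕ) : ZMod k) = 0 := by exact_mod_cast h
  rw [ZMod.natCast_eq_zero_iff] at h1
  have := Nat.le_of_dvd two_pos h1
  omega

lemma succ_ne_self {i : ZMod k} : i + 1 ≠ i := by
  intro h
  exact one_ne_zero' hk (by linear_combination h)

lemma adj_vv_vv {i j : ZMod k} : (RGraph k).Adj (vv i) (vv j) ↔ (j = i + 1 ∨ i = j + 1) := by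
  constructor
  · rintro ⟨hne, h | h⟩ <;> simp_all [RGraph, vv]
  · rintro (h | h) <;> subst h
    · refine ⟨?_, Or.inl (by left; simp [vv])⟩
      simp only [vv, Prod.ext_iff, ne_eq]
      rintro ⟨h1, -⟩
      exact succ_ne_self hk h1.symm
    · refine ⟨?_, Or.inr (by left; simp [vv])⟩
      simp only [vv, Prod.ext_iff, ne_eq]
      rintro ⟨h1, -⟩
      exact succ_ne_self hk h1

lemma adj_vv_aa {i j : ZMod k} : (RGraph k).Adj (vv i) (aa j) ↔ j = i := by
  constructor
  · rintro ⟨hne, h | h⟩ <;> simp_all [RGraph, vv, aa]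
  · rintro rfl
    exact ⟨by simp, by left; right; left; simp [vv, aa]⟩

lemma adj_vv_bb {i j : ZMod k} : (RGraph k).Adj (vv i) (bb j) ↔ i = j + 1 := by
  constructor
  · rintro ⟨hne, h | h⟩ <;> simp_all [RGraph, vv, bb]
  · rintro rfl
    exact ⟨by simp, by right; right; right; right; simp [vv, bb]⟩

lemma adj_aa_bb {i j : ZMod k} : (RGraph k).Adj (aa i) (bb j) ↔ j = i := by
  constructor
  · rintro ⟨hne, h | h⟩ <;> simp_all [RGraph, aa, bb]
  · rintro rfl
    exact ⟨by simp, by left; right; right; left; simp [aa, bb]⟩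

lemma not_adj_aa_aa {i j : ZMod k} : ¬ (RGraph k).Adj (aa i) (aa j) := by
  rintro ⟨hne, h | h⟩ <;> simp_all [RGraph, aa]

lemma not_adj_bb_bb {i j : ZMod k} : ¬ (RGraph k).Adj (bb i) (bb j) := by
  rintro ⟨hne, h | h⟩ <;> simp_all [RGraph, bb]

lemma not_adj_aa_vv {i j : ZMod k} (h : j ≠ i) : ¬ (RGraph k).Adj (aa j) (vv i) := by
  intro h'; exact h ((adj_vv_aa hk).mp h'.symm)

/-- every vertex is of the given form -/
lemma cases_vtx (p : ZMod k × Fin 3) : p = vv p.1 ∨ p = aa p.1 ∨ p = bb p.1 := by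
  have : p.2 = 0 ∨ p.2 = 1 ∨ p.2 = 2 := by omega
  rcases this with h | h | h
  · left; simp [vv, Prod.ext_iff, h]
  · right; left; simp [aa, Prod.ext_iff, h]
  · right; right; simp [bb, Prod.ext_iff, h]

/-- neighbors of aa i -/
lemma nbr_aa {i : ZMod k} {q : ZMod k × Fin 3} (h : (RGraph k).Adj (aa i) q) :
    q = vv i ∨ q = bb i := by
  rcases cases_vtx hk q with hq | hq | hq <;> rw [hq] at h ⊢
  · left; rw [vv_eq_vv]; exact ((adj_vv_aa hk).mp h.symm).symm
  · exact absurd h (not_adj_aa_aa hk)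
  · right; rw [bb_eq_bb]; exact (adj_aa_bb hk).mp h

lemma nbr_bb {i : ZMod k} {q : ZMod k × Fin 3} (h : (RGraph k).Adj (bb i) q) :
    q = aa i ∨ q = vv (i + 1) := by
  rcases cases_vtx hk q with hq | hq | hq <;> rw [hq] at h ⊢
  · right; rw [vv_eq_vv]; exact (adj_vv_bb hk).mp h.symm
  · left; rw [aa_eq_aa]; exact ((adj_aa_bb hk).mp h.symm).symm
  · exact absurd h (not_adj_bb_bb hk)

lemma nbr_vv {i : ZMod k} {q : ZMod k × Fin 3} (h : (RGraph k).Adj (vv i) q) :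
    q = vv (i + 1) ∨ q = vv (i - 1) ∨ q = aa i ∨ q = bb (i - 1) := by
  rcases cases_vtx hk q with hq | hq | hq <;> rw [hq] at h ⊢
  · rcases (adj_vv_vv hk).mp h with h' | h'
    · left; rw [vv_eq_vv]; exact h'
    · right; left; rw [vv_eq_vv]; exact eq_sub_of_add_eq h'.symm
  · right; right; left; rw [aa_eq_aa]; exact (adj_vv_aa hk).mp h
  · right; right; right; rw [bb_eq_bb]
    have := (adj_vv_bb hk).mp h
    exact eq_sub_of_add_eq this.symm

section Forcing
variable {H : (RGraph k).Subgraph}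

/-- shape of H's neighbor sets forced by degree 2. -/
lemma force_aa (hdeg : ∀ v ∈ H.verts, (H.neighborSet v).ncard = 2)
    {i : ZMod k} (hi : aa i ∈ H.verts) :
    H.Adj (aa i) (vv i) ∧ H.Adj (aa i) (bb i) := by
  have hsub : H.neighborSet (aa i) ⊆ {vv i, bb i} := fun q hq => nbr_aa hk (H.adj_sub hq)
  have heq := pair_force vv_ne_bb (hdeg _ hi) hsub
  constructor
  · have : vv i ∈ H.neighborSet (aa i) := by rw [heq]; exact Set.mem_insert _ _
    exact this
  · have : bb i ∈ H.neighborSet (aa i) := by rw [heq]; exact Set.mem_insert_of_mem _ rfl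
    exact this

lemma force_bb (hdeg : ∀ v ∈ H.verts, (H.neighborSet v).ncard = 2)
    {i : ZMod k} (hi : bb i ∈ H.verts) :
    H.Adj (bb i) (aa i) ∧ H.Adj (bb i) (vv (i + 1)) := by
  have hsub : H.neighborSet (bb i) ⊆ {aa i, vv (i + 1)} := fun q hq => nbr_bb hk (H.adj_sub hq)
  have heq := pair_force aa_ne_vv (hdeg _ hi) hsub
  constructor
  · have : aa i ∈ H.neighborSet (bb i) := by rw [heq]; exact Set.mem_insert _ _
    exact this
  · have : vv (i + 1) ∈ H.neighborSet (bb i) := by rw [heq]; exact Set.mem_insert_of_mem _ rfl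
    exact this

lemma bb_mem_iff (hdeg : ∀ v ∈ H.verts, (H.neighborSet v).ncard = 2) {i : ZMod k} :
    bb i ∈ H.verts ↔ aa i ∈ H.verts := by
  constructor
  · intro h; exact ((force_bb hk hdeg h).1).snd_mem
  · intro h; exact ((force_aa hk hdeg h).2).snd_mem

/-- the "count" at slot i: direct edge plus detour. -/
noncomputable def slot (H : (RGraph k).Subgraph) (i : ZMod k) : ℕ :=
  (if H.Adj (vv i) (vv (i + 1)) then 1 else 0) + (if aa i ∈ H.verts then 1 else 0)

lemma slot_le_two (i : ZMod k) : slot H i ≤ 2 := by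
  unfold slot; split <;> split <;> omega

lemma slot_pos_mem (hdeg : ∀ v ∈ H.verts, (H.neighborSet v).ncard = 2)
    {i : ZMod k} (h : 0 < slot H i) : vv i ∈ H.verts ∧ vv (i + 1) ∈ H.verts := by
  unfold slot at h
  by_cases he : H.Adj (vv i) (vv (i + 1))
  · exact ⟨he.fst_mem, he.snd_mem⟩
  · rw [if_neg he] at h
    have ha : aa i ∈ H.verts := by by_contra hc; rw [if_neg hc] at h; omega
    refine ⟨((force_aa hk hdeg ha).1).snd_mem, ?_⟩
    have hb : bb i ∈ H.verts := (bb_mem_iff hk hdeg).mpr ha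
    exact ((force_bb hk hdeg hb).2).snd_mem

lemma deg_vv (hdeg : ∀ v ∈ H.verts, (H.neighborSet v).ncard = 2)
    {i : ZMod k} (hi : vv i ∈ H.verts) :
    slot H (i - 1) + slot H i = 2 := by
  have hsub : H.neighborSet (vv i) ⊆ {vv (i + 1), vv (i - 1), aa i, bb (i - 1)} :=
    fun q hq => by
      rcases nbr_vv hk (H.adj_sub hq) with h | h | h | h <;> simp [h]
  have hd12 : vv (i + 1) ≠ (vv (i - 1) : ZMod k × Fin 3) := by
    rw [ne_eq, vv_eq_vv]
    intro h
    exact two_ne_zero' hk (by linear_combination h)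
  have hcard := ncard_subset_four hd12 vv_ne_aa vv_ne_bb aa_ne_vv.symm vv_ne_bb aa_ne_bb hsub
  rw [hdeg _ hi] at hcard
  have m1 : vv (i + 1) ∈ H.neighborSet (vv i) ↔ H.Adj (vv i) (vv (i + 1)) := Iff.rfl
  have m2 : vv (i - 1) ∈ H.neighborSet (vv i) ↔ H.Adj (vv (i - 1)) (vv ((i - 1) + 1)) := by
    rw [sub_add_cancel]
    exact ⟨fun h => h.symm, fun h => h.symm⟩
  have m3 : aa i ∈ H.neighborSet (vv i) ↔ aa i ∈ H.verts := by
    constructor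
    · intro h; exact (Subgraph.Adj.snd_mem h)
    · intro h; exact ((force_aa hk hdeg h).1).symm
  have m4 : bb (i - 1) ∈ H.neighborSet (vv i) ↔ aa (i - 1) ∈ H.verts := by
    constructor
    · intro h
      exact (bb_mem_iff hk hdeg).mp (Subgraph.Adj.snd_mem h)
    · intro h
      have hb : bb (i - 1) ∈ H.verts := (bb_mem_iff hk hdeg).mpr h
      have := (force_bb hk hdeg hb).2
      rw [sub_add_cancel] at this
      exact this.symm
  simp only [m1, m2, m3, m4] at hcard
  unfold slot
  omega

end Forcing


section DSubDef

/-- unsymmetrized edge relation for the cycle determined by a set `S` of detour slots -/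
def DRel (S : Finset (ZMod k)) (p q : ZMod k × Fin 3) : Prop :=
  (p.1 ∈ S ∧ q.1 = p.1 ∧ ((p.2 = 0 ∧ q.2 = 1) ∨ (p.2 = 1 ∧ q.2 = 2))) ∨
  (p.1 ∈ S ∧ q.1 = p.1 + 1 ∧ p.2 = 2 ∧ q.2 = 0) ∨
  (p.1 ∉ S ∧ q.1 = p.1 + 1 ∧ p.2 = 0 ∧ q.2 = 0)

omit hk in
lemma DRel_ne (hk : 3 ≤ k) {S : Finset (ZMod k)} {p q : ZMod k × Fin 3} (h : DRel S p q) :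
    p ≠ q := by
  rintro rfl
  rcases h with ⟨-, -, ⟨h1, h2⟩ | ⟨h1, h2⟩⟩ | ⟨-, h2, -⟩ | ⟨-, h2, -⟩ <;>
    first
      | (rw [h1] at h2; exact absurd h2 (by decide))
      | exact succ_ne_self hk h2.symm

omit hk in
lemma DRel_rel (hk : 3 ≤ k) {S : Finset (ZMod k)} {p q : ZMod k × Fin 3} (h : DRel S p q) :
    (RGraph k).Adj p q := by
  refine ⟨DRel_ne hk h, Or.inl ?_⟩
  rcases h with ⟨-, h2, ⟨h3, h4⟩ | ⟨h3, h4⟩⟩ | ⟨-, h2, h3, h4⟩ | ⟨-, h2, h3, h4⟩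
  · exact Or.inr (Or.inl ⟨h3, h4, h2⟩)
  · exact Or.inr (Or.inr (Or.inl ⟨h3, h4, h2⟩))
  · exact Or.inr (Or.inr (Or.inr ⟨h3, h4, h2⟩))
  · exact Or.inl ⟨h3, h4, h2⟩

def DSub (S : Finset (ZMod k)) : (RGraph k).Subgraph where
  verts := {p | p.2 = 0 ∨ p.1 ∈ S}
  Adj p q := DRel S p q ∨ DRel S q p
  adj_sub h := by
    rcases h with h | h
    · exact DRel_rel hk h
    · exact (DRel_rel hk h).symm
  edge_vert {p q} h := by
    rcases h with h | h
    · rcases h with ⟨h1, -, ⟨h3, -⟩ | ⟨h3, -⟩⟩ | ⟨h1, -, h3, -⟩ | ⟨-, -, h3, -⟩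
      · exact Or.inl h3
      · exact Or.inr h1
      · exact Or.inr h1
      · exact Or.inl h3
    · rcases h with ⟨h1, h2, ⟨-, h4⟩ | ⟨-, h4⟩⟩ | ⟨h1, h2, -, h4⟩ | ⟨-, -, -, h4⟩
      · exact Or.inr (h2 ▸ h1)
      · exact Or.inr (h2 ▸ h1)
      · exact Or.inl h4
      · exact Or.inl h4
  symm := ⟨fun p q h => h.symm⟩

lemma DSub_verts_mem {S : Finset (ZMod k)} {p : ZMod k × Fin 3} :
    p ∈ (DSub hk S).verts ↔ (p.2 = 0 ∨ p.1 ∈ S) := Iff.rfl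

@[simp] lemma DSub_vv_mem {S : Finset (ZMod k)} {i : ZMod k} : vv i ∈ (DSub hk S).verts :=
  Or.inl rfl

@[simp] lemma DSub_aa_mem {S : Finset (ZMod k)} {i : ZMod k} :
    aa i ∈ (DSub hk S).verts ↔ i ∈ S := by
  rw [DSub_verts_mem]; simp [aa]

@[simp] lemma DSub_bb_mem {S : Finset (ZMod k)} {i : ZMod k} :
    bb i ∈ (DSub hk S).verts ↔ i ∈ S := by
  rw [DSub_verts_mem]; simp [bb]

lemma DAdj_vv_aa {S : Finset (ZMod k)} {i j : ZMod k} :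
    (DSub hk S).Adj (vv i) (aa j) ↔ (j = i ∧ i ∈ S) := by
  show DRel S _ _ ∨ DRel S _ _ ↔ _
  unfold DRel
  simp [vv, aa, bb]
  tauto

lemma DAdj_aa_bb {S : Finset (ZMod k)} {i j : ZMod k} :
    (DSub hk S).Adj (aa i) (bb j) ↔ (j = i ∧ i ∈ S) := by
  show DRel S _ _ ∨ DRel S _ _ ↔ _
  unfold DRel
  simp [vv, aa, bb]
  tauto

lemma DAdj_bb_vv {S : Finset (ZMod k)} {i j : ZMod k} :
    (DSub hk S).Adj (bb i) (vv j) ↔ (j = i + 1 ∧ i ∈ S) := by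
  show DRel S _ _ ∨ DRel S _ _ ↔ _
  unfold DRel
  simp [vv, aa, bb]
  tauto

lemma DAdj_vv_vv {S : Finset (ZMod k)} {i j : ZMod k} :
    (DSub hk S).Adj (vv i) (vv j) ↔ ((j = i + 1 ∧ i ∉ S) ∨ (i = j + 1 ∧ j ∉ S)) := by
  show DRel S _ _ ∨ DRel S _ _ ↔ _
  unfold DRel
  simp [vv, aa, bb]
  tauto

lemma not_DAdj_aa_aa {S : Finset (ZMod k)} {i j : ZMod k} :
    ¬ (DSub hk S).Adj (aa i) (aa j) := by
  intro h
  exact not_adj_aa_aa hk ((DSub hk S).adj_sub h)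

lemma not_DAdj_bb_bb {S : Finset (ZMod k)} {i j : ZMod k} :
    ¬ (DSub hk S).Adj (bb i) (bb j) := by
  intro h
  exact not_adj_bb_bb hk ((DSub hk S).adj_sub h)

end DSubDef


section DSubDeg

lemma DSub_nbr_aa {S : Finset (ZMod k)} {i : ZMod k} (hi : i ∈ S) :
    (DSub hk S).neighborSet (aa i) = {vv i, bb i} := by
  ext q
  rcases cases_vtx hk q with hq | hq | hq <;> rw [hq] <;>
    simp only [Subgraph.mem_neighborSet, Set.mem_insert_iff, Set.mem_singleton_iff]
  · rw [Subgraph.adj_comm, DAdj_vv_aa hk]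
    constructor
    · rintro ⟨rfl, -⟩; left; rfl
    · rintro (h | h)
      · exact ⟨(vv_eq_vv.mp h).symm ▸ rfl, by rwa [vv_eq_vv.mp h]⟩
      · exact absurd h vv_ne_bb
  · constructor
    · intro h; exact absurd h (not_DAdj_aa_aa hk)
    · rintro (h | h)
      · exact absurd h aa_ne_vv
      · exact absurd h aa_ne_bb
  · rw [DAdj_aa_bb hk]
    constructor
    · rintro ⟨rfl, -⟩; right; rfl
    · rintro (h | h)
      · exact absurd h bb_ne_vv
      · exact ⟨bb_eq_bb.mp h, hi⟩

lemma DSub_nbr_bb {S : Finset (ZMod k)} {i : ZMod k} (hi : i ∈ S) :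
    (DSub hk S).neighborSet (bb i) = {aa i, vv (i + 1)} := by
  ext q
  rcases cases_vtx hk q with hq | hq | hq <;> rw [hq] <;>
    simp only [Subgraph.mem_neighborSet, Set.mem_insert_iff, Set.mem_singleton_iff]
  · rw [DAdj_bb_vv hk]
    constructor
    · rintro ⟨h0, -⟩; right; rw [h0]
    · rintro (h | h)
      · exact absurd h vv_ne_aa
      · exact ⟨vv_eq_vv.mp h, hi⟩
  · rw [Subgraph.adj_comm, DAdj_aa_bb hk]
    constructor
    · rintro ⟨rfl, -⟩; left; rfl
    · rintro (h | h)
      · exact ⟨(aa_eq_aa.mp h).symm ▸ rfl, by rwa [aa_eq_aa.mp h]⟩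
      · exact absurd h aa_ne_vv
  · constructor
    · intro h; exact absurd h (not_DAdj_bb_bb hk)
    · rintro (h | h)
      · exact absurd h bb_ne_aa
      · exact absurd h bb_ne_vv

lemma DSub_nbr_vv {S : Finset (ZMod k)} {i : ZMod k} :
    (DSub hk S).neighborSet (vv i) =
      {(if (i - 1) ∈ S then bb (i - 1) else vv (i - 1)), (if i ∈ S then aa i else vv (i + 1))} := by
  classical
  ext q
  rcases cases_vtx hk q with hq | hq | hq <;> rw [hq] <;>
    simp only [Subgraph.mem_neighborSet, Set.mem_insert_iff, Set.mem_singleton_iff]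
  · rw [DAdj_vv_vv hk]
    constructor
    · rintro (⟨h0, hi⟩ | ⟨hi, hj⟩)
      · right; rw [h0, if_neg hi]
      · left
        have : q.1 = i - 1 := eq_sub_of_add_eq hi.symm
        rw [this] at hj ⊢
        rw [if_neg hj]
    · rintro (h | h)
      · by_cases hs : (i - 1) ∈ S
        · rw [if_pos hs] at h; exact absurd h vv_ne_bb
        · rw [if_neg hs] at h
          right
          rw [vv_eq_vv.mp h]
          exact ⟨by rw [sub_add_cancel], hs⟩
      · by_cases hs : i ∈ S
        · rw [if_pos hs] at h; exact absurd h vv_ne_aa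
        · rw [if_neg hs] at h
          left
          exact ⟨vv_eq_vv.mp h, hs⟩
  · rw [DAdj_vv_aa hk]
    constructor
    · rintro ⟨h0, hi⟩
      right; rw [h0, if_pos hi]
    · rintro (h | h)
      · by_cases hs : (i - 1) ∈ S
        · rw [if_pos hs] at h; exact absurd h aa_ne_bb
        · rw [if_neg hs] at h; exact absurd h aa_ne_vv
      · by_cases hs : i ∈ S
        · rw [if_pos hs] at h; exact ⟨aa_eq_aa.mp h, hs⟩
        · rw [if_neg hs] at h; exact absurd h aa_ne_vv
  · rw [Subgraph.adj_comm, DAdj_bb_vv hk]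
    constructor
    · rintro ⟨hi, hj⟩
      have : q.1 = i - 1 := eq_sub_of_add_eq hi.symm
      rw [this] at hj ⊢
      left; rw [if_pos hj]
    · rintro (h | h)
      · by_cases hs : (i - 1) ∈ S
        · rw [if_pos hs] at h
          rw [bb_eq_bb.mp h]
          exact ⟨by rw [sub_add_cancel], hs⟩
        · rw [if_neg hs] at h; exact absurd h bb_ne_vv
      · by_cases hs : i ∈ S
        · rw [if_pos hs] at h; exact absurd h bb_ne_aa
        · rw [if_neg hs] at h; exact absurd h bb_ne_vv

lemma DSub_deg {S : Finset (ZMod k)} :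
    ∀ p ∈ (DSub hk S).verts, ((DSub hk S).neighborSet p).ncard = 2 := by
  classical
  intro p hp
  rcases cases_vtx hk p with hq | hq | hq <;> rw [hq]
  · rw [DSub_nbr_vv hk]
    refine Set.ncard_pair ?_
    by_cases h1 : (p.1 - 1) ∈ S <;> by_cases h2 : p.1 ∈ S <;>
      simp only [if_pos, if_neg, h1, h2, if_true, if_false]
    · exact bb_ne_aa
    · exact bb_ne_vv
    · exact vv_ne_aa
    · rw [ne_eq, vv_eq_vv]
      intro h
      exact two_ne_zero' hk (by linear_combination h.symm)
  · have hi : p.1 ∈ S := by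
      rw [hq] at hp
      exact (DSub_aa_mem hk).mp hp
    rw [DSub_nbr_aa hk hi]
    exact Set.ncard_pair vv_ne_bb
  · have hi : p.1 ∈ S := by
      rw [hq] at hp
      exact (DSub_bb_mem hk).mp hp
    rw [DSub_nbr_bb hk hi]
    exact Set.ncard_pair aa_ne_vv

end DSubDeg


section DSubConn

omit hk in
lemma reach_step {V : Type*} {G : SimpleGraph V} {H : G.Subgraph} {p q : V}
    (hp : p ∈ H.verts) (hq : q ∈ H.verts) (h : H.Adj p q) :
    H.coe.Reachable ⟨p, hp⟩ ⟨q, hq⟩ :=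
  SimpleGraph.Adj.reachable (by rwa [Subgraph.coe_adj])

lemma DSub_step {S : Finset (ZMod k)} (i : ZMod k) :
    (DSub hk S).coe.Reachable ⟨vv i, DSub_vv_mem hk⟩ ⟨vv (i + 1), DSub_vv_mem hk⟩ := by
  classical
  by_cases hs : i ∈ S
  · have h1 : aa i ∈ (DSub hk S).verts := (DSub_aa_mem hk).mpr hs
    have h2 : bb i ∈ (DSub hk S).verts := (DSub_bb_mem hk).mpr hs
    refine (reach_step _ h1 ((DAdj_vv_aa hk).mpr ⟨rfl, hs⟩)).trans ?_
    refine (reach_step h1 h2 ((DAdj_aa_bb hk).mpr ⟨rfl, hs⟩)).trans ?_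
    exact reach_step h2 _ ((DAdj_bb_vv hk).mpr ⟨rfl, hs⟩)
  · exact reach_step _ _ ((DAdj_vv_vv hk).mpr (Or.inl ⟨rfl, hs⟩))

lemma DSub_reach_nat {S : Finset (ZMod k)} (n : ℕ) :
    (DSub hk S).coe.Reachable ⟨vv 0, DSub_vv_mem hk⟩ ⟨vv (n : ZMod k), DSub_vv_mem hk⟩ := by
  induction n with
  | zero =>
      rw [show ((0 : ℕ) : ZMod k) = 0 by push_cast; ring]

  | succ n ih =>
      have : ((n + 1 : ℕ) : ZMod k) = (n : ZMod k) + 1 := by push_cast; ring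
      rw [show (⟨vv ((n + 1 : ℕ) : ZMod k), DSub_vv_mem hk⟩ :
            (DSub hk S).verts) = ⟨vv ((n : ZMod k) + 1), DSub_vv_mem hk⟩ by
          simp [this]]
      exact ih.trans (DSub_step hk _)

lemma DSub_reach_all {S : Finset (ZMod k)} (u : (DSub hk S).verts) :
    (DSub hk S).coe.Reachable ⟨vv 0, DSub_vv_mem hk⟩ u := by
  classical
  haveI : NeZero k := ⟨by omega⟩
  obtain ⟨p, hp⟩ := u
  have hvv : ∀ i : ZMod k, (DSub hk S).coe.Reachable ⟨vv 0, DSub_vv_mem hk⟩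
      ⟨vv i, DSub_vv_mem hk⟩ := by
    intro i
    have : ((i.val : ℕ) : ZMod k) = i := by
      rw [ZMod.natCast_val, ZMod.cast_id]
    rw [show (⟨vv i, DSub_vv_mem hk⟩ : (DSub hk S).verts)
        = ⟨vv ((i.val : ℕ) : ZMod k), DSub_vv_mem hk⟩ by simp [this]]
    exact DSub_reach_nat hk _
  rcases cases_vtx hk p with hq | hq | hq
  · convert hvv p.1 using 2
  · have hs : p.1 ∈ S := by rw [hq] at hp; exact (DSub_aa_mem hk).mp hp
    have := (hvv p.1).trans
      (reach_step _ (hq ▸ hp) ((DAdj_vv_aa hk).mpr ⟨rfl, hs⟩))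
    convert this using 2
  · have hs : p.1 ∈ S := by rw [hq] at hp; exact (DSub_bb_mem hk).mp hp
    have h1 : aa p.1 ∈ (DSub hk S).verts := (DSub_aa_mem hk).mpr hs
    have := ((hvv p.1).trans
      (reach_step _ h1 ((DAdj_vv_aa hk).mpr ⟨rfl, hs⟩))).trans
      (reach_step h1 (hq ▸ hp) ((DAdj_aa_bb hk).mpr ⟨rfl, hs⟩))
    convert this using 2

lemma DSub_connected {S : Finset (ZMod k)} : (DSub hk S).coe.Connected := by
  rw [SimpleGraph.connected_iff]
  refine ⟨fun u v => (DSub_reach_all hk u).symm.trans (DSub_reach_all hk v), ⟨⟨vv 0, DSub_vv_mem hk⟩⟩⟩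

lemma DSub_isCycle {S : Finset (ZMod k)} : (DSub hk S).IsCycleSub :=
  ⟨⟨vv 0, DSub_vv_mem hk⟩, DSub_connected hk, DSub_deg hk⟩

lemma DSub_verts_ncard {S : Finset (ZMod k)} :
    (DSub hk S).verts.ncard = k + 2 * S.card := by
  classical
  haveI : NeZero k := ⟨by omega⟩
  have hv : (DSub hk S).verts = Set.range vv ∪ (aa '' ↑S ∪ bb '' ↑S) := by
    ext p
    rw [DSub_verts_mem hk]
    constructor
    · intro hp
      rcases cases_vtx hk p with hq | hq | hq
      · exact Or.inl ⟨p.1, hq.symm⟩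
      · rcases hp with hp | hp
        · rw [hq] at hp ⊢; exact absurd hp (by simp [aa])
        · exact Or.inr (Or.inl ⟨p.1, hp, hq.symm⟩)
      · rcases hp with hp | hp
        · rw [hq] at hp ⊢; exact absurd hp (by simp [bb])
        · exact Or.inr (Or.inr ⟨p.1, hp, hq.symm⟩)
    · rintro (⟨j, rfl⟩ | ⟨j, hj, rfl⟩ | ⟨j, hj, rfl⟩)
      · exact Or.inl rfl
      · exact Or.inr hj
      · exact Or.inr hj
  rw [hv]
  have d1 : Disjoint (Set.range (vv (k := k))) (aa '' ↑S ∪ bb '' ↑S) := by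
    rw [Set.disjoint_left]
    rintro p ⟨j, rfl⟩ (⟨m, -, hm⟩ | ⟨m, -, hm⟩)
    · exact vv_ne_aa hm.symm
    · exact vv_ne_bb hm.symm
  have d2 : Disjoint (aa '' (↑S : Set (ZMod k))) (bb '' ↑S) := by
    rw [Set.disjoint_left]
    rintro p ⟨j, -, rfl⟩ ⟨m, -, hm⟩
    exact aa_ne_bb hm.symm
  rw [Set.ncard_union_eq d1 (Set.toFinite _) (Set.toFinite _),
    Set.ncard_union_eq d2 (Set.toFinite _) (Set.toFinite _)]
  have hr : (Set.range (vv (k := k))).ncard = k := by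
    rw [← Set.image_univ, Set.ncard_image_of_injective _ vv_inj, Set.ncard_univ,
      Nat.card_eq_fintype_card, ZMod.card]
  rw [hr, Set.ncard_image_of_injective _ aa_inj, Set.ncard_image_of_injective _ bb_inj,
    Set.ncard_coe_finset]
  ring

end DSubConn


section CFourDef

def CRel (p q : ZMod k × Fin 3) : Prop :=
  (p = vv 0 ∧ q = vv 1) ∨ (p = vv 0 ∧ q = aa 0) ∨ (p = aa 0 ∧ q = bb 0) ∨ (p = bb 0 ∧ q = vv 1)

def CFour : (RGraph k).Subgraph where
  verts := {vv 0, vv 1, aa 0, bb 0}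
  Adj p q := CRel p q ∨ CRel q p
  adj_sub h := by
    have h1 : (RGraph k).Adj (vv 0) (vv 1) := (adj_vv_vv hk).mpr (Or.inl (zero_add 1).symm)
    have h2 : (RGraph k).Adj (vv 0) (aa 0) := (adj_vv_aa hk).mpr rfl
    have h3 : (RGraph k).Adj (aa 0) (bb 0) := (adj_aa_bb hk).mpr rfl
    have h4 : (RGraph k).Adj (bb 0) (vv 1) := ((adj_vv_bb hk).mpr (zero_add 1).symm).symm
    rcases h with (⟨rfl, rfl⟩ | ⟨rfl, rfl⟩ | ⟨rfl, rfl⟩ | ⟨rfl, rfl⟩) |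
      (⟨rfl, rfl⟩ | ⟨rfl, rfl⟩ | ⟨rfl, rfl⟩ | ⟨rfl, rfl⟩) <;>
      first | assumption | (exact SimpleGraph.Adj.symm (by assumption))
  edge_vert {p q} h := by
    rcases h with (⟨rfl, -⟩ | ⟨rfl, -⟩ | ⟨rfl, -⟩ | ⟨rfl, -⟩) |
      (⟨-, rfl⟩ | ⟨-, rfl⟩ | ⟨-, rfl⟩ | ⟨-, rfl⟩) <;> simp [Set.mem_insert_iff]
  symm := ⟨fun p q h => h.symm⟩

lemma CFour_adj_iff {p q : ZMod k × Fin 3} :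
    (CFour hk).Adj p q ↔ CRel p q ∨ CRel q p := Iff.rfl

lemma CFour_verts : (CFour hk).verts = {vv 0, vv 1, aa 0, bb 0} := rfl

lemma vv0_ne_vv1 : (vv 0 : ZMod k × Fin 3) ≠ vv 1 := by
  rw [ne_eq, vv_eq_vv]
  exact fun h => one_ne_zero' hk h.symm

lemma CFour_ncard : (CFour hk).verts.ncard = 4 := by
  classical
  rw [CFour_verts]
  rw [ncard_subset_four (vv0_ne_vv1 hk) vv_ne_aa vv_ne_bb vv_ne_aa vv_ne_bb aa_ne_bb
    (subset_refl _)]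
  simp [Set.mem_insert_iff]

lemma CFour_nbr_vv0 : (CFour hk).neighborSet (vv 0) = {vv 1, aa 0} := by
  have hne := vv0_ne_vv1 hk
  ext q
  simp only [Subgraph.mem_neighborSet, CFour_adj_iff, CRel, Set.mem_insert_iff,
    Set.mem_singleton_iff]
  constructor
  · rintro ((⟨h1, h2⟩ | ⟨h1, h2⟩ | ⟨h1, h2⟩ | ⟨h1, h2⟩) |
        (⟨h1, h2⟩ | ⟨h1, h2⟩ | ⟨h1, h2⟩ | ⟨h1, h2⟩)) <;>
      simp_all [vv, aa, bb, Prod.ext_iff]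
  · rintro (rfl | rfl) <;> simp

lemma CFour_nbr_vv1 : (CFour hk).neighborSet (vv 1) = {vv 0, bb 0} := by
  have hne := vv0_ne_vv1 hk
  ext q
  simp only [Subgraph.mem_neighborSet, CFour_adj_iff, CRel, Set.mem_insert_iff,
    Set.mem_singleton_iff]
  constructor
  · rintro ((⟨h1, h2⟩ | ⟨h1, h2⟩ | ⟨h1, h2⟩ | ⟨h1, h2⟩) |
        (⟨h1, h2⟩ | ⟨h1, h2⟩ | ⟨h1, h2⟩ | ⟨h1, h2⟩)) <;>
      simp_all [vv, aa, bb, Prod.ext_iff]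
  · rintro (rfl | rfl) <;> simp

lemma CFour_nbr_aa0 : (CFour hk).neighborSet (aa 0) = {vv 0, bb 0} := by
  have hne := vv0_ne_vv1 hk
  ext q
  simp only [Subgraph.mem_neighborSet, CFour_adj_iff, CRel, Set.mem_insert_iff,
    Set.mem_singleton_iff]
  constructor
  · rintro ((⟨h1, h2⟩ | ⟨h1, h2⟩ | ⟨h1, h2⟩ | ⟨h1, h2⟩) |
        (⟨h1, h2⟩ | ⟨h1, h2⟩ | ⟨h1, h2⟩ | ⟨h1, h2⟩)) <;>
      simp_all [vv, aa, bb, Prod.ext_iff]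
  · rintro (rfl | rfl) <;> simp

lemma CFour_nbr_bb0 : (CFour hk).neighborSet (bb 0) = {aa 0, vv 1} := by
  have hne := vv0_ne_vv1 hk
  ext q
  simp only [Subgraph.mem_neighborSet, CFour_adj_iff, CRel, Set.mem_insert_iff,
    Set.mem_singleton_iff]
  constructor
  · rintro ((⟨h1, h2⟩ | ⟨h1, h2⟩ | ⟨h1, h2⟩ | ⟨h1, h2⟩) |
        (⟨h1, h2⟩ | ⟨h1, h2⟩ | ⟨h1, h2⟩ | ⟨h1, h2⟩)) <;>
      simp_all [vv, aa, bb, Prod.ext_iff]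
  · rintro (rfl | rfl) <;> simp

lemma CFour_deg : ∀ p ∈ (CFour hk).verts, ((CFour hk).neighborSet p).ncard = 2 := by
  intro p hp
  rcases hp with rfl | rfl | rfl | rfl
  · rw [CFour_nbr_vv0 hk]; exact Set.ncard_pair vv_ne_aa
  · rw [CFour_nbr_vv1 hk]; exact Set.ncard_pair vv_ne_bb
  · rw [CFour_nbr_aa0 hk]; exact Set.ncard_pair vv_ne_bb.symm.symm
  · rw [CFour_nbr_bb0 hk]; exact Set.ncard_pair aa_ne_vv

lemma CFour_connected : (CFour hk).coe.Connected := by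
  rw [SimpleGraph.connected_iff]
  have m0 : vv 0 ∈ (CFour hk).verts := Or.inl rfl
  have m1 : vv 1 ∈ (CFour hk).verts := Or.inr (Or.inl rfl)
  have ma : aa 0 ∈ (CFour hk).verts := Or.inr (Or.inr (Or.inl rfl))
  have mb : bb 0 ∈ (CFour hk).verts := Or.inr (Or.inr (Or.inr rfl))
  have r1 : (CFour hk).coe.Reachable ⟨vv 0, m0⟩ ⟨vv 1, m1⟩ :=
    reach_step m0 m1 (Or.inl (Or.inl ⟨rfl, rfl⟩))
  have ra : (CFour hk).coe.Reachable ⟨vv 0, m0⟩ ⟨aa 0, ma⟩ :=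
    reach_step m0 ma (Or.inl (Or.inr (Or.inl ⟨rfl, rfl⟩)))
  have rb : (CFour hk).coe.Reachable ⟨vv 0, m0⟩ ⟨bb 0, mb⟩ :=
    ra.trans (reach_step ma mb (Or.inl (Or.inr (Or.inr (Or.inl ⟨rfl, rfl⟩)))))
  have key : ∀ u : (CFour hk).verts, (CFour hk).coe.Reachable ⟨vv 0, m0⟩ u := by
    rintro ⟨p, hp | hp | hp | hp⟩
    · subst hp; exact Reachable.refl _
    · subst hp; exact r1
    · subst hp; exact ra
    · subst hp; exact rb
  exact ⟨fun u v => (key u).symm.trans (key v), ⟨⟨vv 0, m0⟩⟩⟩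

lemma CFour_isCycle : (CFour hk).IsCycleSub :=
  ⟨⟨vv 0, Or.inl rfl⟩, CFour_connected hk, CFour_deg hk⟩

lemma CFour_adj_ab : (CFour hk).Adj (aa 0) (bb 0) := Or.inl (Or.inr (Or.inr (Or.inl ⟨rfl, rfl⟩)))

end CFourDef


section Classify

omit hk in
lemma closed_verts {V : Type*} {G : SimpleGraph V} {H : G.Subgraph} (hconn : H.coe.Connected)
    {A : Set V} (hA : ∀ p q, p ∈ A → H.Adj p q → q ∈ A) {p q : V}
    (hp : p ∈ H.verts) (hq : q ∈ H.verts) (hpA : p ∈ A) : q ∈ A := by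
  obtain ⟨w⟩ := hconn.preconnected ⟨p, hp⟩ ⟨q, hq⟩
  have main : ∀ (u v : H.verts) (_ : H.coe.Walk u v), u.1 ∈ A → v.1 ∈ A := by
    intro u v w
    induction w with
    | nil => exact id
    | cons h wtl ih =>
        intro hu
        exact ih (hA _ _ hu (by rwa [Subgraph.coe_adj] at h))
  exact main _ _ w hpA

variable {H : (RGraph k).Subgraph}

lemma slot_one_sub (hdeg : ∀ v ∈ H.verts, (H.neighborSet v).ncard = 2) {i : ZMod k}
    (h : slot H i = 1) (hd : aa i ∉ H.verts) : H.Adj (vv i) (vv (i + 1)) := by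
  classical
  unfold slot at h
  rw [if_neg hd] at h
  by_contra hc
  rw [if_neg hc] at h
  omega

lemma slot_one_det (hdeg : ∀ v ∈ H.verts, (H.neighborSet v).ncard = 2) {i : ZMod k}
    (h : slot H i = 1) (hd : aa i ∈ H.verts) : ¬ H.Adj (vv i) (vv (i + 1)) := by
  classical
  unfold slot at h
  rw [if_pos hd] at h
  intro hc
  rw [if_pos hc] at h
  omega

/-- Case A of the classification: if all `vv i` belong to `H`, then `H = DSub S`. -/
lemma classifyA (hkodd : Odd k) (hcyc : H.IsCycleSub) (he : H.Adj (aa 0) (bb 0))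
    (hall : ∀ i : ZMod k, vv i ∈ H.verts) :
    ∃ S : Finset (ZMod k), 0 ∈ S ∧ H = DSub hk S := by
  classical
  haveI : NeZero k := ⟨by omega⟩
  obtain ⟨-, hconn, hdeg⟩ := hcyc
  have ha0 : aa 0 ∈ H.verts := H.edge_vert he
  have key : ∀ i : ZMod k, slot H i + slot H (i + 1) = 2 := by
    intro i
    have := deg_vv hk hdeg (hall (i + 1))
    rwa [add_sub_cancel_right] at this
  have heven : ∀ n : ℕ, slot H ((2 * n : ℕ) : ZMod k) = slot H 0 := by
    intro n
    induction n with
    | zero => norm_num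
    | succ n ih =>
        have e1 := key ((2 * n : ℕ) : ZMod k)
        have e2 := key (((2 * n : ℕ) : ZMod k) + 1)
        have hc : ((2 * (n + 1) : ℕ) : ZMod k) = (((2 * n : ℕ) : ZMod k) + 1) + 1 := by
          push_cast; ring
        rw [hc]
        omega
  obtain ⟨m, hm⟩ := hkodd
  have hslot0 : slot H 0 = 1 := by
    have h2m := heven m
    have e1 := key ((2 * m : ℕ) : ZMod k)
    have hc : ((2 * m : ℕ) : ZMod k) + 1 = 0 := by
      have h0 : ((2 * m + 1 : ℕ) : ZMod k) = 0 := by rw [← hm, ZMod.natCast_self]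
      push_cast at h0 ⊢
      linear_combination h0
    rw [hc] at e1
    omega
  have hslotn : ∀ n : ℕ, slot H (n : ZMod k) = 1 := by
    intro n
    induction n with
    | zero => simpa using hslot0
    | succ n ih =>
        have := key (n : ZMod k)
        have hc : ((n + 1 : ℕ) : ZMod k) = (n : ZMod k) + 1 := by push_cast; ring
        rw [hc]
        omega
  have hslot : ∀ i : ZMod k, slot H i = 1 := by
    intro i
    have : ((i.val : ℕ) : ZMod k) = i := by rw [ZMod.natCast_val, ZMod.cast_id]
    rw [← this]
    exact hslotn i.val
  set S : Finset (ZMod k) := Finset.univ.filter (fun i => aa i ∈ H.verts) with hS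
  have hmemS : ∀ i : ZMod k, i ∈ S ↔ aa i ∈ H.verts := by
    intro i; simp [hS]
  refine ⟨S, (hmemS 0).mpr ha0, ?_⟩
  apply Subgraph.ext
  · ext p
    rw [DSub_verts_mem hk]
    rcases cases_vtx hk p with hq | hq | hq <;> rw [hq]
    · constructor
      · intro; exact Or.inl rfl
      · intro; exact hall p.1
    · constructor
      · intro h; exact Or.inr ((hmemS p.1).mpr h)
      · rintro (h | h)
        · exact absurd h (by simp [aa])
        · exact (hmemS p.1).mp h
    · constructor
      · intro h
        exact Or.inr ((hmemS p.1).mpr ((bb_mem_iff hk hdeg).mp h))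
      · rintro (h | h)
        · exact absurd h (by simp [bb])
        · exact (bb_mem_iff hk hdeg).mpr ((hmemS p.1).mp h)
  · funext p q
    apply propext
    constructor
    · intro h
      have hg := H.adj_sub h
      rcases cases_vtx hk p with hp | hp | hp <;> rcases cases_vtx hk q with hq | hq | hq <;>
          rw [hp, hq] at h hg ⊢
      · rcases (adj_vv_vv hk).mp hg with h1 | h1
        · have hd : aa p.1 ∉ H.verts := by
            intro hd
            exact slot_one_det hk hdeg (hslot p.1) hd (h1 ▸ h)
          exact (DAdj_vv_vv hk).mpr (Or.inl ⟨h1, fun hc => hd ((hmemS p.1).mp hc)⟩)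
        · have hd : aa q.1 ∉ H.verts := by
            intro hd
            exact slot_one_det hk hdeg (hslot q.1) hd (h1 ▸ h.symm)
          exact (DAdj_vv_vv hk).mpr (Or.inr ⟨h1, fun hc => hd ((hmemS q.1).mp hc)⟩)
      · have h1 := (adj_vv_aa hk).mp hg
        refine (DAdj_vv_aa hk).mpr ⟨h1, (hmemS p.1).mpr ?_⟩
        rw [← h1]
        exact h.snd_mem
      · have h1 := (adj_vv_bb hk).mp hg
        refine ((DAdj_bb_vv hk).mpr ⟨h1, (hmemS q.1).mpr ?_⟩).symm
        exact (bb_mem_iff hk hdeg).mp h.snd_mem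
      · have h1 := (adj_vv_aa hk).mp hg.symm
        refine ((DAdj_vv_aa hk).mpr ⟨h1, (hmemS q.1).mpr ?_⟩).symm
        rw [← h1]
        exact h.fst_mem
      · exact absurd hg (not_adj_aa_aa hk)
      · have h1 := (adj_aa_bb hk).mp hg
        exact (DAdj_aa_bb hk).mpr ⟨h1, (hmemS p.1).mpr h.fst_mem⟩
      · have h1 := (adj_vv_bb hk).mp hg.symm
        refine (DAdj_bb_vv hk).mpr ⟨h1, (hmemS p.1).mpr ?_⟩
        exact (bb_mem_iff hk hdeg).mp h.fst_mem
      · have h1 := (adj_aa_bb hk).mp hg.symm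
        exact ((DAdj_aa_bb hk).mpr ⟨h1, (hmemS q.1).mpr h.snd_mem⟩).symm
      · exact absurd hg (not_adj_bb_bb hk)
    · intro h
      rcases cases_vtx hk p with hp | hp | hp <;> rcases cases_vtx hk q with hq | hq | hq <;>
          rw [hp, hq] at h ⊢
      · rcases (DAdj_vv_vv hk).mp h with ⟨h1, h2⟩ | ⟨h1, h2⟩
        · have hd : aa p.1 ∉ H.verts := fun hc => h2 ((hmemS p.1).mpr hc)
          rw [h1]
          exact slot_one_sub hk hdeg (hslot p.1) hd
        · have hd : aa q.1 ∉ H.verts := fun hc => h2 ((hmemS q.1).mpr hc)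
          rw [h1]
          exact (slot_one_sub hk hdeg (hslot q.1) hd).symm
      · obtain ⟨h1, h2⟩ := (DAdj_vv_aa hk).mp h
        rw [h1]
        exact ((force_aa hk hdeg ((hmemS p.1).mp (h1 ▸ h2))).1).symm
      · obtain ⟨h1, h2⟩ := (DAdj_bb_vv hk).mp h.symm
        have hb : bb q.1 ∈ H.verts := (bb_mem_iff hk hdeg).mpr ((hmemS q.1).mp h2)
        rw [h1]
        exact ((force_bb hk hdeg hb).2).symm
      · obtain ⟨h1, h2⟩ := (DAdj_vv_aa hk).mp h.symm
        rw [h1]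
        exact (force_aa hk hdeg ((hmemS q.1).mp (h1 ▸ h2))).1
      · exact absurd h (not_DAdj_aa_aa hk)
      · obtain ⟨h1, h2⟩ := (DAdj_aa_bb hk).mp h
        rw [h1]
        exact (force_aa hk hdeg ((hmemS p.1).mp h2)).2
      · obtain ⟨h1, h2⟩ := (DAdj_bb_vv hk).mp h
        have hb : bb p.1 ∈ H.verts := (bb_mem_iff hk hdeg).mpr ((hmemS p.1).mp h2)
        rw [h1]
        exact (force_bb hk hdeg hb).2
      · obtain ⟨h1, h2⟩ := (DAdj_aa_bb hk).mp h.symm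
        rw [h1]
        exact ((force_aa hk hdeg ((hmemS q.1).mp h2)).2).symm
      · exact absurd h (not_DAdj_bb_bb hk)

end Classify


section ClassifyB
variable {H : (RGraph k).Subgraph}

lemma slot_zero (hdeg : ∀ v ∈ H.verts, (H.neighborSet v).ncard = 2) {i : ZMod k}
    (h : slot H i = 0) : ¬ H.Adj (vv i) (vv (i + 1)) ∧ aa i ∉ H.verts := by
  classical
  unfold slot at h
  constructor
  · intro hc
    rw [if_pos hc] at h
    omega
  · intro hc
    rw [if_pos hc] at h
    omega

lemma classifyB (hcyc : H.IsCycleSub) (he : H.Adj (aa 0) (bb 0))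
    (hnot : ¬ ∀ i : ZMod k, vv i ∈ H.verts) : H = CFour hk := by
  classical
  haveI : NeZero k := ⟨by omega⟩
  obtain ⟨-, hconn, hdeg⟩ := hcyc
  push_neg at hnot
  obtain ⟨j, hj⟩ := hnot
  have ha0 : aa 0 ∈ H.verts := H.edge_vert he
  have hb0 : bb 0 ∈ H.verts := he.snd_mem
  have hv0 : vv 0 ∈ H.verts := ((force_aa hk hdeg ha0).1).snd_mem
  have hv1 : vv 1 ∈ H.verts := by
    have h2 := (force_bb hk hdeg hb0).2
    rw [zero_add] at h2
    exact h2.snd_mem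
  have key : ∀ i : ZMod k, vv i ∈ H.verts → slot H (i - 1) + slot H i = 2 :=
    fun i hi => deg_vv hk hdeg hi
  have he0 : H.Adj (vv 0) (vv (0 + 1)) := by
    by_contra hc
    have hs0 : slot H 0 = 1 := by
      unfold slot
      rw [if_neg hc, if_pos ha0]
    have allmem : ∀ n : ℕ, vv (n : ZMod k) ∈ H.verts ∧ slot H (n : ZMod k) = 1 := by
      intro n
      induction n with
      | zero => exact ⟨by simpa using hv0, by simpa using hs0⟩
      | succ n ih =>
          obtain ⟨h1, h2⟩ := ih
          have hmem : vv ((n : ZMod k) + 1) ∈ H.verts :=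
            (slot_pos_mem hk hdeg (by omega)).2
          have hkey := key ((n : ZMod k) + 1) hmem
          rw [add_sub_cancel_right] at hkey
          have hc : ((n + 1 : ℕ) : ZMod k) = (n : ZMod k) + 1 := by push_cast; ring
          rw [hc]
          exact ⟨hmem, by omega⟩
    have := (allmem j.val).1
    rw [ZMod.natCast_val, ZMod.cast_id] at this
    exact hj this
  have hs0 : slot H 0 = 2 := by
    unfold slot
    rw [if_pos he0, if_pos ha0]
  have hs1 : slot H 1 = 0 := by
    have := key 1 hv1
    rw [sub_self] at this
    omega
  have hsm : slot H (0 - 1) = 0 := by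
    have := key 0 hv0
    omega
  set A : Set (ZMod k × Fin 3) := {vv 0, vv 1, aa 0, bb 0} with hA
  have hclosed : ∀ p q : ZMod k × Fin 3, p ∈ A → H.Adj p q → q ∈ A := by
    rintro p q (rfl | rfl | rfl | rfl) hpq
    · rcases nbr_vv hk (H.adj_sub hpq) with h | h | h | h <;> rw [h] at hpq ⊢
      · rw [zero_add]; exact Or.inr (Or.inl rfl)
      · exfalso
        have : H.Adj (vv (0 - 1)) (vv ((0 - 1) + 1)) := by
          rw [sub_add_cancel]; exact hpq.symm
        exact (slot_zero hk hdeg hsm).1 this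
      · exact Or.inr (Or.inr (Or.inl rfl))
      · exfalso
        exact (slot_zero hk hdeg hsm).2 ((bb_mem_iff hk hdeg).mp hpq.snd_mem)
    · rcases nbr_vv hk (H.adj_sub hpq) with h | h | h | h <;> rw [h] at hpq ⊢
      · exact absurd hpq (slot_zero hk hdeg hs1).1
      · rw [show (1 : ZMod k) - 1 = 0 by ring]; exact Or.inl rfl
      · exact absurd hpq.snd_mem (slot_zero hk hdeg hs1).2
      · rw [show (1 : ZMod k) - 1 = 0 by ring]; exact Or.inr (Or.inr (Or.inr rfl))
    · rcases nbr_aa hk (H.adj_sub hpq) with h | h <;> rw [h]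
      · exact Or.inl rfl
      · exact Or.inr (Or.inr (Or.inr rfl))
    · rcases nbr_bb hk (H.adj_sub hpq) with h | h <;> rw [h]
      · exact Or.inr (Or.inr (Or.inl rfl))
      · rw [zero_add]; exact Or.inr (Or.inl rfl)
  have hsub : H.verts ⊆ A := fun q hq =>
    closed_verts hconn hclosed hv0 hq (Or.inl rfl)
  have hsup : A ⊆ H.verts := by
    rintro p (rfl | rfl | rfl | rfl)
    exacts [hv0, hv1, ha0, hb0]
  have h01 : ((0 : ZMod k)) ≠ 1 := fun h => one_ne_zero' hk h.symm
  apply Subgraph.ext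
  · exact subset_antisymm hsub hsup
  · funext p q
    apply propext
    constructor
    · intro h
      have hp := hsub (H.edge_vert h)
      have hq := hsub h.snd_mem
      have hg := H.adj_sub h
      rcases hp with rfl | rfl | rfl | rfl <;> rcases hq with rfl | rfl | rfl | rfl
      · exact absurd rfl hg.ne
      · exact Or.inl (Or.inl ⟨rfl, rfl⟩)
      · exact Or.inl (Or.inr (Or.inl ⟨rfl, rfl⟩))
      · exact absurd ((adj_vv_bb hk).mp hg) (by rw [zero_add]; exact h01)
      · exact Or.inr (Or.inl ⟨rfl, rfl⟩)
      · exact absurd rfl hg.ne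
      · exact absurd ((adj_vv_aa hk).mp hg) h01
      · exact Or.inr (Or.inr (Or.inr (Or.inr ⟨rfl, rfl⟩)))
      · exact Or.inr (Or.inr (Or.inl ⟨rfl, rfl⟩))
      · exact absurd ((adj_vv_aa hk).mp hg.symm) h01
      · exact absurd hg (not_adj_aa_aa hk)
      · exact Or.inl (Or.inr (Or.inr (Or.inl ⟨rfl, rfl⟩)))
      · exact absurd ((adj_vv_bb hk).mp hg.symm) (by rw [zero_add]; exact h01)
      · exact Or.inl (Or.inr (Or.inr (Or.inr ⟨rfl, rfl⟩)))
      · exact Or.inr (Or.inr (Or.inr (Or.inl ⟨rfl, rfl⟩)))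
      · exact absurd hg (not_adj_bb_bb hk)
    · intro h
      have hab := (force_aa hk hdeg ha0)
      have hbv := (force_bb hk hdeg hb0).2
      rw [zero_add] at hbv
      have he0' : H.Adj (vv 0) (vv 1) := by rw [← zero_add (1 : ZMod k)]; exact he0
      rcases h with (⟨rfl, rfl⟩ | ⟨rfl, rfl⟩ | ⟨rfl, rfl⟩ | ⟨rfl, rfl⟩) |
        (⟨rfl, rfl⟩ | ⟨rfl, rfl⟩ | ⟨rfl, rfl⟩ | ⟨rfl, rfl⟩)
      exacts [he0', hab.1.symm, he, hbv, he0'.symm, hab.1, he.symm, hbv.symm]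

end ClassifyB


section Final

lemma DSub_inj {S T : Finset (ZMod k)} (h : DSub hk S = DSub hk T) : S = T := by
  ext i
  constructor <;> intro hi
  · have h1 : aa i ∈ (DSub hk S).verts := (DSub_aa_mem hk).mpr hi
    rw [h] at h1
    exact (DSub_aa_mem hk).mp h1
  · have h1 : aa i ∈ (DSub hk T).verts := (DSub_aa_mem hk).mpr hi
    rw [← h] at h1
    exact (DSub_aa_mem hk).mp h1

lemma classify (hkodd : Odd k) {H : (RGraph k).Subgraph} (hcyc : H.IsCycleSub)
    (he : H.Adj (aa 0) (bb 0)) :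
    (∃ S : Finset (ZMod k), 0 ∈ S ∧ H = DSub hk S) ∨ H = CFour hk := by
  by_cases hall : ∀ i : ZMod k, vv i ∈ H.verts
  · exact Or.inl (classifyA hk hkodd hcyc he hall)
  · exact Or.inr (classifyB hk hcyc he hall)

lemma zero_mem_card (hkodd : Odd k) :
    {S : Finset (ZMod k) | (0 : ZMod k) ∈ S}.ncard = 2 ^ (k - 1) := by
  classical
  haveI : NeZero k := ⟨by omega⟩
  rw [show {S : Finset (ZMod k) | (0 : ZMod k) ∈ S}
      = ↑(Finset.univ.filter (fun S : Finset (ZMod k) => (0 : ZMod k) ∈ S)) by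
    ext S; simp]
  rw [Set.ncard_coe_finset]
  have hcard : (Finset.univ.filter (fun S : Finset (ZMod k) => (0 : ZMod k) ∈ S)).card
      = ((Finset.univ.erase (0 : ZMod k)).powerset).card := by
    apply Finset.card_bij' (fun S _ => S.erase (0 : ZMod k))
      (fun T _ => insert (0 : ZMod k) T)
    · intro S hS
      simp only [Finset.mem_filter, Finset.mem_univ, true_and] at hS
      exact Finset.insert_erase hS
    · intro T hT
      simp only [Finset.mem_powerset] at hT
      apply Finset.erase_insert
      intro h0
      have := hT h0
      rw [Finset.mem_erase] at this
      exact this.1 rfl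
    · intro S hS
      simp only [Finset.mem_powerset]
      intro x hx
      rw [Finset.mem_erase] at hx ⊢
      exact ⟨hx.1, Finset.mem_univ x⟩
    · intro T hT
      simp only [Finset.mem_filter, Finset.mem_univ, true_and]
      exact Finset.mem_insert_self _ _
  rw [hcard, Finset.card_powerset, Finset.card_erase_of_mem (Finset.mem_univ _),
    Finset.card_univ, ZMod.card]

lemma odd_set_eq (hkodd : Odd k) :
    {H : (RGraph k).Subgraph | H.IsCycleSub ∧ Odd H.verts.ncard ∧ H.Adj (aa 0) (bb 0)}
      = (fun S : Finset (ZMod k) => DSub hk S) '' {S | (0 : ZMod k) ∈ S} := by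
  ext H
  simp only [Set.mem_setOf_eq, Set.mem_image]
  constructor
  · rintro ⟨hcyc, hodd, hadj⟩
    rcases classify hk hkodd hcyc hadj with ⟨S, h0, rfl⟩ | rfl
    · exact ⟨S, h0, rfl⟩
    · rw [CFour_ncard hk] at hodd
      exact absurd hodd (by decide)
  · rintro ⟨S, h0, rfl⟩
    refine ⟨DSub_isCycle hk, ?_, (DAdj_aa_bb hk).mpr ⟨rfl, h0⟩⟩
    rw [DSub_verts_ncard hk]
    exact hkodd.add_even ⟨S.card, by ring⟩

lemma even_set_eq (hkodd : Odd k) :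
    {H : (RGraph k).Subgraph | H.IsCycleSub ∧ Even H.verts.ncard ∧ H.Adj (aa 0) (bb 0)}
      = {CFour hk} := by
  ext H
  simp only [Set.mem_setOf_eq, Set.mem_singleton_iff]
  constructor
  · rintro ⟨hcyc, heven, hadj⟩
    rcases classify hk hkodd hcyc hadj with ⟨S, h0, rfl⟩ | rfl
    · exfalso
      rw [DSub_verts_ncard hk] at heven
      rcases hkodd with ⟨m, hm⟩
      rcases heven with ⟨c, hc⟩
      omega
    · rfl
  · rintro rfl
    refine ⟨CFour_isCycle hk, ?_, CFour_adj_ab hk⟩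
    rw [CFour_ncard hk]
    exact ⟨2, rfl⟩

end Final

end RAux


theorem cOddE_cEvenE_RGraph (k : ℕ) (hk : 3 ≤ k) (hkodd : Odd k) :
    cOddE (RGraph k) ((0 : ZMod k), (1 : Fin 3)) ((0 : ZMod k), (2 : Fin 3)) = 2 ^ (k - 1) ∧
      cEvenE (RGraph k) ((0 : ZMod k), (1 : Fin 3)) ((0 : ZMod k), (2 : Fin 3)) = 1 := by
  constructor
  · show {H : (RGraph k).Subgraph | H.IsCycleSub ∧ Odd H.verts.ncard
        ∧ H.Adj (RAux.aa 0) (RAux.bb 0)}.ncard = 2 ^ (k - 1)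
    rw [RAux.odd_set_eq hk hkodd,
      Set.ncard_image_of_injOn (fun S _ T _ h => RAux.DSub_inj hk h)]
    exact RAux.zero_mem_card hk hkodd
  · show {H : (RGraph k).Subgraph | H.IsCycleSub ∧ Even H.verts.ncard
        ∧ H.Adj (RAux.aa 0) (RAux.bb 0)}.ncard = 1
    rw [RAux.even_set_eq hk hkodd]
    exact Set.ncard_singleton _
end

section
/- For every integer d ≥ 1, letting f_1 denote the edge v_0 v_{2d} of L_d, one has c_o(L_d, f_1) = 1 and c_e(L_d, f_1) = d − 1. -/
open SimpleGraph Filter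

/-- The graph `L_d`: a path `v_0 v_1 … v_(2d)` together with the chords `v_i v_(2d-i)`
for `0 ≤ i ≤ d-1`. -/
def LGraph (d : ℕ) : SimpleGraph (Fin (2 * d + 1)) :=
  SimpleGraph.fromRel (fun p q =>
    (q.val = p.val + 1) ∨ (p.val + q.val = 2 * d ∧ p.val < d))

namespace CycleAux

def vtx (d i : ℕ) : Fin (2*d+1) := ⟨i % (2*d+1), Nat.mod_lt _ (by omega)⟩
lemma vtx_val (d i : ℕ) (h : i ≤ 2*d) : (vtx d i).val = i := Nat.mod_eq_of_lt (by omega)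
lemma vtx_self {d : ℕ} (v : Fin (2*d+1)) : vtx d v.val = v := by
  have := v.isLt
  exact Fin.ext (vtx_val d _ (by omega))
lemma lgraph_adj {d : ℕ} (x y : Fin (2*d+1)) :
    (LGraph d).Adj x y ↔ x.val ≠ y.val ∧
      ((y.val = x.val + 1 ∨ (x.val + y.val = 2*d ∧ x.val < d)) ∨
       (x.val = y.val + 1 ∨ (y.val + x.val = 2*d ∧ y.val < d))) := by
  simp only [LGraph, fromRel_adj, ne_eq, Fin.ext_iff]
def cycVerts (d k : ℕ) : Set (Fin (2*d+1)) := {v | v.val ≤ k ∨ 2*d - k ≤ v.val}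
def cycAdj (d k : ℕ) (x y : Fin (2*d+1)) : Prop :=
  x.val ≠ y.val ∧
  ((y.val = x.val + 1 ∧ (x.val < k ∨ 2*d - k ≤ x.val)) ∨
   (x.val = y.val + 1 ∧ (y.val < k ∨ 2*d - k ≤ y.val)) ∨
   (x.val + y.val = 2*d ∧ (x.val = 0 ∨ y.val = 0 ∨ (x.val = k ∧ k < d) ∨ (y.val = k ∧ k < d))))
def cycSub (d k : ℕ) : (LGraph d).Subgraph where
  verts := cycVerts d k
  Adj := cycAdj d k
  adj_sub := by intro x y h; rw [lgraph_adj]; unfold cycAdj at h; omega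
  edge_vert := by
    intro x y h; unfold cycAdj at h
    show x.val ≤ k ∨ 2*d - k ≤ x.val
    have := x.isLt; omega
  symm := by constructor; intro x y h; unfold cycAdj at h ⊢; omega
def nbrPair (d k j : ℕ) : ℕ × ℕ :=
  if j = 0 then (1, 2*d)
  else if j < k then (j-1, j+1)
  else if j = k ∧ k < d then (k-1, 2*d-k)
  else if j = k then (d-1, d+1)
  else if j = 2*d - k ∧ k < d then (k, 2*d-k+1)
  else if j = 2*d then (2*d-1, 0)
  else (j-1, j+1)
lemma nbrPair_spec {d k : ℕ} (hd : 1 ≤ d) (hk : 1 ≤ k) (hkd : k ≤ d) (j : ℕ)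
    (hj : j ≤ 2*d) (hv : j ≤ k ∨ 2*d - k ≤ j) :
    (nbrPair d k j).1 ≤ 2*d ∧ (nbrPair d k j).2 ≤ 2*d ∧ (nbrPair d k j).1 ≠ (nbrPair d k j).2 ∧
    ((nbrPair d k j).1 ≤ k ∨ 2*d - k ≤ (nbrPair d k j).1) ∧
    ((nbrPair d k j).2 ≤ k ∨ 2*d - k ≤ (nbrPair d k j).2) := by
  unfold nbrPair; split_ifs <;> omega
lemma cycAdj_iff {d k : ℕ} (hd : 1 ≤ d) (hk : 1 ≤ k) (hkd : k ≤ d) (v w : Fin (2*d+1))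
    (hv : v.val ≤ k ∨ 2*d - k ≤ v.val) :
    cycAdj d k v w ↔ (w.val = (nbrPair d k v.val).1 ∨ w.val = (nbrPair d k v.val).2) := by
  have hv2 := v.isLt; have hw2 := w.isLt
  unfold cycAdj nbrPair
  split_ifs <;> omega

-- new material

variable {d k : ℕ}

lemma mem_cycVerts_iff (v : Fin (2*d+1)) :
    v ∈ (cycSub d k).verts ↔ (v.val ≤ k ∨ 2*d - k ≤ v.val) := Iff.rfl

lemma cyc_nbr (hd : 1 ≤ d) (hk : 1 ≤ k) (hkd : k ≤ d) (v : Fin (2*d+1))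
    (hv : v ∈ (cycSub d k).verts) :
    (cycSub d k).neighborSet v =
      {vtx d (nbrPair d k v.val).1, vtx d (nbrPair d k v.val).2} := by
  have hv' : v.val ≤ k ∨ 2*d - k ≤ v.val := hv
  have hjv := v.isLt
  obtain ⟨h1, h2, h3, _, _⟩ := nbrPair_spec hd hk hkd v.val (by omega) hv'
  ext w
  have hw := w.isLt
  rw [Subgraph.mem_neighborSet]
  rw [show ((cycSub d k).Adj v w) = cycAdj d k v w from rfl]
  rw [cycAdj_iff hd hk hkd v w hv']
  simp only [Set.mem_insert_iff, Set.mem_singleton_iff, Fin.ext_iff,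
    vtx_val d _ h1, vtx_val d _ h2]

lemma cyc_deg (hd : 1 ≤ d) (hk : 1 ≤ k) (hkd : k ≤ d) (v : Fin (2*d+1))
    (hv : v ∈ (cycSub d k).verts) :
    ((cycSub d k).neighborSet v).ncard = 2 := by
  have hv' : v.val ≤ k ∨ 2*d - k ≤ v.val := hv
  have hjv := v.isLt
  obtain ⟨h1, h2, h3, _, _⟩ := nbrPair_spec hd hk hkd v.val (by omega) hv'
  rw [cyc_nbr hd hk hkd v hv]
  exact Set.ncard_pair (by
    intro h; apply h3
    have := congrArg Fin.val h
    rwa [vtx_val d _ h1, vtx_val d _ h2] at this)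

lemma cyc_adj_of (hd : 1 ≤ d) (hk : 1 ≤ k) (x y : ℕ) (hx : x ≤ 2*d) (hy : y ≤ 2*d)
    (h : cycAdj d k (vtx d x) (vtx d y)) : (cycSub d k).Adj (vtx d x) (vtx d y) := h

lemma reach_zero (hd : 1 ≤ d) (hk : 1 ≤ k) (hkd : k ≤ d)
    (h0 : vtx d 0 ∈ (cycSub d k).verts)
    (v : Fin (2*d+1)) (hv : v ∈ (cycSub d k).verts) :
    (cycSub d k).coe.Reachable ⟨v, hv⟩ ⟨vtx d 0, h0⟩ := by
  have key_low : ∀ j : ℕ, j ≤ k → ∀ (hj : vtx d j ∈ (cycSub d k).verts),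
      (cycSub d k).coe.Reachable ⟨vtx d j, hj⟩ ⟨vtx d 0, h0⟩ := by
    intro j
    induction j with
    | zero => intro _ hj; exact Reachable.refl _
    | succ n ih =>
      intro hn hj
      have hmem : vtx d n ∈ (cycSub d k).verts := by
        rw [mem_cycVerts_iff]; left; rw [vtx_val d n (by omega)]; omega
      have e1 : (vtx d n).val = n := vtx_val d n (by omega)
      have e2 : (vtx d (n+1)).val = n+1 := vtx_val d (n+1) (by omega)
      have hadj : (cycSub d k).Adj (vtx d n) (vtx d (n+1)) := by
        refine ⟨?_, Or.inl ⟨?_, Or.inl ?_⟩⟩ <;> simp only [e1, e2] <;> omega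
      have : (cycSub d k).coe.Adj ⟨vtx d n, hmem⟩ ⟨vtx d (n+1), hj⟩ := by
        rw [Subgraph.coe_adj]; exact hadj
      exact (this.reachable.symm).trans (ih (by omega) hmem)
  have key_high : ∀ j : ℕ, j ≤ k → ∀ (hj : vtx d (2*d-j) ∈ (cycSub d k).verts),
      (cycSub d k).coe.Reachable ⟨vtx d (2*d-j), hj⟩ ⟨vtx d 0, h0⟩ := by
    intro j
    induction j with
    | zero =>
      intro _ hj
      have e1 : (vtx d (2*d-0)).val = 2*d-0 := vtx_val d _ (by omega)
      have e2 : (vtx d 0).val = 0 := vtx_val d 0 (by omega)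
      have hadj : (cycSub d k).Adj (vtx d (2*d-0)) (vtx d 0) := by
        refine ⟨?_, Or.inr (Or.inr ⟨?_, Or.inr (Or.inl ?_)⟩)⟩ <;> simp only [e1, e2] <;> omega
      exact ((Subgraph.coe_adj _ _ _).mpr hadj).reachable
    | succ n ih =>
      intro hn hj
      have hmem : vtx d (2*d-n) ∈ (cycSub d k).verts := by
        rw [mem_cycVerts_iff]; right; rw [vtx_val d _ (by omega : 2*d-n ≤ 2*d)]; omega
      have e1 : (vtx d (2*d-(n+1))).val = 2*d-(n+1) := vtx_val d _ (by omega)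
      have e2 : (vtx d (2*d-n)).val = 2*d-n := vtx_val d _ (by omega)
      have hadj : (cycSub d k).Adj (vtx d (2*d-(n+1))) (vtx d (2*d-n)) := by
        refine ⟨?_, Or.inl ⟨?_, Or.inr ?_⟩⟩ <;> simp only [e1, e2] <;> omega
      have : (cycSub d k).coe.Adj ⟨vtx d (2*d-(n+1)), hj⟩ ⟨vtx d (2*d-n), hmem⟩ := by
        rw [Subgraph.coe_adj]; exact hadj
      exact this.reachable.trans (ih (by omega) hmem)
  have hv' : v.val ≤ k ∨ 2*d - k ≤ v.val := hv
  have hjv := v.isLt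
  rcases hv' with h | h
  · have := key_low v.val h (by rw [vtx_self]; exact hv)
    convert this using 2 <;> rw [vtx_self]
  · have heq : vtx d (2*d - (2*d - v.val)) = v := by
      rw [show 2*d - (2*d - v.val) = v.val by omega]; exact vtx_self v
    have := key_high (2*d - v.val) (by omega) (by rw [heq]; exact hv)
    convert this using 2 <;> rw [heq]

lemma cyc_isCycleSub (hd : 1 ≤ d) (hk : 1 ≤ k) (hkd : k ≤ d) :
    (cycSub d k).IsCycleSub := by
  have h0 : vtx d 0 ∈ (cycSub d k).verts := by
    rw [mem_cycVerts_iff]; left; rw [vtx_val d 0 (by omega)]; omega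
  refine ⟨⟨vtx d 0, h0⟩, ?_, fun v hv => cyc_deg hd hk hkd v hv⟩
  haveI : Nonempty ↑(cycSub d k).verts := ⟨⟨vtx d 0, h0⟩⟩
  exact ⟨fun u w =>
    (reach_zero hd hk hkd h0 u.1 u.2).trans (reach_zero hd hk hkd h0 w.1 w.2).symm⟩

lemma cyc_card_lt (hd : 1 ≤ d) (hk : 1 ≤ k) (hkd : k < d) :
    (cycSub d k).verts.ncard = 2*k+2 := by
  have : (cycSub d k).verts =
      ↑((Finset.range (k+1) ∪ Finset.Icc (2*d-k) (2*d)).image (vtx d)) := by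
    ext v
    have hjv := v.isLt
    simp only [mem_cycVerts_iff, Finset.coe_image, Set.mem_image, Finset.mem_coe,
      Finset.mem_union, Finset.mem_range, Finset.mem_Icc]
    constructor
    · intro h
      exact ⟨v.val, by omega, vtx_self v⟩
    · rintro ⟨i, hi, rfl⟩
      rw [vtx_val d i (by omega)]; omega
  rw [this, Set.ncard_coe_finset]
  rw [Finset.card_image_of_injOn]
  · rw [Finset.card_union_of_disjoint]
    · rw [Finset.card_range, Nat.card_Icc]; omega
    · rw [Finset.disjoint_left]
      intro a ha hb
      simp only [Finset.mem_range] at ha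
      simp only [Finset.mem_Icc] at hb
      omega
  · intro a ha b hb hab
    simp only [Finset.coe_union, Finset.coe_range, Finset.coe_Icc, Set.mem_union,
      Set.mem_Iio, Set.mem_Icc] at ha hb
    have := congrArg Fin.val hab
    rwa [vtx_val d a (by omega), vtx_val d b (by omega)] at this

lemma cyc_card_eq (hd : 1 ≤ d) :
    (cycSub d d).verts.ncard = 2*d+1 := by
  have : (cycSub d d).verts = Set.univ := by
    ext v; simp only [mem_cycVerts_iff, Set.mem_univ, iff_true]; omega
  rw [this, Set.ncard_univ, Nat.card_eq_fintype_card, Fintype.card_fin]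


-- H-side tools

lemma toolA {d : ℕ} {H : (LGraph d).Subgraph}
    (hdeg : ∀ v ∈ H.verts, (H.neighborSet v).ncard = 2)
    {v a b : Fin (2*d+1)} (ha : H.Adj v a) (hb : H.Adj v b) (hab : a ≠ b) :
    H.neighborSet v = {a, b} := by
  have hv : v ∈ H.verts := H.edge_vert ha
  have hsub : ({a, b} : Set (Fin (2*d+1))) ⊆ H.neighborSet v := by
    rintro w (rfl | rfl)
    · exact ha
    · exact hb
  have h2 : (H.neighborSet v).ncard ≤ ({a, b} : Set (Fin (2*d+1))).ncard := by
    rw [hdeg v hv, Set.ncard_pair hab]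
  exact (Set.eq_of_subset_of_ncard_le hsub h2 (Set.toFinite _)).symm

lemma toolB {d : ℕ} {H : (LGraph d).Subgraph}
    (hdeg : ∀ v ∈ H.verts, (H.neighborSet v).ncard = 2)
    {v a b : Fin (2*d+1)} (hv : v ∈ H.verts)
    (hsub : H.neighborSet v ⊆ {a, b}) (hab : a ≠ b) :
    H.neighborSet v = {a, b} := by
  have h2 : ({a, b} : Set (Fin (2*d+1))).ncard ≤ (H.neighborSet v).ncard := by
    rw [hdeg v hv, Set.ncard_pair hab]
  exact Set.eq_of_subset_of_ncard_le hsub h2 (Set.toFinite _)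

lemma nbr_bound {d : ℕ} {H : (LGraph d).Subgraph} {v w : Fin (2*d+1)} (h : H.Adj v w) :
    w.val = v.val + 1 ∨ v.val = w.val + 1 ∨ (v.val + w.val = 2*d ∧ (v.val < d ∨ w.val < d)) := by
  have := H.adj_sub h
  rw [lgraph_adj] at this
  omega

lemma master {d k : ℕ} (hd : 1 ≤ d) (hk : 1 ≤ k) (hkd : k ≤ d)
    {H : (LGraph d).Subgraph} (hH : H.IsCycleSub)
    (H1 : ∀ j < k, H.Adj (vtx d j) (vtx d (j+1)))
    (H2 : ∀ i, 2*d - k ≤ i → i < 2*d → H.Adj (vtx d i) (vtx d (i+1)))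
    (H3 : H.Adj (vtx d 0) (vtx d (2*d))) :
    (k < d → H.Adj (vtx d k) (vtx d (2*d-k))) → H = cycSub d k := by
  intro H4
  obtain ⟨hne, hconn, hdeg⟩ := hH
  -- the two designated neighbors, as H-adjacencies
  have hadjpair : ∀ v : Fin (2*d+1), (v.val ≤ k ∨ 2*d - k ≤ v.val) →
      H.Adj v (vtx d (nbrPair d k v.val).1) ∧ H.Adj v (vtx d (nbrPair d k v.val).2) := by
    intro v hv
    have hjv := v.isLt
    have hvs : vtx d v.val = v := vtx_self v
    unfold nbrPair
    split_ifs with c1 c2 c3 c4 c5 c6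
    · -- v.val = 0
      have hveq : vtx d 0 = v := by rw [← c1]; exact hvs
      constructor
      · have h := H1 0 (by omega)
        rw [hveq] at h
        exact h
      · rw [← hveq]
        exact H3
    · -- 0 < v.val < k
      constructor
      · have h := (H1 (v.val - 1) (by omega)).symm
        rw [show v.val - 1 + 1 = v.val from by omega, hvs] at h
        exact h
      · have h := H1 v.val c2
        rw [hvs] at h
        exact h
    · -- v.val = k < d
      have hveq : vtx d k = v := by rw [← c3.1]; exact hvs
      constructor
      · have h := (H1 (k - 1) (by omega)).symm
        rw [show k - 1 + 1 = k from by omega, hveq] at h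
        exact h
      · have h := H4 c3.2
        rw [hveq] at h
        exact h
    · -- v.val = k = d
      have hkd' : k = d := by
        rcases Nat.lt_or_ge k d with h | h
        · exact absurd ⟨c4, h⟩ c3
        · omega
      have hveq : vtx d k = v := by rw [← c4]; exact hvs
      have hveq2 : vtx d d = v := ((congrArg (vtx d) hkd').symm).trans hveq
      constructor
      · have h := (H1 (d - 1) (by omega)).symm
        rw [show d - 1 + 1 = d from by omega, hveq2] at h
        exact h
      · have h := H2 d (by omega) (by omega)
        rw [hveq2] at h
        exact h
    · -- v.val = 2d - k, k < d
      have hveq : vtx d (2*d - k) = v := by rw [← c5.1]; exact hvs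
      constructor
      · have h := (H4 c5.2).symm
        rw [hveq] at h
        exact h
      · have h := H2 (2*d - k) (by omega) (by omega)
        rw [hveq] at h
        exact h
    · -- v.val = 2d
      have hveq : vtx d (2*d) = v := Fin.ext (by rw [vtx_val d _ (by omega)]; omega)
      constructor
      · have h := (H2 (2*d - 1) (by omega) (by omega)).symm
        rw [show 2*d - 1 + 1 = 2*d from by omega, hveq] at h
        exact h
      · have h := H3.symm
        rw [hveq] at h
        exact h
    · -- 2d - k < v.val < 2d
      have hb1 : 2*d - k < v.val := by omega
      have hb2 : v.val < 2*d := by omega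
      constructor
      · have h := (H2 (v.val - 1) (by omega) (by omega)).symm
        rw [show v.val - 1 + 1 = v.val from by omega, hvs] at h
        exact h
      · have h := H2 v.val (by omega) (by omega)
        rw [hvs] at h
        exact h
  have hnbr : ∀ v : Fin (2*d+1), (v.val ≤ k ∨ 2*d - k ≤ v.val) →
      H.neighborSet v = {vtx d (nbrPair d k v.val).1, vtx d (nbrPair d k v.val).2} := by
    intro v hv
    have hjv := v.isLt
    obtain ⟨h1, h2, h3, _, _⟩ := nbrPair_spec hd hk hkd v.val (by omega) hv
    obtain ⟨ha, hb⟩ := hadjpair v hv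
    exact toolA hdeg ha hb (by
      intro h; apply h3
      have := congrArg Fin.val h
      rwa [vtx_val d _ h1, vtx_val d _ h2] at this)
  have hvertsub : cycVerts d k ⊆ H.verts := by
    intro v hv
    have hv' : v.val ≤ k ∨ 2*d - k ≤ v.val := hv
    exact H.edge_vert (hadjpair v hv').1
  have hclosed : ∀ v : Fin (2*d+1), (v.val ≤ k ∨ 2*d - k ≤ v.val) →
      ∀ w, H.Adj v w → (w.val ≤ k ∨ 2*d - k ≤ w.val) := by
    intro v hv w hw
    have hjv := v.isLt
    obtain ⟨h1, h2, _, h4, h5⟩ := nbrPair_spec hd hk hkd v.val (by omega) hv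
    have : w ∈ H.neighborSet v := hw
    rw [hnbr v hv] at this
    rcases this with rfl | rfl
    · rw [vtx_val d _ h1]; exact h4
    · rw [vtx_val d _ h2]; exact h5
  have hverts : H.verts = cycVerts d k := by
    apply Set.Subset.antisymm _ hvertsub
    intro v hv
    have h0mem : vtx d 0 ∈ H.verts := H.edge_vert H3
    have hreach : H.coe.Reachable ⟨vtx d 0, h0mem⟩ ⟨v, hv⟩ := hconn.preconnected _ _
    obtain ⟨p⟩ := hreach
    have key : ∀ (a b : H.verts) (_ : H.coe.Walk a b),
        ((a : Fin (2*d+1)).val ≤ k ∨ 2*d - k ≤ (a : Fin (2*d+1)).val) →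
        ((b : Fin (2*d+1)).val ≤ k ∨ 2*d - k ≤ (b : Fin (2*d+1)).val) := by
      intro a b p
      induction p with
      | nil => exact id
      | cons h q ih =>
        intro ha
        exact ih (hclosed _ ha _ ((Subgraph.coe_adj _ _ _).mp h))
    have h00 : (vtx d 0).val ≤ k ∨ 2*d - k ≤ (vtx d 0).val := by
      left; rw [vtx_val d 0 (by omega)]; omega
    exact key _ _ p h00
  apply Subgraph.ext hverts
  ext x y
  constructor
  · intro h
    have hx : x ∈ H.verts := H.edge_vert h
    have hx' : x.val ≤ k ∨ 2*d - k ≤ x.val := by rw [hverts] at hx; exact hx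
    have hy : y ∈ H.neighborSet x := h
    rw [hnbr x hx'] at hy
    have hjx := x.isLt
    obtain ⟨h1, h2, _, _, _⟩ := nbrPair_spec hd hk hkd x.val (by omega) hx'
    rw [show ((cycSub d k).Adj x y) = cycAdj d k x y from rfl,
      cycAdj_iff hd hk hkd x y hx']
    rcases hy with rfl | rfl
    · left; exact vtx_val d _ h1
    · right; exact vtx_val d _ h2
  · intro h
    have hx' : x.val ≤ k ∨ 2*d - k ≤ x.val := (cycSub d k).edge_vert h
    have hjx := x.isLt
    obtain ⟨h1, h2, _, _, _⟩ := nbrPair_spec hd hk hkd x.val (by omega) hx'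
    have := (cycAdj_iff hd hk hkd x y hx').mp h
    have hy : y ∈ H.neighborSet x := by
      rw [hnbr x hx']
      rcases this with hv | hv
      · left; exact Fin.ext (by rw [vtx_val d _ h1, hv])
      · right; exact Fin.ext (by rw [vtx_val d _ h2, hv])
    exact hy

lemma cycle_eq {d : ℕ} (hd : 1 ≤ d) {H : (LGraph d).Subgraph} (hH : H.IsCycleSub)
    (hadj : H.Adj (vtx d 0) (vtx d (2*d))) :
    ∃ k, 1 ≤ k ∧ k ≤ d ∧ H = cycSub d k := by
  obtain ⟨hne, hconn, hdeg⟩ := hH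
  have e0 : (vtx d 0).val = 0 := vtx_val d 0 (by omega)
  have eN : (vtx d (2*d)).val = 2*d := vtx_val d _ (by omega)
  -- neighbor set of v0
  have h0nbr : H.neighborSet (vtx d 0) = {vtx d 1, vtx d (2*d)} := by
    apply toolB hdeg (H.edge_vert hadj)
    · intro w hw
      have h := nbr_bound hw
      rw [e0] at h
      have hw2 := w.isLt
      simp only [Set.mem_insert_iff, Set.mem_singleton_iff, Fin.ext_iff,
        vtx_val d 1 (by omega), vtx_val d (2*d) (by omega)]
      omega
    · intro h
      have := congrArg Fin.val h
      rw [vtx_val d 1 (by omega), vtx_val d (2*d) (by omega)] at this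
      omega
  have h01 : H.Adj (vtx d 0) (vtx d 1) := by
    have : vtx d 1 ∈ H.neighborSet (vtx d 0) := by rw [h0nbr]; left; rfl
    exact this
  have hNnbr : H.neighborSet (vtx d (2*d)) = {vtx d (2*d-1), vtx d 0} := by
    apply toolB hdeg (H.edge_vert hadj.symm)
    · intro w hw
      have h := nbr_bound hw
      rw [eN] at h
      have hw2 := w.isLt
      simp only [Set.mem_insert_iff, Set.mem_singleton_iff, Fin.ext_iff,
        vtx_val d (2*d-1) (by omega), vtx_val d 0 (by omega)]
      omega
    · intro h
      have := congrArg Fin.val h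
      rw [vtx_val d (2*d-1) (by omega), vtx_val d 0 (by omega)] at this
      omega
  have hN1 : H.Adj (vtx d (2*d)) (vtx d (2*d-1)) := by
    have : vtx d (2*d-1) ∈ H.neighborSet (vtx d (2*d)) := by rw [hNnbr]; left; rfl
    exact this
  -- low side induction
  have low : ∀ i, i ≤ d → (∀ j, 1 ≤ j → j < i → ¬ H.Adj (vtx d j) (vtx d (2*d - j))) →
      ∀ j, j < i → H.Adj (vtx d j) (vtx d (j+1)) := by
    intro i hi hnc j
    induction j using Nat.strong_induction_on with
    | _ j IH =>
      intro hj
      rcases Nat.eq_zero_or_pos j with h0 | h1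
      · subst h0; exact h01
      · have prev : H.Adj (vtx d (j-1)) (vtx d j) := by
          have h := IH (j-1) (by omega) (by omega)
          rwa [show j - 1 + 1 = j from by omega] at h
        have hvj : vtx d j ∈ H.verts := H.edge_vert prev.symm
        have ej : (vtx d j).val = j := vtx_val d j (by omega)
        have hnsub : H.neighborSet (vtx d j) ⊆ {vtx d (j-1), vtx d (j+1)} := by
          intro w hw
          have h := nbr_bound hw
          rw [ej] at h
          have hw2 := w.isLt
          have hnochord : w.val ≠ 2*d - j := by
            intro hwv
            apply hnc j h1 hj
            have : w = vtx d (2*d - j) := Fin.ext (by rw [vtx_val d _ (by omega)]; omega)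
            rw [← this]
            exact hw
          simp only [Set.mem_insert_iff, Set.mem_singleton_iff, Fin.ext_iff,
            vtx_val d (j-1) (by omega), vtx_val d (j+1) (by omega)]
          omega
        have heq := toolB hdeg hvj hnsub (by
          intro h
          have := congrArg Fin.val h
          rw [vtx_val d (j-1) (by omega), vtx_val d (j+1) (by omega)] at this
          omega)
        have : vtx d (j+1) ∈ H.neighborSet (vtx d j) := by rw [heq]; right; rfl
        exact this
  -- high side induction
  have high : ∀ i, i ≤ d → (∀ j, 1 ≤ j → j < i → ¬ H.Adj (vtx d j) (vtx d (2*d - j))) →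
      ∀ j, j < i → H.Adj (vtx d (2*d - j)) (vtx d (2*d - j - 1)) := by
    intro i hi hnc j
    induction j using Nat.strong_induction_on with
    | _ j IH =>
      intro hj
      rcases Nat.eq_zero_or_pos j with h0 | h1
      · subst h0
        exact hN1
      · have prev : H.Adj (vtx d (2*d - j + 1)) (vtx d (2*d - j)) := by
          have h := IH (j-1) (by omega) (by omega)
          rwa [show 2*d - (j-1) = 2*d - j + 1 from by omega,
               show 2*d - j + 1 - 1 = 2*d - j from by omega] at h
        have hvj : vtx d (2*d - j) ∈ H.verts := H.edge_vert prev.symm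
        have ej : (vtx d (2*d - j)).val = 2*d - j := vtx_val d _ (by omega)
        have hnsub : H.neighborSet (vtx d (2*d - j)) ⊆
            {vtx d (2*d - j + 1), vtx d (2*d - j - 1)} := by
          intro w hw
          have h := nbr_bound hw
          rw [ej] at h
          have hw2 := w.isLt
          have hnochord : w.val ≠ j := by
            intro hwv
            apply hnc j h1 hj
            have hwj : w = vtx d j := Fin.ext (by rw [vtx_val d _ (by omega)]; omega)
            rw [← hwj]
            exact hw.symm
          simp only [Set.mem_insert_iff, Set.mem_singleton_iff, Fin.ext_iff,
            vtx_val d (2*d - j + 1) (by omega), vtx_val d (2*d - j - 1) (by omega)]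
          omega
        have heq := toolB hdeg hvj hnsub (by
          intro h
          have := congrArg Fin.val h
          rw [vtx_val d _ (by omega : 2*d - j + 1 ≤ 2*d),
              vtx_val d _ (by omega : 2*d - j - 1 ≤ 2*d)] at this
          omega)
        have : vtx d (2*d - j - 1) ∈ H.neighborSet (vtx d (2*d - j)) := by
          rw [heq]; right; rfl
        exact this
  by_cases hex : ∃ i, (1 ≤ i ∧ i < d) ∧ H.Adj (vtx d i) (vtx d (2*d - i))
  · -- a chord exists; take the least one
    set S : Set ℕ := {i | (1 ≤ i ∧ i < d) ∧ H.Adj (vtx d i) (vtx d (2*d - i))} with hS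
    have hSne : S.Nonempty := hex
    set k := sInf S with hk
    have hkS : k ∈ S := Nat.sInf_mem hSne
    obtain ⟨⟨hk1, hkd⟩, hkch⟩ := hkS
    have hmin : ∀ j, 1 ≤ j → j < k → ¬ H.Adj (vtx d j) (vtx d (2*d - j)) := by
      intro j hj1 hjk hch
      have : j ∈ S := ⟨⟨hj1, by omega⟩, hch⟩
      have := Nat.sInf_le this
      omega
    refine ⟨k, hk1, by omega, ?_⟩
    apply master hd hk1 (by omega) ⟨hne, hconn, hdeg⟩
    · exact fun j hj => low k (by omega) hmin j hj
    · intro i hi1 hi2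
      have h := high k (by omega) hmin (2*d - 1 - i) (by omega)
      rw [show 2*d - (2*d - 1 - i) = i + 1 from by omega,
           show i + 1 - 1 = i from by omega] at h
      exact h.symm
    · exact hadj
    · intro _
      exact hkch
  · -- no chord
    push_neg at hex
    have hnc : ∀ j, 1 ≤ j → j < d → ¬ H.Adj (vtx d j) (vtx d (2*d - j)) := by
      intro j hj1 hjd
      exact hex j ⟨hj1, hjd⟩
    refine ⟨d, hd, le_refl d, ?_⟩
    apply master hd hd (le_refl d) ⟨hne, hconn, hdeg⟩
    · exact fun j hj => low d (le_refl d) hnc j hj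
    · intro i hi1 hi2
      have h := high d (le_refl d) hnc (2*d - 1 - i) (by omega)
      rw [show 2*d - (2*d - 1 - i) = i + 1 from by omega,
           show i + 1 - 1 = i from by omega] at h
      exact h.symm
    · exact hadj
    · intro hdd
      omega

lemma cyc_adj_f1 {d k : ℕ} (hd : 1 ≤ d) (hk : 1 ≤ k) :
    (cycSub d k).Adj (vtx d 0) (vtx d (2*d)) := by
  have e1 : (vtx d 0).val = 0 := vtx_val d 0 (by omega)
  have e2 : (vtx d (2*d)).val = 2*d := vtx_val d _ (by omega)
  refine ⟨?_, Or.inr (Or.inr ⟨?_, Or.inl ?_⟩)⟩ <;> simp only [e1, e2] <;> omega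

end CycleAux

open CycleAux in
theorem main_counts (d : ℕ) (hd : 1 ≤ d) :
    ({H : (LGraph d).Subgraph | H.IsCycleSub ∧ Odd H.verts.ncard ∧
        H.Adj (0 : Fin (2 * d + 1)) (⟨2 * d, Nat.lt_succ_self _⟩ : Fin (2 * d + 1))}).ncard = 1 ∧
      ({H : (LGraph d).Subgraph | H.IsCycleSub ∧ Even H.verts.ncard ∧
        H.Adj (0 : Fin (2 * d + 1)) (⟨2 * d, Nat.lt_succ_self _⟩ : Fin (2 * d + 1))}).ncard = d - 1 := by
  have e0 : (0 : Fin (2 * d + 1)) = vtx d 0 :=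
    Fin.ext (by rw [vtx_val d 0 (by omega)]; simp)
  have eN : (⟨2 * d, Nat.lt_succ_self _⟩ : Fin (2 * d + 1)) = vtx d (2*d) :=
    Fin.ext ((vtx_val d (2*d) (by omega)).symm)
  constructor
  · have hset : {H : (LGraph d).Subgraph | H.IsCycleSub ∧ Odd H.verts.ncard ∧
        H.Adj (0 : Fin (2 * d + 1)) (⟨2 * d, Nat.lt_succ_self _⟩ : Fin (2 * d + 1))} =
        {cycSub d d} := by
      ext H
      simp only [Set.mem_setOf_eq, Set.mem_singleton_iff]
      constructor
      · rintro ⟨h1, h2, h3⟩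
        rw [e0, eN] at h3
        obtain ⟨k, hk1, hkd, heq⟩ := cycle_eq hd h1 h3
        rcases eq_or_lt_of_le hkd with rfl | hlt
        · exact heq
        · exfalso
          rw [heq, cyc_card_lt hd hk1 hlt] at h2
          obtain ⟨m, hm⟩ := h2
          omega
      · rintro rfl
        refine ⟨cyc_isCycleSub hd hd le_rfl, ?_, ?_⟩
        · rw [cyc_card_eq hd]
          exact ⟨d, by omega⟩
        · rw [e0, eN]
          exact cyc_adj_f1 hd hd
    rw [hset, Set.ncard_singleton]
  · have hset : {H : (LGraph d).Subgraph | H.IsCycleSub ∧ Even H.verts.ncard ∧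
        H.Adj (0 : Fin (2 * d + 1)) (⟨2 * d, Nat.lt_succ_self _⟩ : Fin (2 * d + 1))} =
        (fun k => cycSub d k) '' (Set.Icc 1 (d-1)) := by
      ext H
      simp only [Set.mem_setOf_eq, Set.mem_image, Set.mem_Icc]
      constructor
      · rintro ⟨h1, h2, h3⟩
        rw [e0, eN] at h3
        obtain ⟨k, hk1, hkd, heq⟩ := cycle_eq hd h1 h3
        rcases eq_or_lt_of_le hkd with rfl | hlt
        · exfalso
          rw [heq, cyc_card_eq hd] at h2
          obtain ⟨m, hm⟩ := h2
          omega
        · exact ⟨k, ⟨hk1, by omega⟩, heq.symm⟩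
      · rintro ⟨k, ⟨hk1, hk2⟩, rfl⟩
        have hlt : k < d := by omega
        refine ⟨cyc_isCycleSub hd hk1 (by omega), ?_, ?_⟩
        · rw [cyc_card_lt hd hk1 hlt]
          exact ⟨k+1, by omega⟩
        · rw [e0, eN]
          exact cyc_adj_f1 hd hk1
    have hinj : Set.InjOn (fun k => cycSub d k) (Set.Icc 1 (d-1)) := by
      intro a ha b hb hab
      simp only [Set.mem_Icc] at ha hb
      by_contra hne
      have hverts := congrArg SimpleGraph.Subgraph.verts hab
      simp only at hverts
      rcases Nat.lt_or_ge a b with h | h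
      · have hmem : vtx d b ∈ (cycSub d b).verts := by
          rw [mem_cycVerts_iff]; left; rw [vtx_val d b (by omega)]
        rw [← hverts, mem_cycVerts_iff, vtx_val d b (by omega)] at hmem
        omega
      · have h' : b < a := by omega
        have hmem : vtx d a ∈ (cycSub d a).verts := by
          rw [mem_cycVerts_iff]; left; rw [vtx_val d a (by omega)]
        rw [hverts, mem_cycVerts_iff, vtx_val d a (by omega)] at hmem
        omega
    rw [hset, Set.ncard_image_of_injOn hinj,
      show (Set.Icc 1 (d-1) : Set ℕ) = ↑(Finset.Icc 1 (d-1)) from (Finset.coe_Icc 1 (d-1)).symm,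
      Set.ncard_coe_finset, Nat.card_Icc]
    omega

theorem cOddE_cEvenE_LGraph_f1 (d : ℕ) (hd : 1 ≤ d) :
    cOddE (LGraph d) (0 : Fin (2 * d + 1)) (⟨2 * d, by omega⟩ : Fin (2 * d + 1)) = 1 ∧
      cEvenE (LGraph d) (0 : Fin (2 * d + 1)) (⟨2 * d, by omega⟩ : Fin (2 * d + 1)) = d - 1 := by
  unfold cOddE cEvenE
  exact main_counts d hd
end

section
/- For every integer d ≥ 1, letting f_2 denote the edge v_{d−1} v_d of L_d, one has c_o(L_d, f_2) = d and c_e(L_d, f_2) = 0. -/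
open SimpleGraph Filter

lemma lgraph_adj {d : ℕ} {u w : Fin (2*d+1)} :
    (LGraph d).Adj u w ↔
      (u.val + 1 = w.val ∨ w.val + 1 = u.val ∨ (u.val + w.val = 2*d ∧ u.val ≠ w.val)) := by
  simp only [LGraph, fromRel_adj, ne_eq, Fin.ext_iff]
  omega

/-- The cycle through the chord `v_i v_{2d-i}` and the path from `v_i` to `v_{2d-i}`. -/
def cyc (d i : ℕ) : (LGraph d).Subgraph where
  verts := {v | i ≤ v.val ∧ v.val ≤ 2*d - i}
  Adj u w := (i ≤ u.val ∧ w.val ≤ 2*d - i ∧ u.val + 1 = w.val)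
    ∨ (i ≤ w.val ∧ u.val ≤ 2*d - i ∧ w.val + 1 = u.val)
    ∨ (i < d ∧ u.val = i ∧ w.val = 2*d - i)
    ∨ (i < d ∧ w.val = i ∧ u.val = 2*d - i)
  adj_sub := by
    intro u w h
    rw [lgraph_adj]
    have := u.isLt; have := w.isLt
    omega
  edge_vert := by
    intro u w h
    simp only [Set.mem_setOf_eq]
    omega
  symm := by
    constructor
    intro u w h
    omega

lemma cyc_adj {d i : ℕ} {u w : Fin (2*d+1)} :
    (cyc d i).Adj u w ↔ ((i ≤ u.val ∧ w.val ≤ 2*d - i ∧ u.val + 1 = w.val)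
    ∨ (i ≤ w.val ∧ u.val ≤ 2*d - i ∧ w.val + 1 = u.val)
    ∨ (i < d ∧ u.val = i ∧ w.val = 2*d - i)
    ∨ (i < d ∧ w.val = i ∧ u.val = 2*d - i)) := Iff.rfl

lemma cyc_verts {d i : ℕ} {v : Fin (2*d+1)} :
    v ∈ (cyc d i).verts ↔ (i ≤ v.val ∧ v.val ≤ 2*d - i) := Iff.rfl

lemma cyc_card {d i : ℕ} (hi : i < d) : (cyc d i).verts.ncard = 2*(d-i)+1 := by
  have himg : Fin.val '' (cyc d i).verts = Set.Icc i (2*d-i) := by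
    ext n
    simp only [Set.mem_image, Set.mem_Icc, cyc_verts]
    constructor
    · rintro ⟨v, ⟨h1, h2⟩, rfl⟩; exact ⟨h1, h2⟩
    · rintro ⟨h1, h2⟩; exact ⟨⟨n, by omega⟩, ⟨h1, h2⟩, rfl⟩
  have := Set.ncard_image_of_injective (cyc d i).verts Fin.val_injective
  rw [himg] at this
  rw [← this, ← Finset.coe_Icc, Set.ncard_coe_finset, Nat.card_Icc]
  omega

lemma cyc_deg {d i : ℕ} (hi : i < d) :
    ∀ v ∈ (cyc d i).verts, ((cyc d i).neighborSet v).ncard = 2 := by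
  intro v hv
  obtain ⟨hv1, hv2⟩ := cyc_verts.mp hv
  have hvlt := v.isLt
  rcases eq_or_ne v.val i with h | h
  · have hs : (cyc d i).neighborSet v = {(⟨i+1, by omega⟩ : Fin (2*d+1)), ⟨2*d-i, by omega⟩} := by
      ext w
      simp only [Subgraph.mem_neighborSet, cyc_adj, Set.mem_insert_iff,
        Set.mem_singleton_iff, Fin.ext_iff]
      omega
    rw [hs, Set.ncard_pair (by simp only [ne_eq, Fin.ext_iff]; omega)]
  rcases eq_or_ne v.val (2*d-i) with h2 | h2
  · have hs : (cyc d i).neighborSet v = {(⟨2*d-i-1, by omega⟩ : Fin (2*d+1)), ⟨i, by omega⟩} := by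
      ext w
      simp only [Subgraph.mem_neighborSet, cyc_adj, Set.mem_insert_iff,
        Set.mem_singleton_iff, Fin.ext_iff]
      omega
    rw [hs, Set.ncard_pair (by simp only [ne_eq, Fin.ext_iff]; omega)]
  · have hs : (cyc d i).neighborSet v = {(⟨v.val-1, by omega⟩ : Fin (2*d+1)), ⟨v.val+1, by omega⟩} := by
      ext w
      simp only [Subgraph.mem_neighborSet, cyc_adj, Set.mem_insert_iff,
        Set.mem_singleton_iff, Fin.ext_iff]
      omega
    rw [hs, Set.ncard_pair (by simp only [ne_eq, Fin.ext_iff]; omega)]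

lemma cyc_conn {d i : ℕ} (hi : i < d) : (cyc d i).coe.Connected := by
  have hbase : (⟨i, by omega⟩ : Fin (2*d+1)) ∈ (cyc d i).verts :=
    cyc_verts.mpr ⟨le_refl i, (by omega : i ≤ 2*d - i)⟩
  have key : ∀ k (hk : i ≤ k) (h2 : k ≤ 2*d - i),
      (cyc d i).coe.Reachable ⟨⟨i, by omega⟩, hbase⟩
        ⟨⟨k, by omega⟩, cyc_verts.mpr ⟨hk, h2⟩⟩ := by
    intro k hk
    induction k, hk using Nat.le_induction with
    | base => intro h2; exact Reachable.refl _
    | succ k hk ih =>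
      intro h2
      have hadj : (cyc d i).coe.Adj ⟨⟨k, by omega⟩, cyc_verts.mpr ⟨hk, (by omega : k ≤ 2*d - i)⟩⟩
          ⟨⟨k+1, by omega⟩, cyc_verts.mpr ⟨(by omega : i ≤ k+1), h2⟩⟩ := by
        show (cyc d i).Adj _ _
        rw [cyc_adj]
        left
        exact ⟨hk, h2, rfl⟩
      exact (ih (by omega)).trans hadj.reachable
  rw [connected_iff]
  refine ⟨?_, ⟨⟨⟨i, by omega⟩, hbase⟩⟩⟩
  intro u w
  exact ((key u.1.1 (cyc_verts.mp u.2).1 (cyc_verts.mp u.2).2).symm.trans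
    (key w.1.1 (cyc_verts.mp w.2).1 (cyc_verts.mp w.2).2))

lemma cyc_isCycleSub {d i : ℕ} (hi : i < d) : (cyc d i).IsCycleSub :=
  ⟨⟨⟨i, by omega⟩, cyc_verts.mpr ⟨le_refl i, (by omega : i ≤ 2*d - i)⟩⟩,
    cyc_conn hi, cyc_deg hi⟩

lemma nb_pair {V : Type*} [Finite V] {G : SimpleGraph V} {H : G.Subgraph}
    (hH : H.IsCycleSub) {v a b : V} (ha : H.Adj v a) (hb : H.Adj v b) (hab : a ≠ b) :
    H.neighborSet v = {a, b} := by
  have h2 := hH.2.2 v (H.edge_vert ha)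
  refine (Set.eq_of_subset_of_ncard_le ?_ ?_ (Set.toFinite _)).symm
  · rintro x (rfl | rfl)
    · exact ha
    · exact hb
  · rw [h2, Set.ncard_pair hab]

lemma other_nb {V : Type*} [Finite V] {G : SimpleGraph V} {H : G.Subgraph}
    (hH : H.IsCycleSub) {v a : V} (ha : H.Adj v a) :
    ∃ b, H.Adj v b ∧ b ≠ a ∧ G.Adj v b := by
  have h2 := hH.2.2 v (H.edge_vert ha)
  obtain ⟨x, y, hxy, hset⟩ := Set.ncard_eq_two.mp h2
  have hav : a ∈ H.neighborSet v := ha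
  rw [hset] at hav
  rcases hav with rfl | rfl
  · have hy : H.Adj v y := by
      have : y ∈ H.neighborSet v := by rw [hset]; right; rfl
      exact this
    exact ⟨y, hy, fun h => hxy h.symm, hy.adj_sub⟩
  · have hx : H.Adj v x := by
      have : x ∈ H.neighborSet v := by rw [hset]; left; rfl
      exact this
    exact ⟨x, hx, hxy, hx.adj_sub⟩

lemma adj_congr {d : ℕ} {H : (LGraph d).Subgraph} {u w u' w' : Fin (2*d+1)}
    (h : H.Adj u w) (hu : u.val = u'.val) (hw : w.val = w'.val) : H.Adj u' w' := by
  rwa [show u = u' from Fin.ext hu, show w = w' from Fin.ext hw] at h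

lemma eq_cyc {d i : ℕ} {H : (LGraph d).Subgraph} (hH : H.IsCycleSub) (hi : i < d)
    (hpath : ∀ u w : Fin (2*d+1), i ≤ u.val → w.val ≤ 2*d-i → u.val+1 = w.val → H.Adj u w)
    (hchord0 : ∀ u w : Fin (2*d+1), u.val = i → w.val = 2*d-i → H.Adj u w) :
    H = cyc d i := by
  have hpath' : ∀ j (hj1 : i ≤ j) (hj2 : j + 1 ≤ 2*d - i),
      H.Adj ⟨j, by omega⟩ ⟨j+1, by omega⟩ :=
    fun j hj1 hj2 => hpath ⟨j, by omega⟩ ⟨j+1, by omega⟩ hj1 hj2 rfl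
  have hchord : H.Adj (⟨i, by omega⟩ : Fin (2*d+1)) ⟨2*d-i, by omega⟩ :=
    hchord0 _ _ rfl rfl
  clear hpath hchord0
  have key : ∀ v : Fin (2*d+1), i ≤ v.val → v.val ≤ 2*d-i →
      ∃ a b : Fin (2*d+1), H.neighborSet v = {a, b} ∧
        (i ≤ a.val ∧ a.val ≤ 2*d-i) ∧ (i ≤ b.val ∧ b.val ≤ 2*d-i) ∧
        (cyc d i).Adj v a ∧ (cyc d i).Adj v b := by
    intro v h1 h2
    have hvlt := v.isLt
    rcases eq_or_ne v.val i with h | h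
    · refine ⟨⟨i+1, by omega⟩, ⟨2*d-i, by omega⟩, ?_, ?_, ?_, ?_, ?_⟩
      · exact nb_pair hH (adj_congr (hpath' i le_rfl (by omega)) h.symm rfl)
          (adj_congr hchord h.symm rfl)
          (by simp only [ne_eq, Fin.mk.injEq]; omega)
      · exact ⟨(by omega : i ≤ i+1), (by omega : i+1 ≤ 2*d-i)⟩
      · exact ⟨(by omega : i ≤ 2*d-i), le_refl (2*d-i)⟩
      · exact cyc_adj.mpr (Or.inl ⟨h1, (show i+1 ≤ 2*d-i by omega), (show v.val+1 = i+1 by omega)⟩)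
      · exact cyc_adj.mpr (Or.inr (Or.inr (Or.inl ⟨hi, h, rfl⟩)))
    rcases eq_or_ne v.val (2*d-i) with h2' | h2'
    · refine ⟨⟨2*d-i-1, by omega⟩, ⟨i, by omega⟩, ?_, ?_, ?_, ?_, ?_⟩
      · exact nb_pair hH
          (adj_congr (hpath' (2*d-i-1) (by omega) (by omega)).symm
            (show 2*d-i-1+1 = v.val by omega) rfl)
          (adj_congr hchord.symm (show 2*d-i = v.val by omega) rfl)
          (by simp only [ne_eq, Fin.mk.injEq]; omega)
      · exact ⟨(by omega : i ≤ 2*d-i-1), (by omega : 2*d-i-1 ≤ 2*d-i)⟩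
      · exact ⟨le_refl i, (by omega : i ≤ 2*d-i)⟩
      · exact cyc_adj.mpr (Or.inr (Or.inl ⟨(by omega : i ≤ 2*d-i-1), h2,
          (show 2*d-i-1+1 = v.val by omega)⟩))
      · exact cyc_adj.mpr (Or.inr (Or.inr (Or.inr ⟨hi, rfl, h2'⟩)))
    · refine ⟨⟨v.val-1, by omega⟩, ⟨v.val+1, by omega⟩, ?_, ?_, ?_, ?_, ?_⟩
      · exact nb_pair hH
          (adj_congr (hpath' (v.val-1) (by omega) (by omega)).symm
            (show v.val-1+1 = v.val by omega) rfl)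
          (adj_congr (hpath' v.val h1 (by omega)) rfl rfl)
          (by simp only [ne_eq, Fin.mk.injEq]; omega)
      · exact ⟨(by omega : i ≤ v.val-1), (by omega : v.val-1 ≤ 2*d-i)⟩
      · exact ⟨(by omega : i ≤ v.val+1), (by omega : v.val+1 ≤ 2*d-i)⟩
      · exact cyc_adj.mpr (Or.inr (Or.inl ⟨(by omega : i ≤ v.val-1), h2,
          (show v.val-1+1 = v.val by omega)⟩))
      · exact cyc_adj.mpr (Or.inl ⟨h1, (by omega : v.val+1 ≤ 2*d-i), rfl⟩)
  have walkclaim : ∀ (x y : ↥H.verts) (p : H.coe.Walk x y),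
      (i ≤ (x : Fin (2*d+1)).val ∧ (x : Fin (2*d+1)).val ≤ 2*d-i) →
      (i ≤ (y : Fin (2*d+1)).val ∧ (y : Fin (2*d+1)).val ≤ 2*d-i) := by
    intro x y p
    induction p with
    | nil => exact id
    | @cons x z y hadj p ih =>
      intro hx
      apply ih
      obtain ⟨a, b, hnb, hba, hbb, _, _⟩ := key _ hx.1 hx.2
      have hz : (z : Fin (2*d+1)) ∈ H.neighborSet x := hadj
      rw [hnb] at hz
      simp only [Set.mem_insert_iff, Set.mem_singleton_iff] at hz
      rcases hz with hz | hz <;> rw [hz]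
      · exact hba
      · exact hbb
  have hbase : (⟨i, by omega⟩ : Fin (2*d+1)) ∈ H.verts := H.edge_vert hchord
  have hin : ∀ v ∈ H.verts, i ≤ v.val ∧ v.val ≤ 2*d - i := by
    intro v hv
    obtain ⟨p⟩ := hH.2.1.preconnected ⟨⟨i, by omega⟩, hbase⟩ ⟨v, hv⟩
    exact walkclaim _ _ p ⟨le_refl i, (by omega : i ≤ 2*d-i)⟩
  refine Subgraph.ext ?_ ?_
  · ext v
    rw [cyc_verts]
    constructor
    · exact hin v
    · rintro ⟨hv1, hv2⟩
      rcases eq_or_ne v.val (2*d-i) with h | h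
      · exact H.edge_vert (adj_congr hchord.symm h.symm rfl)
      · exact H.edge_vert (adj_congr (hpath' v.val hv1 (by omega)) rfl rfl)
  · funext u w
    apply propext
    constructor
    · intro h
      have hu := hin u (H.edge_vert h)
      obtain ⟨a, b, hnb, _, _, hca, hcb⟩ := key u hu.1 hu.2
      have hw : w ∈ H.neighborSet u := h
      rw [hnb] at hw
      simp only [Set.mem_insert_iff, Set.mem_singleton_iff] at hw
      rcases hw with rfl | rfl
      · exact hca
      · exact hcb
    · intro h
      rw [cyc_adj] at h
      have hult := u.isLt
      rcases h with ⟨h1,h2,h3⟩ | ⟨h1,h2,h3⟩ | ⟨_,h2,h3⟩ | ⟨_,h2,h3⟩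
      · exact adj_congr (hpath' u.val h1 (by omega)) rfl h3
      · exact (adj_congr (hpath' w.val h1 (by omega)) rfl h3).symm
      · exact adj_congr hchord h2.symm h3.symm
      · exact (adj_congr hchord h2.symm h3.symm).symm

lemma classify {d : ℕ} (hd : 1 ≤ d) {H : (LGraph d).Subgraph} (hH : H.IsCycleSub)
    {x y : Fin (2*d+1)} (hx : x.val = d-1) (hy : y.val = d) (hadj : H.Adj x y) :
    ∃ i, i < d ∧ H = cyc d i := by
  have main : ∀ k, k ≤ d-1 →
      (∀ u w : Fin (2*d+1), k ≤ u.val → w.val ≤ 2*d-k → u.val+1 = w.val → H.Adj u w) →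
      ∃ i, i < d ∧ H = cyc d i := by
    intro k
    induction k with
    | zero =>
      intro _ hp
      have e0 : H.Adj (⟨0, by omega⟩ : Fin (2*d+1)) ⟨1, by omega⟩ :=
        hp _ _ (by omega) (show (1:ℕ) ≤ 2*d-0 by omega) rfl
      obtain ⟨b, hb, hbne, hbG⟩ := other_nb hH e0
      rw [lgraph_adj] at hbG
      have hbG' : (0 + 1 = b.val ∨ b.val + 1 = 0 ∨ (0 + b.val = 2*d ∧ (0:ℕ) ≠ b.val)) := hbG
      have hbne' : b.val ≠ 1 := fun hv => hbne (Fin.ext hv)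
      have hbval : b.val = 2*d := by omega
      refine ⟨0, hd, eq_cyc hH hd (fun u w h1 h2 h3 => hp u w h1 h2 h3) ?_⟩
      intro u w hu hw
      exact adj_congr hb (show (0:ℕ) = u.val by omega) (show b.val = w.val by omega)
    | succ k ih =>
      intro hk1 hp
      have e1 : H.Adj (⟨k+1, by omega⟩ : Fin (2*d+1)) ⟨k+2, by omega⟩ :=
        hp _ _ le_rfl (show k+2 ≤ 2*d-(k+1) by omega) rfl
      obtain ⟨b, hb, hbne, hbG⟩ := other_nb hH e1
      rw [lgraph_adj] at hbG
      have hbG' : ((k+1) + 1 = b.val ∨ b.val + 1 = (k+1) ∨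
          ((k+1) + b.val = 2*d ∧ (k+1:ℕ) ≠ b.val)) := hbG
      have hbne2 : b.val ≠ k+2 := fun hv => hbne (Fin.ext hv)
      rcases (show b.val = k ∨ b.val = 2*d-(k+1) by omega) with hbv | hbv
      · -- descend
        have e2 : H.Adj (⟨2*d-k-1, by omega⟩ : Fin (2*d+1)) ⟨2*d-k-2, by omega⟩ :=
          (hp _ _ (show k+1 ≤ 2*d-k-2 by omega) (show 2*d-k-1 ≤ 2*d-(k+1) by omega)
            (show (2*d-k-2)+1 = 2*d-k-1 by omega)).symm
        obtain ⟨c, hc, hcne, hcG⟩ := other_nb hH e2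
        rw [lgraph_adj] at hcG
        have hcG' : ((2*d-k-1) + 1 = c.val ∨ c.val + 1 = (2*d-k-1) ∨
            ((2*d-k-1) + c.val = 2*d ∧ (2*d-k-1:ℕ) ≠ c.val)) := hcG
        have hcne2 : c.val ≠ 2*d-k-2 := fun hv => hcne (Fin.ext hv)
        have hnbk1 := nb_pair hH hb e1
          (show b ≠ ⟨k+2, by omega⟩ from fun he => by
            have : b.val = k+2 := congrArg Fin.val he; omega)
        have hck1 : c.val ≠ k+1 := by
          intro hv
          have hcmem : (⟨2*d-k-1, by omega⟩ : Fin (2*d+1)) ∈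
              H.neighborSet ⟨k+1, by omega⟩ :=
            (adj_congr hc.symm (show c.val = k+1 from hv) rfl)
          rw [hnbk1] at hcmem
          rcases hcmem with he | he
          · have : 2*d-k-1 = b.val := congrArg Fin.val he
            omega
          · have : 2*d-k-1 = k+2 := congrArg Fin.val (Set.mem_singleton_iff.mp he)
            omega
        have hcv : c.val = 2*d-k := by omega
        apply ih (by omega)
        intro u w h1 h2 h3
        rcases eq_or_ne u.val k with huk | huk
        · exact adj_congr hb.symm (show b.val = u.val by omega) (show k+1 = w.val by omega)
        rcases eq_or_ne u.val (2*d-k-1) with hut | hut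
        · exact adj_congr hc (show 2*d-k-1 = u.val by omega) (show c.val = w.val by omega)
        · exact hp u w (by omega) (by omega) h3
      · -- chord found at level k+1
        exact ⟨k+1, by omega, eq_cyc hH (by omega) hp
          (fun u w hu hw => adj_congr hb (show k+1 = u.val by omega) (show b.val = w.val by omega))⟩
  -- establish the initial path property at level d-1
  obtain ⟨b, hb, hbne, hbG⟩ := other_nb hH hadj.symm
  rw [lgraph_adj] at hbG
  have hbne' : b.val ≠ d-1 := fun hv => hbne (Fin.ext (by omega))
  have hbval : b.val = d+1 := by omega
  apply main (d-1) le_rfl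
  intro u w h1 h2 h3
  rcases eq_or_ne u.val (d-1) with hu | hu
  · exact adj_congr hadj (show x.val = u.val by omega) (show y.val = w.val by omega)
  · exact adj_congr hb (show y.val = u.val by omega) (show b.val = w.val by omega)

lemma cyc_adj_f2 {d i : ℕ} (hd : 1 ≤ d) (hi : i < d) {x y : Fin (2*d+1)}
    (hx : x.val = d-1) (hy : y.val = d) : (cyc d i).Adj x y :=
  cyc_adj.mpr (Or.inl ⟨by omega, by omega, by omega⟩)

lemma cyc_injOn {d : ℕ} : Set.InjOn (cyc d) (Set.Iio d) := by
  intro i hi j hj hij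
  simp only [Set.mem_Iio] at hi hj
  have h1 : (⟨i, by omega⟩ : Fin (2*d+1)) ∈ (cyc d i).verts :=
    cyc_verts.mpr ⟨le_refl i, (by omega : i ≤ 2*d-i)⟩
  have h2 : (⟨j, by omega⟩ : Fin (2*d+1)) ∈ (cyc d j).verts :=
    cyc_verts.mpr ⟨le_refl j, (by omega : j ≤ 2*d-j)⟩
  rw [hij] at h1
  rw [← hij] at h2
  have hji : j ≤ i := (cyc_verts.mp h1).1
  have hij' : i ≤ j := (cyc_verts.mp h2).1
  omega

lemma oddset_eq {d : ℕ} (hd : 1 ≤ d) {x y : Fin (2*d+1)}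
    (hx : x.val = d-1) (hy : y.val = d) :
    {H : (LGraph d).Subgraph | H.IsCycleSub ∧ Odd H.verts.ncard ∧ H.Adj x y}
      = cyc d '' Set.Iio d := by
  ext H
  simp only [Set.mem_setOf_eq, Set.mem_image, Set.mem_Iio]
  constructor
  · rintro ⟨h1, h2, h3⟩
    obtain ⟨i, hi, rfl⟩ := classify hd h1 hx hy h3
    exact ⟨i, hi, rfl⟩
  · rintro ⟨i, hi, rfl⟩
    refine ⟨cyc_isCycleSub hi, ?_, cyc_adj_f2 hd hi hx hy⟩
    rw [cyc_card hi]
    exact ⟨d-i, by omega⟩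

lemma evenset_eq {d : ℕ} (hd : 1 ≤ d) {x y : Fin (2*d+1)}
    (hx : x.val = d-1) (hy : y.val = d) :
    {H : (LGraph d).Subgraph | H.IsCycleSub ∧ Even H.verts.ncard ∧ H.Adj x y} = ∅ := by
  ext H
  simp only [Set.mem_setOf_eq, Set.mem_empty_iff_false, iff_false, not_and]
  intro h1 h2 h3
  obtain ⟨i, hi, rfl⟩ := classify hd h1 hx hy h3
  rw [cyc_card hi] at h2
  obtain ⟨r, hr⟩ := h2
  omega

theorem cOddE_cEvenE_LGraph_f2 (d : ℕ) (hd : 1 ≤ d) :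
    cOddE (LGraph d) (⟨d - 1, by omega⟩ : Fin (2 * d + 1)) (⟨d, by omega⟩ : Fin (2 * d + 1)) = d ∧
      cEvenE (LGraph d) (⟨d - 1, by omega⟩ : Fin (2 * d + 1)) (⟨d, by omega⟩ : Fin (2 * d + 1))
        = 0 := by
  constructor
  · rw [cOddE, oddset_eq hd rfl rfl, Set.ncard_image_of_injOn cyc_injOn,
      ← Finset.coe_Iio, Set.ncard_coe_finset, Nat.card_Iio]
  · rw [cEvenE, evenset_eq hd rfl rfl, Set.ncard_empty]
end
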